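/- arXiv:1510.01282 — 8 statements merged into one kernel-verified Lean document; each statement's English description precedes it below -/
import Mathlib

section
/- Let X, G ∈ B^+(H) and let M ∈ B^+(H) be a nonnegative contraction (0 ≤ M ≤ I) with ran M contained in the closure of ran(X+G) such that X = (X+G)^{1/2} M (X+G)^{1/2} and G = (X+G)^{1/2} (I − M) (X+G)^{1/2}. Then the parallel sum satisfies X:G = (X+G)^{1/2} (M − M²) (X+G)^{1/2}. -/
open Filter Topology

variable {H : Type*} [NormedAddCommGroup H] [InnerProductSpace ℂ H] [CompleteSpace H]

/-- `P` is the parallel sum `X : G` of `X` and `G`. -/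
def IsParallelSum (X G P : H →L[ℂ] H) : Prop :=
  P.IsPositive ∧ ∀ h : H,
    IsGLB {r : ℝ | ∃ f g : H, f + g = h ∧
        r = (inner ℂ (X f) f : ℂ).re + (inner ℂ (G g) g : ℂ).re}
      ((inner ℂ (P h) h : ℂ).re)

/-- `S` is the (unique) nonnegative square root of `X`. -/
def IsSqrtOf (S X : H →L[ℂ] H) : Prop := S.IsPositive ∧ S * S = X

/-- The orbit of `F 0` under the map `μ_G : X ↦ X - X:G`. -/
def IsMuOrbit (G : H →L[ℂ] H) (F : ℕ → H →L[ℂ] H) : Prop :=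
  ∀ n : ℕ, ∃ P : H →L[ℂ] H, IsParallelSum (F n) G P ∧ F (n + 1) = F n - P

/-- `L = τ_G(X)` : the strong limit of the iterates `μ_G^[n](X)`. -/
def IsTau (G X L : H →L[ℂ] H) : Prop :=
  ∃ F : ℕ → H →L[ℂ] H, F 0 = X ∧ IsMuOrbit G F ∧
    ∀ x : H, Tendsto (fun n => F n x) atTop (𝓝 (L x))

/-- `P` is the orthogonal projection of `H` onto the subspace `M`. -/
def IsOrthProjOnto (M : Submodule ℂ H) (P : H →L[ℂ] H) : Prop :=
  ∀ x : H, P x ∈ M ∧ x - P x ∈ Mᗮ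

lemma aux1 (M : H →L[ℂ] H) (hM : ∀ x y : H, (inner ℂ (M x) y : ℂ) = inner ℂ x (M y))
    (u v : H) :
    (inner ℂ (M u) u : ℂ) + inner ℂ ((1 - M) v) v
      = inner ℂ ((M - M * M) (u + v)) (u + v)
        + inner ℂ (M u - (1 - M) v) (M u - (1 - M) v) := by
  simp only [ContinuousLinearMap.sub_apply, ContinuousLinearMap.one_apply,
    ContinuousLinearMap.mul_apply, map_add, map_sub, inner_sub_left, inner_sub_right,
    inner_add_left, inner_add_right, hM]
  ring

/-- Lemma 1 of the paper. If `X = S M S` and `G = S (I - M) S`, where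
`S = (X+G)^{1/2}` and `0 ≤ M ≤ I` with `ran M ⊆ clos ran (X+G)`, then the parallel sum
satisfies `X : G = S (M - M²) S`. -/
theorem stmt0 (X G S M P : H →L[ℂ] H)
    (hX : X.IsPositive) (hG : G.IsPositive)
    (hS : IsSqrtOf S (X + G))
    (hM : M.IsPositive) (hM1 : (1 - M).IsPositive)
    (hMran : Set.range ⇑M ⊆ closure (Set.range ⇑(X + G)))
    (hXdec : X = S * M * S) (hGdec : G = S * (1 - M) * S)
    (hP : IsParallelSum X G P) :
    P = S * (M - M * M) * S := by
  obtain ⟨hSpos, hSS⟩ := hS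
  have hSs : ∀ x y : H, (inner ℂ (S x) y : ℂ) = inner ℂ x (S y) :=
    fun x y => hSpos.isSelfAdjoint.isSymmetric x y
  have hMs : ∀ x y : H, (inner ℂ (M x) y : ℂ) = inner ℂ x (M y) :=
    fun x y => hM.isSelfAdjoint.isSymmetric x y
  set Q : H →L[ℂ] H := S * (M - M * M) * S with hQdef
  -- key identity
  have key : ∀ f g : H, (inner ℂ (X f) f : ℂ).re + (inner ℂ (G g) g : ℂ).re
      = (inner ℂ (Q (f + g)) (f + g) : ℂ).re + ‖M (S f) - (1 - M) (S g)‖ ^ 2 := by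
    intro f g
    have h1 : (inner ℂ (X f) f : ℂ) = inner ℂ (M (S f)) (S f) := by
      rw [hXdec]
      simpa only [ContinuousLinearMap.mul_apply] using hSs (M (S f)) f
    have h2 : (inner ℂ (G g) g : ℂ) = inner ℂ ((1 - M) (S g)) (S g) := by
      rw [hGdec]
      simpa only [ContinuousLinearMap.mul_apply] using hSs ((1 - M) (S g)) g
    have h3 : (inner ℂ (Q (f + g)) (f + g) : ℂ)
        = inner ℂ ((M - M * M) (S f + S g)) (S f + S g) := by
      rw [hQdef]
      have := hSs ((M - M * M) (S (f + g))) (f + g)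
      simpa only [ContinuousLinearMap.mul_apply, map_add] using this
    have h4 : (inner ℂ (M (S f) - (1 - M) (S g)) (M (S f) - (1 - M) (S g)) : ℂ).re
        = ‖M (S f) - (1 - M) (S g)‖ ^ 2 := by
      have := inner_self_eq_norm_sq (𝕜 := ℂ) (M (S f) - (1 - M) (S g))
      simpa using this
    have := congrArg Complex.re (aux1 M hMs (S f) (S g))
    simp only [Complex.add_re] at this
    rw [h1, h2, h3, this, h4]
  -- GLB for Q
  have hglb : ∀ h : H, IsGLB {r : ℝ | ∃ f g : H, f + g = h ∧
      r = (inner ℂ (X f) f : ℂ).re + (inner ℂ (G g) g : ℂ).re} ((inner ℂ (Q h) h : ℂ).re) := by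
    intro h
    constructor
    · rintro r ⟨f, g, hfg, rfl⟩
      rw [key f g, hfg]
      nlinarith [sq_nonneg ‖M (S f) - (1 - M) (S g)‖]
    · intro b hb
      have hmem : M (S h) ∈ closure (Set.range ⇑S) := by
        refine closure_mono ?_ (hMran (Set.mem_range_self (S h)))
        rintro _ ⟨x, rfl⟩
        exact ⟨S x, by rw [← hSS]; rfl⟩
      obtain ⟨u, hu_mem, hu_lim⟩ := mem_closure_iff_seq_limit.mp hmem
      choose gs hgs using hu_mem
      have hb_le : ∀ n, b ≤ (inner ℂ (Q h) h : ℂ).re + ‖M (S h) - u n‖ ^ 2 := by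
        intro n
        have hmemset : (inner ℂ (X (h - gs n)) (h - gs n) : ℂ).re
            + (inner ℂ (G (gs n)) (gs n) : ℂ).re
            ∈ {r : ℝ | ∃ f g : H, f + g = h ∧
              r = (inner ℂ (X f) f : ℂ).re + (inner ℂ (G g) g : ℂ).re} :=
          ⟨h - gs n, gs n, by abel, rfl⟩
        have h5 := hb hmemset
        rw [key] at h5
        have h6 : M (S (h - gs n)) - (1 - M) (S (gs n)) = M (S h) - u n := by
          rw [← hgs n]
          simp only [map_sub, ContinuousLinearMap.sub_apply, ContinuousLinearMap.one_apply]
          abel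
        have h7 : h - gs n + gs n = h := by abel
        rwa [h6, h7] at h5
      have htend : Tendsto (fun n => (inner ℂ (Q h) h : ℂ).re + ‖M (S h) - u n‖ ^ 2)
          atTop (𝓝 ((inner ℂ (Q h) h : ℂ).re + 0)) := by
        refine Tendsto.const_add _ ?_
        have : Tendsto (fun n => M (S h) - u n) atTop (𝓝 (M (S h) - M (S h))) :=
          tendsto_const_nhds.sub hu_lim
        rw [sub_self] at this
        simpa using (this.norm.pow 2)
      rw [add_zero] at htend
      exact ge_of_tendsto' htend hb_le
  -- equality of quadratic forms
  have hre : ∀ x : H, (inner ℂ (P x) x : ℂ).re = (inner ℂ (Q x) x : ℂ).re :=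
    fun x => (hP.2 x).unique (hglb x)
  have hQsa : IsSelfAdjoint Q := by
    have h1 := hSpos.isSelfAdjoint
    have h2 := hM.isSelfAdjoint
    rw [IsSelfAdjoint, hQdef]
    simp only [star_mul, star_sub, h1.star_eq, h2.star_eq, mul_assoc]
  have hreal : ∀ (T : H →L[ℂ] H), IsSelfAdjoint T → ∀ x : H,
      (inner ℂ (T x) x : ℂ) = ((inner ℂ (T x) x : ℂ).re : ℂ) := by
    intro T hT x
    have h1 : (starRingEnd ℂ) (inner ℂ (T x) x : ℂ) = inner ℂ (T x) x := by
      rw [inner_conj_symm]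
      exact (hT.isSymmetric x x).symm
    rw [Complex.conj_eq_iff_re] at h1
    exact h1.symm
  have heq : ∀ x : H, (inner ℂ (P x) x : ℂ) = inner ℂ (Q x) x := by
    intro x
    rw [hreal P hP.1.isSelfAdjoint x, hreal Q hQsa x, hre x]
  have heq' : ∀ x : H, (inner ℂ ((P : H →ₗ[ℂ] H) x) x : ℂ) = inner ℂ ((Q : H →ₗ[ℂ] H) x) x :=
    heq
  exact ContinuousLinearMap.coe_injective
    ((ext_inner_map (P : H →ₗ[ℂ] H) (Q : H →ₗ[ℂ] H)).mp heq')
end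

section
/- For all X, G ∈ B^+(H), the range of the square root of the parallel sum equals the intersection of the ranges of the square roots: ran (X:G)^{1/2} = ran X^{1/2} ∩ ran G^{1/2}. -/
open Filter Topology

variable {H : Type*} [NormedAddCommGroup H] [InnerProductSpace ℂ H] [CompleteSpace H]

private theorem douglas_rev (S : H →L[ℂ] H) (hS : IsSelfAdjoint S) (x : H)
    (c : ℝ) (hc : ∀ h : H, ‖(inner ℂ x h : ℂ)‖ ≤ c * ‖S h‖) : x ∈ Set.range S := by
  set ψ : H →ₗ[ℂ] ℂ := (innerSL ℂ x).toLinearMap with hψ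
  have hker : LinearMap.ker (S : H →ₗ[ℂ] H) ≤ LinearMap.ker ψ := by
    intro h hh
    have hh' : S h = 0 := hh
    have h0 := hc h
    rw [hh', norm_zero, mul_zero] at h0
    exact LinearMap.mem_ker.mpr (norm_le_zero_iff.mp h0)
  set g₀ : LinearMap.range (S : H →ₗ[ℂ] H) →ₗ[ℂ] ℂ :=
    ((LinearMap.ker (S : H →ₗ[ℂ] H)).liftQ ψ hker) ∘ₗ
      (LinearMap.quotKerEquivRange (S : H →ₗ[ℂ] H)).symm.toLinearMap with hg₀
  have key : ∀ h : H, g₀ ⟨S h, ⟨h, rfl⟩⟩ = ψ h := by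
    intro h
    have e : ((⟨S h, ⟨h, rfl⟩⟩ : LinearMap.range (S : H →ₗ[ℂ] H))) =
        ⟨(S : H →ₗ[ℂ] H) h, LinearMap.mem_range_self _ h⟩ := rfl
    rw [hg₀]
    simp only [LinearMap.coe_comp, Function.comp_apply, LinearEquiv.coe_coe, e,
      LinearMap.quotKerEquivRange_symm_apply_image]
    simp [Submodule.liftQ_apply]
  have key' : ∀ (u : LinearMap.range (S : H →ₗ[ℂ] H)) (h : H), (u : H) = S h → g₀ u = ψ h :=
    fun u h hu => by rw [show u = ⟨S h, ⟨h, rfl⟩⟩ from Subtype.ext hu]; exact key h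
  set c' := max c 0 with hc'
  have bound : ∀ u : LinearMap.range (S : H →ₗ[ℂ] H), ‖g₀ u‖ ≤ c' * ‖u‖ := by
    intro u
    obtain ⟨h, hh⟩ := u.2
    have hn : ‖S h‖ = ‖u‖ := by rw [← Submodule.norm_coe u, ← hh]; rfl
    rw [key' u h hh.symm]
    calc ‖ψ h‖ ≤ c * ‖S h‖ := hc h
      _ ≤ c' * ‖S h‖ := mul_le_mul_of_nonneg_right (le_max_left _ _) (norm_nonneg _)
      _ = c' * ‖u‖ := by rw [hn]
  set f := g₀.mkContinuous c' bound with hf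
  obtain ⟨g, hg, -⟩ := exists_extension_norm_eq (LinearMap.range (S : H →ₗ[ℂ] H)) f
  set z := (InnerProductSpace.toDual ℂ H).symm g with hz
  refine ⟨z, ?_⟩
  refine ext_inner_right ℂ fun v => ?_
  have h1 : (inner ℂ (S z) v : ℂ) = inner ℂ z (S v) := by
    rw [← hS.adjoint_eq, ContinuousLinearMap.adjoint_inner_left, hS.adjoint_eq]
  have h2 : (inner ℂ z (S v) : ℂ) = g (S v) := InnerProductSpace.toDual_symm_apply
  have h3 : g (S v) = f ⟨S v, ⟨v, rfl⟩⟩ := hg ⟨S v, ⟨v, rfl⟩⟩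
  have h4 : f ⟨S v, ⟨v, rfl⟩⟩ = ψ v := key v
  rw [h1, h2, h3, h4]; rfl

/-- Douglas-type range characterization for a self-adjoint operator. -/
private theorem douglas (S : H →L[ℂ] H) (hS : IsSelfAdjoint S) (x : H) :
    x ∈ Set.range S ↔ ∃ c : ℝ, ∀ h : H, ‖(inner ℂ x h : ℂ)‖ ≤ c * ‖S h‖ := by
  constructor
  · rintro ⟨y, rfl⟩
    refine ⟨‖y‖, fun h => ?_⟩
    calc ‖(inner ℂ (S y) h : ℂ)‖ = ‖(inner ℂ y (S h) : ℂ)‖ := by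
          rw [← ContinuousLinearMap.adjoint_inner_left, hS.adjoint_eq]
      _ ≤ ‖y‖ * ‖S h‖ := norm_inner_le_norm y (S h)
  · rintro ⟨c, hc⟩
    exact douglas_rev S hS x c hc

private theorem sqrt_re_inner (S X : H →L[ℂ] H) (h : IsSqrtOf S X) (v : H) :
    (inner ℂ (X v) v : ℂ).re = ‖S v‖ ^ 2 := by
  have e : X v = S (S v) := by rw [← h.2]; rfl
  rw [e]
  have hsa := h.1.isSelfAdjoint
  rw [← hsa.adjoint_eq, ContinuousLinearMap.adjoint_inner_left, hsa.adjoint_eq]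
  exact inner_self_eq_norm_sq (𝕜 := ℂ) (S v)

/-- `ran (X:G)^{1/2} = ran X^{1/2} ∩ ran G^{1/2}`. -/
theorem stmt1 (X G P Sx Sg Sp : H →L[ℂ] H)
    (hX : X.IsPositive) (hG : G.IsPositive)
    (hP : IsParallelSum X G P)
    (hSx : IsSqrtOf Sx X) (hSg : IsSqrtOf Sg G) (hSp : IsSqrtOf Sp P) :
    Set.range ⇑Sp = Set.range ⇑Sx ∩ Set.range ⇑Sg := by
  have hx2 := sqrt_re_inner Sx X hSx
  have hg2 := sqrt_re_inner Sg G hSg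
  have hp2 := sqrt_re_inner Sp P hSp
  -- key GLB facts
  have hPX : ∀ h : H, ‖Sp h‖ ≤ ‖Sx h‖ := by
    intro h
    have hmem : ‖Sx h‖ ^ 2 ∈ {r : ℝ | ∃ f g : H, f + g = h ∧
        r = (inner ℂ (X f) f : ℂ).re + (inner ℂ (G g) g : ℂ).re} :=
      ⟨h, 0, add_zero h, by simp [hx2 h]⟩
    have := (hP.2 h).1 hmem
    rw [hp2 h] at this
    nlinarith [norm_nonneg (Sp h), norm_nonneg (Sx h)]
  have hPG : ∀ h : H, ‖Sp h‖ ≤ ‖Sg h‖ := by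
    intro h
    have hmem : ‖Sg h‖ ^ 2 ∈ {r : ℝ | ∃ f g : H, f + g = h ∧
        r = (inner ℂ (X f) f : ℂ).re + (inner ℂ (G g) g : ℂ).re} :=
      ⟨0, h, zero_add h, by simp [hg2 h]⟩
    have := (hP.2 h).1 hmem
    rw [hp2 h] at this
    nlinarith [norm_nonneg (Sp h), norm_nonneg (Sg h)]
  ext x
  simp only [Set.mem_inter_iff]
  rw [douglas Sp hSp.1.isSelfAdjoint x, douglas Sx hSx.1.isSelfAdjoint x, douglas Sg hSg.1.isSelfAdjoint x]
  constructor
  · rintro ⟨c, hc⟩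
    refine ⟨⟨max c 0, fun h => ?_⟩, ⟨max c 0, fun h => ?_⟩⟩
    · calc ‖(inner ℂ x h : ℂ)‖ ≤ c * ‖Sp h‖ := hc h
        _ ≤ max c 0 * ‖Sx h‖ :=
          mul_le_mul (le_max_left _ _) (hPX h) (norm_nonneg _) (le_max_right _ _)
    · calc ‖(inner ℂ x h : ℂ)‖ ≤ c * ‖Sp h‖ := hc h
        _ ≤ max c 0 * ‖Sg h‖ :=
          mul_le_mul (le_max_left _ _) (hPG h) (norm_nonneg _) (le_max_right _ _)
  · rintro ⟨⟨a, ha⟩, ⟨b, hb⟩⟩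
    set a' := max a 1 with ha'
    set b' := max b 1 with hb'
    have ha'1 : (1:ℝ) ≤ a' := le_max_right _ _
    have hb'1 : (1:ℝ) ≤ b' := le_max_right _ _
    set K := a' ^ 2 + b' ^ 2 with hK
    have hKpos : 0 < K := by positivity
    refine ⟨Real.sqrt K, fun h => ?_⟩
    have hlb : K⁻¹ * ‖(inner ℂ x h : ℂ)‖ ^ 2 ∈ lowerBounds {r : ℝ | ∃ f g : H, f + g = h ∧
        r = (inner ℂ (X f) f : ℂ).re + (inner ℂ (G g) g : ℂ).re} := by
      rintro r ⟨f, g, hfg, rfl⟩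
      rw [hx2 f, hg2 g]
      have h1 : ‖(inner ℂ x h : ℂ)‖ ≤ a' * ‖Sx f‖ + b' * ‖Sg g‖ := by
        calc ‖(inner ℂ x h : ℂ)‖ = ‖(inner ℂ x f : ℂ) + inner ℂ x g‖ := by
              rw [← hfg, inner_add_right]
          _ ≤ ‖(inner ℂ x f : ℂ)‖ + ‖(inner ℂ x g : ℂ)‖ := norm_add_le _ _
          _ ≤ a' * ‖Sx f‖ + b' * ‖Sg g‖ := by
              gcongr
              · exact le_trans (ha f)
                  (mul_le_mul_of_nonneg_right (le_max_left _ _) (norm_nonneg _))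
              · exact le_trans (hb g)
                  (mul_le_mul_of_nonneg_right (le_max_left _ _) (norm_nonneg _))
      rw [inv_mul_le_iff₀ hKpos]
      nlinarith [sq_nonneg (a' * ‖Sg g‖ - b' * ‖Sx f‖), norm_nonneg (inner ℂ x h : ℂ),
        norm_nonneg (Sx f), norm_nonneg (Sg g),
        mul_self_nonneg (a' * ‖Sx f‖ + b' * ‖Sg g‖)]
    have hle := (hP.2 h).2 hlb
    rw [hp2 h] at hle
    have hsq : Real.sqrt K ^ 2 = K := Real.sq_sqrt hKpos.le
    have hs0 : 0 ≤ Real.sqrt K := Real.sqrt_nonneg _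
    have ht2 : ‖(inner ℂ x h : ℂ)‖ ^ 2 ≤ K * ‖Sp h‖ ^ 2 := (inv_mul_le_iff₀ hKpos).mp hle
    nlinarith [ht2, norm_nonneg (inner ℂ x h : ℂ), norm_nonneg (Sp h),
      mul_nonneg hs0 (norm_nonneg (Sp h))]
end

section
/- For X, G ∈ B^+(H), the parallel sum X:G is the zero operator if and only if ran X^{1/2} ∩ ran G^{1/2} = {0}. -/
open Filter Topology

variable {H : Type*} [NormedAddCommGroup H] [InnerProductSpace ℂ H] [CompleteSpace H]

lemma sq_form {S X : H →L[ℂ] H} (hS : IsSqrtOf S X) (f : H) :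
    (inner ℂ (X f) f : ℂ).re = ‖S f‖ ^ 2 := by
  have h1 : X f = S (S f) := by rw [← hS.2]; rfl
  have h2 : (inner ℂ (X f) f : ℂ) = inner ℂ (S f) (S f) := by
    rw [h1]; exact hS.1.1 (S f) f
  rw [h2]
  exact inner_self_eq_norm_sq (𝕜 := ℂ) (S f)

lemma key_approx {Sx Sg : H →L[ℂ] H}
    (hSx : IsSelfAdjoint Sx) (hSg : IsSelfAdjoint Sg)
    (hr : Set.range ⇑Sx ∩ Set.range ⇑Sg = {0}) (h : H) {ε : ℝ} (hε : 0 < ε) :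
    ∃ f g : H, f + g = h ∧ ‖Sx f‖ ^ 2 + ‖Sg g‖ ^ 2 < ε := by
  classical
  let e := (WithLp.linearEquiv 2 ℂ (H × H)).symm
  let ℓ : H →ₗ[ℂ] WithLp 2 (H × H) :=
    e.toLinearMap.comp (((Sx : H →ₗ[ℂ] H)).prod (-(Sg : H →ₗ[ℂ] H)))
  set M : Submodule ℂ (WithLp 2 (H × H)) := LinearMap.range ℓ with hM
  have hmem : e (Sx h, 0) ∈ Mᗮᗮ := by
    rw [Submodule.mem_orthogonal]
    intro y hy
    have hy' : ∀ g : H, (inner ℂ (ℓ g) y : ℂ) = 0 := by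
      intro g
      have := (Submodule.mem_orthogonal M y).mp hy (ℓ g) ⟨g, rfl⟩
      simpa using this
    have hfs : Sx y.fst = Sg y.snd := by
      have key : ∀ g : H, (inner ℂ g (Sx y.fst - Sg y.snd) : ℂ) = 0 := by
        intro g
        have h1 := hy' g
        have h2 : (inner ℂ (Sx g) y.fst : ℂ) + inner ℂ (-(Sg g)) y.snd = 0 := by
          simpa [ℓ, e, WithLp.prod_inner_apply] using h1
        have h3 : (inner ℂ (Sx g) y.fst : ℂ) = inner ℂ g (Sx y.fst) :=
          hSx.isSymmetric g y.fst
        have h4 : (inner ℂ (Sg g) y.snd : ℂ) = inner ℂ g (Sg y.snd) :=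
          hSg.isSymmetric g y.snd
        rw [inner_neg_left] at h2
        rw [inner_sub_right, ← h3, ← h4]
        linear_combination h2
      have := ext_inner_left ℂ (x := Sx y.fst - Sg y.snd) (y := (0 : H))
        (fun v => by rw [key v, inner_zero_right])
      exact sub_eq_zero.mp this
    have hz : Sx y.fst = 0 := by
      have : Sx y.fst ∈ Set.range ⇑Sx ∩ Set.range ⇑Sg :=
        ⟨⟨y.fst, rfl⟩, ⟨y.snd, hfs.symm⟩⟩
      rw [hr] at this
      exact this
    have : (inner ℂ y (e (Sx h, 0)) : ℂ)
        = inner ℂ y.fst (Sx h) + inner ℂ y.snd (0 : H) := by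
      simp [e, WithLp.prod_inner_apply]
    have h5 : (inner ℂ y.fst (Sx h) : ℂ) = inner ℂ (Sx y.fst) h :=
      (hSx.isSymmetric y.fst h).symm
    rw [this, inner_zero_right, add_zero, h5, hz, inner_zero_left]
  rw [Submodule.orthogonal_orthogonal_eq_closure] at hmem
  have hcl : e (Sx h, 0) ∈ closure (M : Set (WithLp 2 (H × H))) := hmem
  rw [Metric.mem_closure_iff] at hcl
  obtain ⟨b, hbM, hdist⟩ := hcl (Real.sqrt ε) (Real.sqrt_pos.mpr hε)
  obtain ⟨g, rfl⟩ := hbM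
  refine ⟨h - g, g, by abel, ?_⟩
  have hd : ‖e (Sx h, 0) - ℓ g‖ < Real.sqrt ε := by
    rwa [dist_eq_norm] at hdist
  have hsq : ‖e (Sx h, 0) - ℓ g‖ ^ 2 < ε := by
    have h0 : (0:ℝ) ≤ ‖e (Sx h, 0) - ℓ g‖ := norm_nonneg _
    nlinarith [Real.sq_sqrt hε.le, Real.sqrt_nonneg ε]
  have hfst : (e (Sx h, 0) - ℓ g).fst = Sx (h - g) := by
    simp [e, ℓ, map_sub]
  have hsnd : (e (Sx h, 0) - ℓ g).snd = Sg g := by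
    simp [e, ℓ]
  calc ‖Sx (h - g)‖ ^ 2 + ‖Sg g‖ ^ 2
      = ‖(e (Sx h, 0) - ℓ g).fst‖ ^ 2 + ‖(e (Sx h, 0) - ℓ g).snd‖ ^ 2 := by
        rw [hfst, hsnd]
    _ = ‖e (Sx h, 0) - ℓ g‖ ^ 2 := (WithLp.prod_norm_sq_eq_of_L2 _).symm
    _ < ε := hsq

/-- `X : G = 0` iff `ran X^{1/2} ∩ ran G^{1/2} = {0}`. -/
theorem stmt2 (X G P Sx Sg : H →L[ℂ] H)
    (hX : X.IsPositive) (hG : G.IsPositive)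
    (hP : IsParallelSum X G P)
    (hSx : IsSqrtOf Sx X) (hSg : IsSqrtOf Sg G) :
    P = 0 ↔ Set.range ⇑Sx ∩ Set.range ⇑Sg = {0} := by
  obtain ⟨hPpos, hglb⟩ := hP
  constructor
  · rintro rfl
    have hglb0 : ∀ h : H, IsGLB {r : ℝ | ∃ f g : H, f + g = h ∧
        r = (inner ℂ (X f) f : ℂ).re + (inner ℂ (G g) g : ℂ).re} 0 := by
      intro h
      simpa using hglb h
    ext k
    simp only [Set.mem_inter_iff, Set.mem_singleton_iff, Set.mem_range]
    constructor
    · rintro ⟨⟨u, hu⟩, ⟨v, hv⟩⟩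
      have exists_small : ∀ δ : ℝ, 0 < δ →
          ∃ f g : H, f + g = k ∧ ‖Sx f‖ ^ 2 + ‖Sg g‖ ^ 2 < δ := by
        intro δ hδ
        by_contra hcon
        push_neg at hcon
        have hlb : δ ∈ lowerBounds {r : ℝ | ∃ f g : H, f + g = k ∧
            r = (inner ℂ (X f) f : ℂ).re + (inner ℂ (G g) g : ℂ).re} := by
          rintro r ⟨f, g, hfg, rfl⟩
          rw [sq_form hSx f, sq_form hSg g]
          exact hcon f g hfg
        have := (hglb0 k).2 hlb
        linarith
      have hk2 : ‖k‖ ^ 2 ≤ 0 := by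
        refine le_of_forall_pos_le_add (fun ε hε => ?_)
        set C : ℝ := ‖u‖ + ‖v‖ + 1 with hC
        have hCpos : 0 < C := by positivity
        set t : ℝ := ε / C with ht
        have htpos : 0 < t := div_pos hε hCpos
        have htC : C * t = ε := mul_div_cancel₀ ε hCpos.ne'
        obtain ⟨f, g, hfg, hlt⟩ := exists_small (t ^ 2) (by positivity)
        have hf : ‖Sx f‖ ≤ t := by
          nlinarith [norm_nonneg (Sx f), norm_nonneg (Sg g)]
        have hg : ‖Sg g‖ ≤ t := by
          nlinarith [norm_nonneg (Sx f), norm_nonneg (Sg g)]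
        have e0 : (inner ℂ k k : ℂ).re = ‖k‖ ^ 2 := inner_self_eq_norm_sq (𝕜 := ℂ) k
        have e1 : (inner ℂ k k : ℂ) = inner ℂ k f + inner ℂ k g := by
          rw [← inner_add_right, hfg]
        have e2 : (inner ℂ k f : ℂ) = inner ℂ u (Sx f) := by
          rw [← hu]; exact hSx.1.1 u f
        have e3 : (inner ℂ k g : ℂ) = inner ℂ v (Sg g) := by
          rw [← hv]; exact hSg.1.1 v g
        have b2 : (inner ℂ u (Sx f) : ℂ).re ≤ ‖u‖ * ‖Sx f‖ := by
          calc (inner ℂ u (Sx f) : ℂ).re ≤ ‖(inner ℂ u (Sx f) : ℂ)‖ := Complex.re_le_norm _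
            _ ≤ ‖u‖ * ‖Sx f‖ := norm_inner_le_norm u (Sx f)
        have b3 : (inner ℂ v (Sg g) : ℂ).re ≤ ‖v‖ * ‖Sg g‖ := by
          calc (inner ℂ v (Sg g) : ℂ).re ≤ ‖(inner ℂ v (Sg g) : ℂ)‖ := Complex.re_le_norm _
            _ ≤ ‖v‖ * ‖Sg g‖ := norm_inner_le_norm v (Sg g)
        have : ‖k‖ ^ 2 = (inner ℂ u (Sx f) : ℂ).re + (inner ℂ v (Sg g) : ℂ).re := by
          rw [← e0, e1, Complex.add_re, e2, e3]
        rw [this]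
        have hub : ‖u‖ * ‖Sx f‖ ≤ ‖u‖ * t :=
          mul_le_mul_of_nonneg_left hf (norm_nonneg u)
        have hvb : ‖v‖ * ‖Sg g‖ ≤ ‖v‖ * t :=
          mul_le_mul_of_nonneg_left hg (norm_nonneg v)
        nlinarith
      have : ‖k‖ = 0 := by nlinarith [norm_nonneg k, sq_nonneg ‖k‖]
      exact norm_eq_zero.mp this
    · rintro rfl
      exact ⟨⟨0, map_zero _⟩, ⟨0, map_zero _⟩⟩
  · intro hr
    have hz : ∀ h : H, (inner ℂ (P h) h : ℂ).re = 0 := by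
      intro h
      refine IsGLB.unique (hglb h) ?_
      constructor
      · rintro r ⟨f, g, hfg, rfl⟩
        rw [sq_form hSx f, sq_form hSg g]
        positivity
      · intro b hb
        by_contra hbpos
        push_neg at hbpos
        obtain ⟨f, g, hfg, hlt⟩ := key_approx hSx.1.isSelfAdjoint hSg.1.isSelfAdjoint hr h hbpos
        have hmem : ‖Sx f‖ ^ 2 + ‖Sg g‖ ^ 2 ∈ {r : ℝ | ∃ f g : H, f + g = h ∧
            r = (inner ℂ (X f) f : ℂ).re + (inner ℂ (G g) g : ℂ).re} :=
          ⟨f, g, hfg, by rw [sq_form hSx f, sq_form hSg g]⟩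
        have := hb hmem
        linarith
    have hz' : ∀ h : H, (inner ℂ (P h) h : ℂ) = 0 := by
      intro h
      have h1 : (inner ℂ (P h) h : ℂ) = inner ℂ h (P h) := hPpos.1 h h
      have h2 : (starRingEnd ℂ) (inner ℂ (P h) h : ℂ) = inner ℂ h (P h) :=
        inner_conj_symm h (P h)
      have him : (inner ℂ (P h) h : ℂ).im = 0 := by
        have : (starRingEnd ℂ) (inner ℂ (P h) h : ℂ) = (inner ℂ (P h) h : ℂ) := by
          rw [h2, ← h1]
        exact Complex.conj_eq_iff_im.mp this
      exact Complex.ext (by simpa using hz h) (by simpa using him)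
    have hP0 : (P : H →ₗ[ℂ] H) = 0 := (inner_map_self_eq_zero _).mp (fun x => hz' x)
    ext x
    simpa using LinearMap.congr_fun hP0 x
end

section
/- Let G, F_0 ∈ B^+(H) and define recursively F_{n+1} = μ_G(F_n) = F_n − F_n:G for n ≥ 0. Then the sequence {F_n} is non-increasing (F_0 ≥ F_1 ≥ ⋯ ≥ F_n ≥ F_{n+1} ≥ ⋯ ≥ 0), its strong (pointwise) limit F exists and belongs to B^+(H), and F satisfies F:G = 0, i.e., F is a fixed point of μ_G. -/
open Filter Topology

variable {H : Type*} [NormedAddCommGroup H] [InnerProductSpace ℂ H] [CompleteSpace H]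

section Aux

open ContinuousLinearMap

set_option synthInstance.maxHeartbeats 1000000
set_option maxHeartbeats 1000000

lemma aux_isPositive_iff (T : H →L[ℂ] H) :
    T.IsPositive ↔ IsSelfAdjoint T ∧ ∀ x, 0 ≤ (inner ℂ (T x) x : ℂ).re := by
  unfold ContinuousLinearMap.IsPositive ContinuousLinearMap.reApplyInnerSelf
  simp [RCLike.re_to_complex, ContinuousLinearMap.isSelfAdjoint_iff_isSymmetric]

lemma aux_norm_sq (T : H →L[ℂ] H) (hT : T.IsPositive) (x : H) :
    ‖T x‖ ^ 2 ≤ ‖T‖ * (inner ℂ (T x) x : ℂ).re := by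
  have hT0 : (0 : H →L[ℂ] H) ≤ T := (nonneg_iff_isPositive T).mpr hT
  set S := CFC.sqrt T with hS
  have hS0 : (0 : H →L[ℂ] H) ≤ S := CFC.sqrt_nonneg T
  have hSS : S * S = T := CFC.sqrt_mul_sqrt_self T hT0
  have hSsa : IsSelfAdjoint S := ((nonneg_iff_isPositive S).mp hS0).isSelfAdjoint
  have hsym := (isSelfAdjoint_iff_isSymmetric).mp hSsa
  have h1 : ‖S x‖ ^ 2 = (inner ℂ (T x) x : ℂ).re := by
    have h : (inner ℂ (T x) x : ℂ) = inner ℂ (S x) (S x) := by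
      rw [← hSS]; exact hsym (S x) x
    rw [h, ← RCLike.re_to_complex, inner_self_eq_norm_sq]
  have h2 : ‖T x‖ ≤ ‖S‖ * ‖S x‖ := by
    calc ‖T x‖ = ‖S (S x)‖ := by rw [← hSS]; rfl
    _ ≤ ‖S‖ * ‖S x‖ := le_opNorm S (S x)
  have h3 : ‖S‖ * ‖S‖ = ‖T‖ := by
    calc ‖S‖ * ‖S‖ = ‖star S * S‖ := CStarRing.norm_star_mul_self.symm
    _ = ‖T‖ := by rw [hSsa.star_eq, hSS]
  calc ‖T x‖ ^ 2 ≤ (‖S‖ * ‖S x‖) ^ 2 := pow_le_pow_left₀ (norm_nonneg _) h2 2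
    _ = ‖T‖ * ((inner ℂ (T x) x : ℂ).re) := by rw [mul_pow, h1, sq, h3]

lemma aux_norm_le (T S : H →L[ℂ] H) (hT : T.IsPositive) (hTS : (S - T).IsPositive) :
    ‖T‖ ≤ ‖S‖ := by
  have h1 : (0 : H →L[ℂ] H) ≤ T := (nonneg_iff_isPositive T).mpr hT
  have h2 : T ≤ S := (le_def T S).mpr hTS
  exact CStarAlgebra.norm_le_norm_of_nonneg_of_le h1 h2

end Aux

/-- Lemma 2 of the paper. The orbit `F_{n+1} = μ_G(F_n)` of a nonnegative
operator `F_0` is non-increasing, its strong limit `F` exists, is a nonnegative operator, and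
satisfies `F : G = 0`, i.e. `F` is a fixed point of `μ_G`. -/
theorem stmt3 (G : H →L[ℂ] H) (hG : G.IsPositive)
    (F : ℕ → H →L[ℂ] H) (hF0 : (F 0).IsPositive) (hrec : IsMuOrbit G F) :
    (∀ n : ℕ, (F n).IsPositive ∧ (F n - F (n + 1)).IsPositive) ∧
    ∃ L : H →L[ℂ] H, (∀ x : H, Tendsto (fun n => F n x) atTop (𝓝 (L x))) ∧
      L.IsPositive ∧ IsParallelSum L G 0 := by
  classical
  choose P hP hFrec using hrec
  have hPpos : ∀ n, (P n).IsPositive := fun n => (hP n).1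
  -- abbreviation for the quadratic forms
  set q : ℕ → H → ℝ := fun n h => (inner ℂ (F n h) h : ℂ).re with hqdef
  set p : ℕ → H → ℝ := fun n h => (inner ℂ (P n h) h : ℂ).re with hpdef
  -- the parallel sum is dominated by F n
  have hPle : ∀ n h, p n h ≤ q n h := by
    intro n h
    refine ((hP n).2 h).1 ⟨h, 0, add_zero h, ?_⟩
    simp [hqdef]
  have hpq : ∀ n h, q (n + 1) h = q n h - p n h := by
    intro n h
    simp only [hqdef, hpdef, hFrec n, ContinuousLinearMap.sub_apply, inner_sub_left,
      Complex.sub_re]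
  -- positivity of all iterates
  have hFpos : ∀ n, (F n).IsPositive := by
    intro n
    induction n with
    | zero => exact hF0
    | succ k ih =>
      rw [aux_isPositive_iff]
      constructor
      · rw [hFrec k]
        exact ih.isSelfAdjoint.sub (hPpos k).isSelfAdjoint
      · intro x
        have := hPle k x
        have h2 : q (k + 1) x = q k x - p k x := hpq k x
        have h3 : 0 ≤ q (k + 1) x := by rw [h2]; linarith
        exact h3
  have hq0 : ∀ n h, 0 ≤ q n h := by
    intro n h
    exact ((aux_isPositive_iff (F n)).mp (hFpos n)).2 h
  have hp0 : ∀ n h, 0 ≤ p n h := by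
    intro n h
    exact ((aux_isPositive_iff (P n)).mp (hPpos n)).2 h
  -- the first claim
  have claim1 : ∀ n : ℕ, (F n).IsPositive ∧ (F n - F (n + 1)).IsPositive := by
    intro n
    refine ⟨hFpos n, ?_⟩
    have : F n - F (n + 1) = P n := by rw [hFrec n, sub_sub_cancel]
    rw [this]; exact hPpos n
  -- monotonicity in the Loewner order
  have hmono : ∀ n m : ℕ, n ≤ m → (F n - F m).IsPositive := by
    intro n m hnm
    induction m, hnm using Nat.le_induction with
    | base => simpa using ContinuousLinearMap.isPositive_zero
    | succ k hk ih =>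
      have : F n - F (k + 1) = (F n - F k) + P k := by rw [hFrec k]; abel
      rw [this]; exact ih.add (hPpos k)
  have hqanti : ∀ h, Antitone (fun n => q n h) := by
    intro h
    refine antitone_nat_of_succ_le fun n => ?_
    have := hp0 n h
    rw [hpq n h]; linarith
  -- the quadratic forms converge
  have hqconv : ∀ h, ∃ l : ℝ, Tendsto (fun n => q n h) atTop (𝓝 l) := by
    intro h
    refine ⟨_, tendsto_atTop_ciInf (hqanti h) ⟨0, ?_⟩⟩
    rintro r ⟨n, rfl⟩
    exact hq0 n h
  -- key Cauchy estimate
  have hest : ∀ (n m : ℕ), n ≤ m → ∀ x,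
      ‖F n x - F m x‖ ^ 2 ≤ ‖F 0‖ * (q n x - q m x) := by
    intro n m hnm x
    set D := F n - F m with hD
    have hDpos : D.IsPositive := hmono n m hnm
    have hDle : (F 0 - D).IsPositive := by
      have h' : F 0 - D = (F 0 - F n) + F m := by rw [hD]; abel
      rw [h']
      exact (hmono 0 n (Nat.zero_le n)).add (hFpos m)
    have h1 : ‖D x‖ ^ 2 ≤ ‖D‖ * (inner ℂ (D x) x : ℂ).re := aux_norm_sq D hDpos x
    have h2 : ‖D‖ ≤ ‖F 0‖ := aux_norm_le D (F 0) hDpos hDle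
    have h3 : (inner ℂ (D x) x : ℂ).re = q n x - q m x := by
      simp only [hD, hqdef, ContinuousLinearMap.sub_apply, inner_sub_left, Complex.sub_re]
    have h4 : 0 ≤ (inner ℂ (D x) x : ℂ).re := ((aux_isPositive_iff D).mp hDpos).2 x
    have h5 : D x = F n x - F m x := rfl
    calc ‖F n x - F m x‖ ^ 2 = ‖D x‖ ^ 2 := by rw [h5]
      _ ≤ ‖D‖ * (inner ℂ (D x) x : ℂ).re := h1
      _ ≤ ‖F 0‖ * (inner ℂ (D x) x : ℂ).re := by
          exact mul_le_mul_of_nonneg_right h2 h4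
      _ = ‖F 0‖ * (q n x - q m x) := by rw [h3]
  -- the sequence is pointwise Cauchy
  have hcs : ∀ x, CauchySeq (fun n => F n x) := by
    intro x
    obtain ⟨l, hl⟩ := hqconv x
    have hql : CauchySeq (fun n => q n x) := hl.cauchySeq
    rw [Metric.cauchySeq_iff] at hql ⊢
    intro ε hε
    have hpos : (0:ℝ) < ‖F 0‖ + 1 := by positivity
    obtain ⟨N, hN⟩ := hql (ε ^ 2 / (‖F 0‖ + 1)) (by positivity)
    refine ⟨N, fun m hm n hn => ?_⟩
    have key : ∀ a b : ℕ, N ≤ a → N ≤ b → a ≤ b → dist (F a x) (F b x) < ε := by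
      intro a b ha hb hab
      have h1 : ‖F a x - F b x‖ ^ 2 ≤ ‖F 0‖ * (q a x - q b x) := hest a b hab x
      have h2 : dist (q a x) (q b x) < ε ^ 2 / (‖F 0‖ + 1) := hN a ha b hb
      have h3 : 0 ≤ q a x - q b x := sub_nonneg.mpr (hqanti x hab)
      have h4 : q a x - q b x < ε ^ 2 / (‖F 0‖ + 1) := by
        rw [Real.dist_eq, abs_of_nonneg h3] at h2; exact h2
      have h5 : ‖F a x - F b x‖ ^ 2 < ε ^ 2 := by
        have h6 : ‖F 0‖ * (q a x - q b x) ≤ (‖F 0‖ + 1) * (q a x - q b x) := by nlinarith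
        have h7 : (‖F 0‖ + 1) * (q a x - q b x) < (‖F 0‖ + 1) * (ε ^ 2 / (‖F 0‖ + 1)) :=
          mul_lt_mul_of_pos_left h4 hpos
        have h8 : (‖F 0‖ + 1) * (ε ^ 2 / (‖F 0‖ + 1)) = ε ^ 2 := by field_simp
        linarith
      have := lt_of_pow_lt_pow_left₀ 2 hε.le h5
      rwa [dist_eq_norm]
    rcases le_total m n with h | h
    · exact key m n hm hn h
    · rw [dist_comm]; exact key n m hn hm h
  -- pointwise limits exist
  have hex : ∀ x, ∃ y, Tendsto (fun n => F n x) atTop (𝓝 y) :=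
    fun x => cauchySeq_tendsto_of_complete (hcs x)
  choose f hf using hex
  let L : H →L[ℂ] H := continuousLinearMapOfTendsto F (tendsto_pi_nhds.mpr hf)
  have hFL : ∀ x, Tendsto (fun n => F n x) atTop (𝓝 (L x)) := fun x => hf x
  have hqL : ∀ x, Tendsto (fun n => q n x) atTop (𝓝 ((inner ℂ (L x) x : ℂ).re)) := by
    intro x
    have h1 : Tendsto (fun n => (inner ℂ (F n x) x : ℂ)) atTop (𝓝 (inner ℂ (L x) x : ℂ)) :=
      (hFL x).inner tendsto_const_nhds
    exact (Complex.continuous_re.tendsto _).comp h1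
  have hLpos : L.IsPositive := by
    rw [aux_isPositive_iff]
    constructor
    · rw [ContinuousLinearMap.isSelfAdjoint_iff_isSymmetric]
      intro x y
      have h1 : Tendsto (fun n => (inner ℂ (F n x) y : ℂ)) atTop (𝓝 (inner ℂ (L x) y : ℂ)) :=
        (hFL x).inner tendsto_const_nhds
      have h2 : Tendsto (fun n => (inner ℂ x (F n y) : ℂ)) atTop (𝓝 (inner ℂ x (L y) : ℂ)) :=
        Tendsto.inner tendsto_const_nhds (hFL y)
      have h3 : (fun n => (inner ℂ (F n x) y : ℂ)) = fun n => (inner ℂ x (F n y) : ℂ) := by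
        funext n
        exact (ContinuousLinearMap.isSelfAdjoint_iff_isSymmetric.mp
          (hFpos n).isSelfAdjoint) x y
      rw [h3] at h1
      exact tendsto_nhds_unique h1 h2
    · intro x
      exact ge_of_tendsto' (hqL x) (fun n => hq0 n x)
  -- the limit is below every iterate (in quadratic form)
  have hLle : ∀ n x, (inner ℂ (L x) x : ℂ).re ≤ q n x := by
    intro n x
    refine le_of_tendsto (hqL x) (eventually_atTop.mpr ⟨n, fun m hm => hqanti x hm⟩)
  -- the parallel sums tend to zero in quadratic form
  have hptend : ∀ h, Tendsto (fun n => p n h) atTop (𝓝 0) := by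
    intro h
    obtain ⟨l, hl⟩ := hqconv h
    have h1 : Tendsto (fun n => q (n + 1) h) atTop (𝓝 l) :=
      hl.comp (tendsto_add_atTop_nat 1)
    have h2 : (fun n => p n h) = fun n => q n h - q (n + 1) h := by
      funext n; rw [hpq n h]; ring
    rw [h2]
    simpa using hl.sub h1
  refine ⟨claim1, L, hFL, hLpos, ContinuousLinearMap.isPositive_zero, ?_⟩
  intro h
  have hzero : (inner ℂ ((0 : H →L[ℂ] H) h) h : ℂ).re = 0 := by simp
  rw [hzero]
  constructor
  · rintro r ⟨u, v, huv, rfl⟩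
    have h1 := ((aux_isPositive_iff L).mp hLpos).2 u
    have h2 := ((aux_isPositive_iff G).mp hG).2 v
    linarith
  · intro b hb
    by_contra hb0
    push_neg at hb0
    -- find an element of the set smaller than b
    obtain ⟨n, hn⟩ := ((hptend h).eventually (gt_mem_nhds (by linarith : (0:ℝ) < b / 2))).exists
    obtain ⟨r, hrS, -, hrlt⟩ := ((hP n).2 h).exists_between
      (by linarith : p n h < p n h + b / 2)
    obtain ⟨u, v, huv, rfl⟩ := hrS
    have hs : (inner ℂ (L u) u : ℂ).re + (inner ℂ (G v) v : ℂ).re ∈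
        {r : ℝ | ∃ f g : H, f + g = h ∧
          r = (inner ℂ (L f) f : ℂ).re + (inner ℂ (G g) g : ℂ).re} :=
      ⟨u, v, huv, rfl⟩
    have h1 := hb hs
    have h2 : (inner ℂ (L u) u : ℂ).re ≤ q n u := hLle n u
    have h3 : (inner ℂ (L u) u : ℂ).re + (inner ℂ (G v) v : ℂ).re
        ≤ (inner ℂ (F n u) u : ℂ).re + (inner ℂ (G v) v : ℂ).re := by
      have : q n u = (inner ℂ (F n u) u : ℂ).re := rfl
      linarith [this ▸ h2]
    linarith
end

section
/- Let G, F_0 ∈ B^+(H) and let W̄ be the unique bounded contraction on H satisfying W̄ (G+F_0)^{1/2} f = F_0^{1/2} f for all f ∈ H and W̄ g = 0 for g ∈ ker(G+F_0). Then ran (I − W̄ W̄*)^{1/2} = { f ∈ H : F_0^{1/2} f ∈ ran G^{1/2} } = { f ∈ H : F_0^{1/2} f ∈ ran (F_0:G)^{1/2} }. -/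
open Filter Topology

variable {H : Type*} [NormedAddCommGroup H] [InnerProductSpace ℂ H] [CompleteSpace H]

section Aux

open ContinuousLinearMap Polynomial

/-- Range characterization: `x ∈ ran A` iff the functional `y ↦ ⟪x, y⟫` is bounded by the
seminorm `y ↦ ‖A† y‖`. -/
theorem StmtAux.mem_range_iff_bound (A : H →L[ℂ] H) (x : H) :
    x ∈ Set.range ⇑A ↔ ∃ c : ℝ, 0 ≤ c ∧ ∀ y : H, ‖(inner ℂ x y : ℂ)‖ ≤ c * ‖A.adjoint y‖ := by
  constructor
  · rintro ⟨u, rfl⟩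
    refine ⟨‖u‖, norm_nonneg u, fun y => ?_⟩
    have h1 : (inner ℂ (A u) y : ℂ) = inner ℂ u (A.adjoint y) := (adjoint_inner_right A u y).symm
    rw [h1]
    exact norm_inner_le_norm u (A.adjoint y)
  · rintro ⟨c, -, hc⟩
    have key : ∀ y y' : H, A.adjoint y = A.adjoint y' → (inner ℂ x y : ℂ) = inner ℂ x y' := by
      intro y y' h
      have h2 : ‖(inner ℂ x (y - y') : ℂ)‖ ≤ c * ‖A.adjoint (y - y')‖ := hc _
      rw [map_sub, h, sub_self, norm_zero, mul_zero] at h2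
      have h3 : (inner ℂ x (y - y') : ℂ) = 0 := norm_le_zero_iff.mp h2
      rw [inner_sub_right, sub_eq_zero] at h3
      exact h3
    set p : Submodule ℂ H := LinearMap.range (A.adjoint : H →ₗ[ℂ] H) with hp
    have mem_ex : ∀ z : p, ∃ y : H, A.adjoint y = (z : H) := fun z => z.2
    choose sec hsec using mem_ex
    have φwd : ∀ (z : p) (y : H), A.adjoint y = (z : H) → (inner ℂ x (sec z) : ℂ) = inner ℂ x y := by
      intro z y hy
      exact key _ _ ((hsec z).trans hy.symm)
    let φ₀ : p →ₗ[ℂ] ℂ :=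
      { toFun := fun z => inner ℂ x (sec z)
        map_add' := by
          intro z w
          have : A.adjoint (sec z + sec w) = ((z + w : p) : H) := by
            rw [map_add, hsec, hsec]; rfl
          show (inner ℂ x (sec (z + w)) : ℂ) = inner ℂ x (sec z) + inner ℂ x (sec w)
          rw [φwd _ _ this, inner_add_right]
        map_smul' := by
          intro m z
          have : A.adjoint (m • sec z) = ((m • z : p) : H) := by
            rw [map_smul, hsec]; rfl
          show (inner ℂ x (sec (m • z)) : ℂ) = m • inner ℂ x (sec z)
          rw [φwd _ _ this, inner_smul_right]
          rfl }
    have φ₀bound : ∀ z : p, ‖φ₀ z‖ ≤ c * ‖z‖ := by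
      intro z
      have := hc (sec z)
      rwa [hsec z] at this
    let φ : p →L[ℂ] ℂ := LinearMap.mkContinuous φ₀ c φ₀bound
    obtain ⟨g, hg, -⟩ := exists_extension_norm_eq p φ
    set w := (InnerProductSpace.toDual ℂ H).symm g with hw
    refine ⟨w, ?_⟩
    have hx : ∀ y : H, (inner ℂ (A w) y : ℂ) = inner ℂ x y := by
      intro y
      have h1 : (inner ℂ (A w) y : ℂ) = inner ℂ w (A.adjoint y) := (adjoint_inner_right A w y).symm
      have h2 : (inner ℂ w (A.adjoint y) : ℂ) = g (A.adjoint y) :=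
        InnerProductSpace.toDual_symm_apply
      have h3 : g (A.adjoint y) = φ ⟨A.adjoint y, LinearMap.mem_range_self _ y⟩ :=
        hg ⟨A.adjoint y, LinearMap.mem_range_self _ y⟩
      have h4 : φ (⟨A.adjoint y, LinearMap.mem_range_self _ y⟩ : p) = inner ℂ x y := by
        show φ₀ _ = _
        exact φwd _ y rfl
      rw [h1, h2, h3, h4]
    have h0 : A w - x = 0 := by
      rw [← inner_self_eq_zero (𝕜 := ℂ), inner_sub_left, hx (A w - x)]
      exact sub_self _
    exact sub_eq_zero.mp h0

theorem StmtAux.intertwine_pow (a b w : H →L[ℂ] H) (hw : w * a = b * w) (n : ℕ) :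
    w * a ^ n = b ^ n * w := by
  induction n with
  | zero => simp
  | succ n ih =>
    rw [pow_succ, ← mul_assoc, ih, mul_assoc, hw, ← mul_assoc, ← pow_succ]

theorem StmtAux.intertwine_aeval (a b w : H →L[ℂ] H) (hw : w * a = b * w) (q : ℝ[X]) :
    w * aeval a q = aeval b q * w := by
  induction q using Polynomial.induction_on' with
  | add p q hp hq => rw [map_add, map_add, mul_add, add_mul, hp, hq]
  | monomial n r =>
    rw [aeval_monomial, aeval_monomial, ← mul_assoc, ← Algebra.commutes r w, mul_assoc,
      StmtAux.intertwine_pow a b w hw n, ← mul_assoc]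

theorem StmtAux.intertwine_cfc (a b w : H →L[ℂ] H) (ha : IsSelfAdjoint a) (hb : IsSelfAdjoint b)
    (hw : w * a = b * w) (f : ℝ → ℝ) (hf : Continuous f) :
    w * cfc f a = cfc f b * w := by
  set M : ℝ := max ‖a‖ ‖b‖ * ‖(1 : H →L[ℂ] H)‖ with hM
  set s : Set ℝ := Set.Icc (-M) M with hs
  haveI : CompactSpace s := isCompact_iff_compactSpace.mp isCompact_Icc
  have hsub : ∀ (x : H →L[ℂ] H), ‖x‖ ≤ max ‖a‖ ‖b‖ → spectrum ℝ x ⊆ s := by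
    intro x hx t ht
    have h1 : ‖t‖ ≤ ‖x‖ * ‖(1 : H →L[ℂ] H)‖ := spectrum.norm_le_norm_mul_of_mem ht
    have h2 : ‖x‖ * ‖(1 : H →L[ℂ] H)‖ ≤ M := by
      rw [hM]
      exact mul_le_mul_of_nonneg_right hx (norm_nonneg _)
    rw [Real.norm_eq_abs, abs_le] at h1
    constructor <;> nlinarith [h1.1, h1.2]
  have hsa : spectrum ℝ a ⊆ s := hsub a (le_max_left _ _)
  have hsb : spectrum ℝ b ⊆ s := hsub b (le_max_right _ _)
  let ρa : C(spectrum ℝ a, s) := ⟨fun t => ⟨t.1, hsa t.2⟩,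
    Continuous.subtype_mk continuous_subtype_val _⟩
  let ρb : C(spectrum ℝ b, s) := ⟨fun t => ⟨t.1, hsb t.2⟩,
    Continuous.subtype_mk continuous_subtype_val _⟩
  let Φ₁ : C(s, ℝ) → (H →L[ℂ] H) := fun g => w * cfcL (R := ℝ) ha (g.comp ρa)
  let Φ₂ : C(s, ℝ) → (H →L[ℂ] H) := fun g => cfcL (R := ℝ) hb (g.comp ρb) * w
  have hΦ₁ : Continuous Φ₁ :=
    continuous_const.mul ((cfcL (R := ℝ) ha).continuous.comp (ContinuousMap.continuous_precomp ρa))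
  have hΦ₂ : Continuous Φ₂ :=
    (((cfcL (R := ℝ) hb).continuous.comp (ContinuousMap.continuous_precomp ρb))).mul
      continuous_const
  have hdense : Dense (polynomialFunctions s : Set C(s, ℝ)) := by
    have h1 := polynomialFunctions.topologicalClosure s
    rw [dense_iff_closure_eq, ← Subalgebra.topologicalClosure_coe, h1]
    rfl
  have key : ∀ (x : H →L[ℂ] H) (hx : IsSelfAdjoint x) (hsx : spectrum ℝ x ⊆ s)
      (ρ : C(spectrum ℝ x, s)) (hρ : ∀ t, (ρ t : ℝ) = t) (g : ℝ → ℝ) (hg : Continuous g)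
      (gs : C(s, ℝ)) (hgs : ∀ t : s, gs t = g t),
      cfcL (R := ℝ) hx (gs.comp ρ) = cfc g x := by
    intro x hx hsx ρ hρ g hg gs hgs
    rw [cfc_apply g x hx (hg.continuousOn)]
    show cfcHom hx _ = cfcHom hx _
    congr 1
    ext t
    show gs (ρ t) = g t.1
    rw [← hρ t]
    exact hgs (ρ t)
  have heq : Set.EqOn Φ₁ Φ₂ (polynomialFunctions s : Set C(s, ℝ)) := by
    intro g hg
    rw [SetLike.mem_coe, polynomialFunctions] at hg
    obtain ⟨q, hq0⟩ := hg
    have hq := hq0.2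
    have hq' : (Polynomial.toContinuousMapOnAlgHom s q : C(s, ℝ)) = g := hq
    have e1 : cfcL (R := ℝ) ha (g.comp ρa) = cfc (fun t => q.eval t) a := by
      refine key a ha hsa ρa (fun t => rfl) _ (Polynomial.continuous q) g (fun t => ?_)
      rw [← hq']; rfl
    have e2 : cfcL (R := ℝ) hb (g.comp ρb) = cfc (fun t => q.eval t) b := by
      refine key b hb hsb ρb (fun t => rfl) _ (Polynomial.continuous q) g (fun t => ?_)
      rw [← hq']; rfl
    show w * cfcL (R := ℝ) ha (g.comp ρa) = cfcL (R := ℝ) hb (g.comp ρb) * w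
    rw [e1, e2, show (fun t => q.eval t) = q.eval from rfl, cfc_polynomial q a,
      cfc_polynomial q b]
    exact StmtAux.intertwine_aeval a b w hw q
  have hext : Φ₁ = Φ₂ := Continuous.ext_on hdense hΦ₁ hΦ₂ heq
  have happ := congrFun hext ⟨fun t : s => f t, hf.comp continuous_subtype_val⟩
  show w * cfc f a = cfc f b * w
  calc w * cfc f a
      = Φ₁ ⟨fun t : s => f t, hf.comp continuous_subtype_val⟩ := by
        show _ = w * _
        rw [key a ha hsa ρa (fun t => rfl) f hf _ (fun t => rfl)]
    _ = Φ₂ ⟨fun t : s => f t, hf.comp continuous_subtype_val⟩ := happ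
    _ = cfc f b * w := by
        show _ * w = _
        rw [key b hb hsb ρb (fun t => rfl) f hf _ (fun t => rfl)]

/-- The square root of a nonnegative operator, via the continuous functional calculus. -/
noncomputable def StmtAux.msqrt (x : H →L[ℂ] H) : H →L[ℂ] H := cfc Real.sqrt x

theorem StmtAux.msqrt_nonneg (x : H →L[ℂ] H) : 0 ≤ StmtAux.msqrt x :=
  cfc_nonneg (fun t _ => Real.sqrt_nonneg t)

theorem StmtAux.msqrt_mul_self (x : H →L[ℂ] H) (hx : 0 ≤ x) :
    StmtAux.msqrt x * StmtAux.msqrt x = x := by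
  rw [StmtAux.msqrt, ← cfc_mul Real.sqrt Real.sqrt x]
  have h1 : Set.EqOn (fun t => Real.sqrt t * Real.sqrt t) id (spectrum ℝ x) := by
    intro t ht
    have := spectrum_nonneg_of_nonneg hx ht
    simp [Real.mul_self_sqrt this]
  rw [cfc_congr h1, cfc_id ℝ x]

theorem StmtAux.msqrt_unique {d x : H →L[ℂ] H} (hd : 0 ≤ d) (h : d * d = x) :
    StmtAux.msqrt x = d := by
  subst h
  have hsq : d * d = d ^ 2 := (sq d).symm
  rw [StmtAux.msqrt, hsq, ← cfc_comp_pow Real.sqrt 2 d (by fun_prop)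
    (IsSelfAdjoint.of_nonneg hd)]
  have h1 : Set.EqOn (fun t => Real.sqrt (t ^ 2)) id (spectrum ℝ d) := by
    intro t ht
    have := spectrum_nonneg_of_nonneg hd ht
    simp [Real.sqrt_sq this]
  rw [cfc_congr h1, cfc_id ℝ d]

theorem StmtAux.intertwine_msqrt (a b w : H →L[ℂ] H) (ha : 0 ≤ a) (hb : 0 ≤ b)
    (hw : w * a = b * w) : w * StmtAux.msqrt a = StmtAux.msqrt b * w :=
  StmtAux.intertwine_cfc a b w ha.isSelfAdjoint hb.isSelfAdjoint hw Real.sqrt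
    Real.continuous_sqrt

theorem StmtAux.re_inner_self (u : H) : (inner ℂ u u : ℂ).re = ‖u‖ ^ 2 := by
  have := inner_self_eq_norm_sq (𝕜 := ℂ) u
  simpa using this

theorem StmtAux.norm_eq_of_sq_eq {u v : H} (h : ‖u‖ ^ 2 = ‖v‖ ^ 2) : ‖u‖ = ‖v‖ := by
  have := congrArg Real.sqrt h
  rwa [Real.sqrt_sq (norm_nonneg u), Real.sqrt_sq (norm_nonneg v)] at this

end Aux
set_option maxHeartbeats 1000000 in
open ContinuousLinearMap in
/-- Proposition 2 of the paper. If `W` is the contraction determined by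
`W (G+F₀)^{1/2} f = F₀^{1/2} f` and `W = 0` on `ker (G+F₀)`, then
`ran (I - W W*)^{1/2} = {f : F₀^{1/2} f ∈ ran G^{1/2}} = {f : F₀^{1/2} f ∈ ran (F₀:G)^{1/2}}`. -/
theorem stmt4 (G F₀ S Sf0 Sg W D Par SPar : H →L[ℂ] H)
    (hG : G.IsPositive) (hF₀ : F₀.IsPositive)
    (hS : IsSqrtOf S (G + F₀)) (hSf0 : IsSqrtOf Sf0 F₀) (hSg : IsSqrtOf Sg G)
    (hWc : ‖W‖ ≤ 1)
    (hW1 : ∀ f : H, W (S f) = Sf0 f)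
    (hW2 : ∀ g : H, (G + F₀) g = 0 → W g = 0)
    (hD : IsSqrtOf D (1 - W * ContinuousLinearMap.adjoint W))
    (hPar : IsParallelSum F₀ G Par) (hSPar : IsSqrtOf SPar Par) :
    Set.range ⇑D = {f : H | Sf0 f ∈ Set.range ⇑Sg} ∧
    Set.range ⇑D = {f : H | Sf0 f ∈ Set.range ⇑SPar} := by
  obtain ⟨hSpos, hSsq⟩ := hS
  obtain ⟨hSf0pos, hSf0sq⟩ := hSf0
  obtain ⟨hSgpos, hSgsq⟩ := hSg
  obtain ⟨hDpos, hDsq⟩ := hD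
  obtain ⟨hSParpos, hSParsq⟩ := hSPar
  have hSsa : S.adjoint = S := isSelfAdjoint_iff'.mp hSpos.isSelfAdjoint
  have hSf0sa : Sf0.adjoint = Sf0 := isSelfAdjoint_iff'.mp hSf0pos.isSelfAdjoint
  have hSgsa : Sg.adjoint = Sg := isSelfAdjoint_iff'.mp hSgpos.isSelfAdjoint
  have hDsa : D.adjoint = D := isSelfAdjoint_iff'.mp hDpos.isSelfAdjoint
  have hSParsa : SPar.adjoint = SPar := isSelfAdjoint_iff'.mp hSParpos.isSelfAdjoint
  -- move a self-adjoint operator across the inner ℂ product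
  have sa : ∀ (T : H →L[ℂ] H), T.adjoint = T → ∀ u v : H,
      (inner ℂ (T u) v : ℂ) = inner ℂ u (T v) := by
    intro T hT u v
    conv_lhs => rw [← hT]
    exact adjoint_inner_left T v u
  have hWS : W * S = Sf0 := by
    ext x
    exact hW1 x
  have hSW : S * W.adjoint = Sf0 := by
    have h := congrArg ContinuousLinearMap.adjoint hWS
    rw [show W * S = W ∘L S from rfl, adjoint_comp, hSsa, hSf0sa] at h
    exact h
  have hkerW : ∀ k : H, S k = 0 → W k = 0 := by
    intro k hk
    apply hW2
    have h : (G + F₀) k = S (S k) := by rw [← hSsq]; rfl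
    rw [h, hk, map_zero]
  have hF0eq : F₀ = (S * W.adjoint) * (W * S) := by rw [hSW, hWS, hSf0sq]
  have hGeq : G = S * (1 - W.adjoint * W) * S := by
    have h1 : G = (G + F₀) - F₀ := by abel
    rw [h1, ← hSsq, hF0eq]
    noncomm_ring
  -- contraction estimates
  have hWn : ∀ v : H, ‖W v‖ ≤ ‖v‖ := fun v =>
    (W.le_opNorm v).trans (by nlinarith [norm_nonneg v])
  have hWdc : ‖W.adjoint‖ ≤ 1 := by
    have h : ‖W.adjoint‖ = ‖W‖ :=
      LinearIsometryEquiv.norm_map (ContinuousLinearMap.adjoint (E := H) (F := H)) W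
    rw [h]; exact hWc
  have hWdn : ∀ v : H, ‖W.adjoint v‖ ≤ ‖v‖ := fun v =>
    ((W.adjoint).le_opNorm v).trans (by nlinarith [norm_nonneg v])
  -- positivity of the defect operators
  have h1a0 : (0 : H →L[ℂ] H) ≤ 1 - W.adjoint * W := by
    rw [nonneg_iff_isPositive]
    constructor
    · rw [← star_eq_adjoint]
      exact ((IsSelfAdjoint.one _).sub (IsSelfAdjoint.star_mul_self W)).isSymmetric
    · intro x
      have h1 : (1 - W.adjoint * W) x = x - W.adjoint (W x) := rfl
      have h2 : (inner ℂ (W.adjoint (W x)) x : ℂ) = inner ℂ (W x) (W x) :=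
        adjoint_inner_left W x (W x)
      have h3 : ((1 - W.adjoint * W).reApplyInnerSelf x) = ‖x‖ ^ 2 - ‖W x‖ ^ 2 := by
        rw [reApplyInnerSelf_apply, h1, inner_sub_left, h2]
        simp [StmtAux.re_inner_self]
        rw [← Complex.ofReal_pow, ← Complex.ofReal_pow, Complex.ofReal_re, Complex.ofReal_re]
      rw [h3]
      nlinarith [hWn x, norm_nonneg x, norm_nonneg (W x)]
  have h1b0 : (0 : H →L[ℂ] H) ≤ 1 - W * W.adjoint := by
    rw [nonneg_iff_isPositive]
    constructor
    · rw [← star_eq_adjoint]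
      exact ((IsSelfAdjoint.one _).sub (IsSelfAdjoint.mul_star_self W)).isSymmetric
    · intro x
      have h1 : (1 - W * W.adjoint) x = x - W (W.adjoint x) := rfl
      have h2 : (inner ℂ (W (W.adjoint x)) x : ℂ) = inner ℂ (W.adjoint x) (W.adjoint x) := by
        have := adjoint_inner_left (W.adjoint) x (W.adjoint x)
        rwa [adjoint_adjoint] at this
      have h3 : ((1 - W * W.adjoint).reApplyInnerSelf x) = ‖x‖ ^ 2 - ‖W.adjoint x‖ ^ 2 := by
        rw [reApplyInnerSelf_apply, h1, inner_sub_left, h2]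
        simp [StmtAux.re_inner_self]
        rw [← Complex.ofReal_pow, ← Complex.ofReal_pow, Complex.ofReal_re, Complex.ofReal_re]
      rw [h3]
      nlinarith [hWdn x, norm_nonneg x, norm_nonneg (W.adjoint x)]
  -- the second defect operator
  set D' := StmtAux.msqrt (1 - W.adjoint * W) with hD'def
  have hD'0 : (0 : H →L[ℂ] H) ≤ D' := StmtAux.msqrt_nonneg _
  have hD'pos : D'.IsPositive := (nonneg_iff_isPositive _).mp hD'0
  have hD'sa : D'.adjoint = D' := isSelfAdjoint_iff'.mp hD'pos.isSelfAdjoint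
  have hD'sq : D' * D' = 1 - W.adjoint * W := StmtAux.msqrt_mul_self _ h1a0
  have hD0 : (0 : H →L[ℂ] H) ≤ D := (nonneg_iff_isPositive D).mpr hDpos
  have hWD' : W * D' = D * W := by
    rw [hD'def, ← StmtAux.msqrt_unique hD0 hDsq]
    exact StmtAux.intertwine_msqrt _ _ W h1a0 h1b0 (by noncomm_ring)
  have hD'W : D' * W.adjoint = W.adjoint * D := by
    have h := congrArg ContinuousLinearMap.adjoint hWD'
    rw [show W * D' = W ∘L D' from rfl, show D * W = D ∘L W from rfl, adjoint_comp,
      adjoint_comp, hD'sa, hDsa] at h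
    exact h
  -- pointwise seminorm identities
  have nG : ∀ y : H, ‖Sg y‖ = ‖D' (S y)‖ := by
    intro y
    apply StmtAux.norm_eq_of_sq_eq
    have c1 : (inner ℂ (G y) y : ℂ) = inner ℂ (Sg y) (Sg y) := by
      conv_lhs => rw [← hSgsq]
      exact sa Sg hSgsa (Sg y) y
    have c2 : (inner ℂ (G y) y : ℂ) = inner ℂ (D' (S y)) (D' (S y)) := by
      have hG2 : G = S * (D' * D') * S := by rw [hD'sq]; exact hGeq
      conv_lhs => rw [hG2]
      have h1 : (S * (D' * D') * S) y = S (D' (D' (S y))) := rfl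
      rw [h1, sa S hSsa (D' (D' (S y))) y]
      exact sa D' hD'sa (D' (S y)) (S y)
    rw [← StmtAux.re_inner_self, ← StmtAux.re_inner_self, ← c1, ← c2]
  have reF0 : ∀ f : H, (inner ℂ (F₀ f) f : ℂ).re = ‖W (S f)‖ ^ 2 := by
    intro f
    have c1 : (inner ℂ (F₀ f) f : ℂ) = inner ℂ (Sf0 f) (Sf0 f) := by
      conv_lhs => rw [← hSf0sq]
      exact sa Sf0 hSf0sa (Sf0 f) f
    rw [c1, StmtAux.re_inner_self, ← hW1 f]
  have reG : ∀ g : H, (inner ℂ (G g) g : ℂ).re = ‖D' (S g)‖ ^ 2 := by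
    intro g
    have c1 : (inner ℂ (G g) g : ℂ) = inner ℂ (Sg g) (Sg g) := by
      conv_lhs => rw [← hSgsq]
      exact sa Sg hSgsa (Sg g) g
    rw [c1, StmtAux.re_inner_self, nG g]
  have reCS : ∀ u v : H, (inner ℂ u v : ℂ).re ≤ ‖u‖ * ‖v‖ := by
    intro u v
    simpa using re_inner_le_norm (𝕜 := ℂ) u v
  have nsplit : ∀ x : H, ‖D x‖ ^ 2 + ‖W.adjoint x‖ ^ 2 = ‖x‖ ^ 2 := by
    intro x
    have e1 : (inner ℂ (D x) (D x) : ℂ) = inner ℂ ((D * D) x) x :=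
      (sa D hDsa (D x) x).symm
    have e2 : (inner ℂ (W.adjoint x) (W.adjoint x) : ℂ) = inner ℂ ((W * W.adjoint) x) x :=
      adjoint_inner_right W (W.adjoint x) x
    have e3 : (D * D) x + (W * W.adjoint) x = x := by
      rw [hDsq]
      show (x - (W * W.adjoint) x) + (W * W.adjoint) x = x
      abel
    rw [← StmtAux.re_inner_self (D x), ← StmtAux.re_inner_self (W.adjoint x),
      ← StmtAux.re_inner_self x, e1, e2, ← Complex.add_re, ← inner_add_left, e3]
  have hA1sa : (W.adjoint * W).adjoint = W.adjoint * W := by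
    rw [show W.adjoint * W = W.adjoint ∘L W from rfl, adjoint_comp, adjoint_adjoint]
  have parval : ∀ h0 : H, (inner ℂ (Par h0) h0 : ℂ).re = ‖D (W (S h0))‖ ^ 2 := by
    intro h0
    refine IsGLB.unique (hPar.2 h0) ?_
    constructor
    · rintro r ⟨f, g, hfg, rfl⟩
      rw [reF0 f, reG g]
      set x := D (W (S h0)) with hx
      have hsplit : x = D (W (S f)) + D (W (S g)) := by
        rw [hx, ← hfg]
        simp [map_add]
      have t1 : (inner ℂ (D (W (S f))) x : ℂ).re ≤ ‖W (S f)‖ * ‖D x‖ := by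
        rw [sa D hDsa (W (S f)) x]
        exact reCS _ _
      have t2 : (inner ℂ (D (W (S g))) x : ℂ).re ≤ ‖D' (S g)‖ * ‖W.adjoint x‖ := by
        have e : D (W (S g)) = W (D' (S g)) := (ContinuousLinearMap.ext_iff.mp hWD' (S g)).symm
        rw [e, ← adjoint_inner_right W (D' (S g)) x]
        exact reCS _ _
      have et : ‖x‖ ^ 2 = (inner ℂ (D (W (S f))) x : ℂ).re + (inner ℂ (D (W (S g))) x : ℂ).re := by
        have h5 : (inner ℂ x x : ℂ) = inner ℂ (D (W (S f))) x + inner ℂ (D (W (S g))) x := by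
          nth_rewrite 1 [hsplit]
          rw [inner_add_left]
        rw [← StmtAux.re_inner_self x, h5, Complex.add_re]
      have en : ‖D x‖ ^ 2 + ‖W.adjoint x‖ ^ 2 = ‖x‖ ^ 2 := nsplit x
      have hub : ‖x‖ ^ 2 ≤ ‖W (S f)‖ * ‖D x‖ + ‖D' (S g)‖ * ‖W.adjoint x‖ := by
        rw [et]; exact add_le_add t1 t2
      have hcs : (‖W (S f)‖ * ‖D x‖ + ‖D' (S g)‖ * ‖W.adjoint x‖) ^ 2 ≤
          (‖W (S f)‖ ^ 2 + ‖D' (S g)‖ ^ 2) * (‖D x‖ ^ 2 + ‖W.adjoint x‖ ^ 2) := by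
        nlinarith [sq_nonneg (‖W (S f)‖ * ‖W.adjoint x‖ - ‖D' (S g)‖ * ‖D x‖)]
      rw [en] at hcs
      rcases eq_or_ne (‖x‖) 0 with h0x | h0x
      · rw [h0x]
        nlinarith [sq_nonneg ‖W (S f)‖, sq_nonneg ‖D' (S g)‖]
      · have hx2 : (0:ℝ) < ‖x‖ ^ 2 := by positivity
        have h6 : ‖x‖ ^ 2 * ‖x‖ ^ 2 ≤ (‖W (S f)‖ * ‖D x‖ + ‖D' (S g)‖ * ‖W.adjoint x‖) ^ 2 := by
          have := pow_le_pow_left₀ (by positivity) hub 2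
          calc ‖x‖ ^ 2 * ‖x‖ ^ 2 = (‖x‖ ^ 2) ^ 2 := by ring
            _ ≤ _ := this
        have h7 : ‖x‖ ^ 2 * ‖x‖ ^ 2 ≤ (‖W (S f)‖ ^ 2 + ‖D' (S g)‖ ^ 2) * ‖x‖ ^ 2 :=
          le_trans h6 hcs
        exact le_of_mul_le_mul_right (by linarith) hx2
    · intro b hb
      set z := S h0 - W.adjoint (W (S h0)) with hz
      set K : Submodule ℂ H := LinearMap.range (S : H →ₗ[ℂ] H) with hK
      have hzmem : z ∈ Kᗮᗮ := by
        rw [Submodule.mem_orthogonal]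
        intro u hu
        have hSu : S u = 0 := by
          have h7 : (inner ℂ (S (S u)) u : ℂ) = 0 := hu (S (S u)) (LinearMap.mem_range_self (S : H →ₗ[ℂ] H) (S u))
          rw [sa S hSsa (S u) u] at h7
          exact inner_self_eq_zero.mp h7
        have hWu : W u = 0 := hkerW u hSu
        rw [hz, inner_sub_right,
          show (inner ℂ u (S h0) : ℂ) = inner ℂ (S u) h0 from (sa S hSsa u h0).symm,
          show (inner ℂ u (W.adjoint (W (S h0))) : ℂ) = inner ℂ (W u) (W (S h0)) from
            adjoint_inner_right W u (W (S h0)), hSu, hWu]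
        simp
      have hzc : z ∈ closure (Set.range ⇑S) := by
        have h8 : z ∈ K.topologicalClosure := by
          rw [← Submodule.orthogonal_orthogonal_eq_closure]
          exact hzmem
        have h9 : (K.topologicalClosure : Set H) = closure (K : Set H) :=
          Submodule.topologicalClosure_coe K
        have h10 : (K : Set H) = Set.range ⇑S := LinearMap.coe_range (S : H →ₗ[ℂ] H)
        have h11 : z ∈ (K.topologicalClosure : Set H) := h8
        rw [h9, h10] at h11
        exact h11
      rw [mem_closure_iff_seq_limit] at hzc
      obtain ⟨u, humem, hulim⟩ := hzc
      choose fs hfs using humem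
      have hvals : ∀ n, b ≤ ‖W (u n)‖ ^ 2 + ‖D' (S h0 - u n)‖ ^ 2 := by
        intro n
        refine hb ⟨fs n, h0 - fs n, by abel, ?_⟩
        rw [reF0, reG, hfs n, show S (h0 - fs n) = S h0 - u n from by rw [map_sub, hfs n]]
      have hcont : Continuous fun y : H => ‖W y‖ ^ 2 + ‖D' (S h0 - y)‖ ^ 2 := by
        apply Continuous.add
        · exact (continuous_norm.comp W.continuous).pow 2
        · exact (continuous_norm.comp (D'.continuous.comp
            (continuous_const.sub continuous_id))).pow 2
      have hlim : Tendsto (fun n => ‖W (u n)‖ ^ 2 + ‖D' (S h0 - u n)‖ ^ 2) atTop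
          (𝓝 (‖W z‖ ^ 2 + ‖D' (S h0 - z)‖ ^ 2)) := (hcont.tendsto z).comp hulim
      have hbound : b ≤ ‖W z‖ ^ 2 + ‖D' (S h0 - z)‖ ^ 2 := ge_of_tendsto' hlim hvals
      -- the algebraic identity for the limit value
      have hfinal : ‖W z‖ ^ 2 + ‖D' (S h0 - z)‖ ^ 2 = ‖D (W (S h0))‖ ^ 2 := by
        set u₀ := S h0 with hu₀
        set A1 := W.adjoint * W with hA1
        have hzz : z = u₀ - A1 u₀ := rfl
        have hSz : S h0 - z = A1 u₀ := by rw [hzz, hu₀]; abel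
        have gW : ∀ a c : H, (inner ℂ (W a) (W c) : ℂ) = inner ℂ (A1 a) c := by
          intro a c
          exact (adjoint_inner_left W c (W a)).symm
        have e_q : (inner ℂ (A1 (A1 u₀)) u₀ : ℂ) = inner ℂ (A1 u₀) (A1 u₀) :=
          sa A1 hA1sa (A1 u₀) u₀
        have n2 : ∀ v : H, ‖D' v‖ ^ 2 = (inner ℂ v v : ℂ).re - (inner ℂ (A1 v) v : ℂ).re := by
          intro v
          have h12 : (inner ℂ (D' v) (D' v) : ℂ) = inner ℂ ((D' * D') v) v :=
            (sa D' hD'sa (D' v) v).symm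
          have h13 : (D' * D') v = v - A1 v := by rw [hD'sq]; rfl
          rw [← StmtAux.re_inner_self (D' v), h12, h13, inner_sub_left, Complex.sub_re]
        have n1 : ‖W z‖ ^ 2 = (inner ℂ (A1 z) z : ℂ).re := by
          rw [← StmtAux.re_inner_self (W z), gW z z]
        have nR : ‖D (W u₀)‖ ^ 2 =
            (inner ℂ (A1 u₀) u₀ : ℂ).re - (inner ℂ (A1 (A1 u₀)) u₀ : ℂ).re := by
          have h14 : (inner ℂ (D (W u₀)) (D (W u₀)) : ℂ) = inner ℂ ((D * D) (W u₀)) (W u₀) :=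
            (sa D hDsa (D (W u₀)) (W u₀)).symm
          have h15 : (D * D) (W u₀) = W u₀ - W (A1 u₀) := by rw [hDsq]; rfl
          rw [← StmtAux.re_inner_self (D (W u₀)), h14, h15, inner_sub_left, Complex.sub_re,
            gW u₀ u₀, gW (A1 u₀) u₀]
        have expand : (inner ℂ (A1 z) z : ℂ) =
            inner ℂ (A1 u₀) u₀ - inner ℂ (A1 u₀) (A1 u₀) - inner ℂ (A1 (A1 u₀)) u₀ +
              inner ℂ (A1 (A1 u₀)) (A1 u₀) := by
          rw [hzz, map_sub, inner_sub_left, inner_sub_right, inner_sub_right]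
          ring
        rw [n1, n2 (S h0 - z), hSz, expand, nR]
        simp only [Complex.add_re, Complex.sub_re]
        have e_r : (inner ℂ (A1 (A1 u₀)) (A1 u₀) : ℂ).re = (inner ℂ (A1 (A1 u₀)) (A1 u₀) : ℂ).re :=
          rfl
        rw [e_q]
        ring
      linarith [hbound, hfinal]
  have nPar : ∀ y : H, ‖SPar y‖ = ‖D (W (S y))‖ := by
    intro y
    apply StmtAux.norm_eq_of_sq_eq
    have c1 : (inner ℂ (Par y) y : ℂ) = inner ℂ (SPar y) (SPar y) := by
      conv_lhs => rw [← hSParsq]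
      exact sa SPar hSParsa (SPar y) y
    rw [← StmtAux.re_inner_self (SPar y), ← c1, parval y]
  -- main backward implication: Sf0 f ∈ ran Sg → f ∈ ran D
  have key_back : ∀ f : H, Sf0 f ∈ Set.range ⇑Sg → f ∈ Set.range ⇑D := by
    intro f hf
    have hSD'adj : (S * D').adjoint = D' * S := by
      rw [show S * D' = S ∘L D' from rfl, adjoint_comp, hSsa, hD'sa]
      rfl
    have h1 : Sf0 f ∈ Set.range ⇑(S * D') := by
      rw [StmtAux.mem_range_iff_bound]
      obtain ⟨c, hc0, hc⟩ := (StmtAux.mem_range_iff_bound Sg (Sf0 f)).mp hf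
      refine ⟨c, hc0, fun y => ?_⟩
      have h2 := hc y
      rw [hSgsa] at h2
      rw [hSD'adj, show (D' * S) y = D' (S y) from rfl, ← nG y]
      exact h2
    obtain ⟨v, hv⟩ := h1
    have hSf0f : Sf0 f = S (W.adjoint f) := by rw [← hSW]; rfl
    have hv' : S (D' v) = S (W.adjoint f) := by
      rw [← hSf0f, ← hv]
      rfl
    set k := W.adjoint f - D' v with hk
    have hSk : S k = 0 := by rw [hk, map_sub, hv', sub_self]
    have hWk : W k = 0 := hkerW k hSk
    have hD'k : D' k = k := by
      have hsq : D' (D' k) = k := by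
        have h3 : (D' * D') k = k := by
          rw [hD'sq]
          show k - W.adjoint (W k) = k
          rw [hWk, map_zero, sub_zero]
        exact h3
      set m := D' k - k with hm
      have hDm : D' m = -m := by
        rw [hm, map_sub, hsq]
        abel
      have hre : (inner ℂ (D' m) m : ℂ).re = -(‖m‖ ^ 2) := by
        rw [hDm, inner_neg_left]
        simp [StmtAux.re_inner_self]
        rw [← Complex.ofReal_pow, Complex.ofReal_re]
      have hre' : (0:ℝ) ≤ (inner ℂ (D' m) m : ℂ).re := by
        exact hD'pos.re_inner_nonneg_left m
      have hsq0 : ‖m‖ ^ 2 = 0 := le_antisymm (by linarith) (sq_nonneg _)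
      have hm0 : m = 0 := norm_eq_zero.mp ((pow_eq_zero_iff (two_ne_zero)).mp hsq0)
      rw [hm] at hm0
      exact sub_eq_zero.mp hm0
    have hWdf : W.adjoint f = D' (v + k) := by
      rw [map_add, hD'k, hk]
      abel
    refine ⟨D f + W (v + k), ?_⟩
    rw [map_add]
    have e1 : D (W (v + k)) = W (D' (v + k)) := (ContinuousLinearMap.ext_iff.mp hWD' (v + k)).symm
    rw [e1, ← hWdf]
    have e2 : D (D f) = f - W (W.adjoint f) := by
      have h4 : (D * D) f = (1 - W * W.adjoint) f := by rw [hDsq]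
      simpa using h4
    rw [e2]
    abel
  have fwd1 : ∀ f : H, f ∈ Set.range ⇑D → Sf0 f ∈ Set.range ⇑Sg := by
    rintro f ⟨u, rfl⟩
    rw [StmtAux.mem_range_iff_bound]
    refine ⟨‖W.adjoint u‖, norm_nonneg _, fun y => ?_⟩
    rw [hSgsa]
    have e1 : Sf0 (D u) = S (D' (W.adjoint u)) := by
      have h1 : Sf0 (D u) = S (W.adjoint (D u)) := by rw [← hSW]; rfl
      have h2 : W.adjoint (D u) = D' (W.adjoint u) :=
        (ContinuousLinearMap.ext_iff.mp hD'W u).symm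
      rw [h1, h2]
    rw [e1, sa S hSsa _ y, sa D' hD'sa _ (S y)]
    calc ‖(inner ℂ (W.adjoint u) (D' (S y)) : ℂ)‖ ≤ ‖W.adjoint u‖ * ‖D' (S y)‖ :=
          norm_inner_le_norm _ _
      _ = ‖W.adjoint u‖ * ‖Sg y‖ := by rw [nG y]
  have fwd2 : ∀ f : H, f ∈ Set.range ⇑D → Sf0 f ∈ Set.range ⇑SPar := by
    rintro f ⟨u, rfl⟩
    rw [StmtAux.mem_range_iff_bound]
    refine ⟨‖u‖, norm_nonneg _, fun y => ?_⟩
    rw [hSParsa, nPar y]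
    have e1 : Sf0 (D u) = S (W.adjoint (D u)) := by rw [← hSW]; rfl
    rw [e1, sa S hSsa _ y,
      show (inner ℂ (W.adjoint (D u)) (S y) : ℂ) = inner ℂ (D u) (W (S y)) from
        adjoint_inner_left W (S y) (D u),
      sa D hDsa u (W (S y))]
    exact norm_inner_le_norm _ _
  have back2 : ∀ f : H, Sf0 f ∈ Set.range ⇑SPar → Sf0 f ∈ Set.range ⇑Sg := by
    intro f hf
    obtain ⟨c, hc0, hc⟩ := (StmtAux.mem_range_iff_bound SPar (Sf0 f)).mp hf
    rw [StmtAux.mem_range_iff_bound]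
    refine ⟨c, hc0, fun y => ?_⟩
    have h2 := hc y
    rw [hSParsa, nPar y] at h2
    rw [hSgsa, nG y]
    have e1 : D (W (S y)) = W (D' (S y)) := (ContinuousLinearMap.ext_iff.mp hWD' (S y)).symm
    rw [e1] at h2
    exact h2.trans (mul_le_mul_of_nonneg_left (hWn _) hc0)
  constructor
  · ext f
    simp only [Set.mem_setOf_eq]
    exact ⟨fwd1 f, key_back f⟩
  · ext f
    simp only [Set.mem_setOf_eq]
    exact ⟨fwd2 f, fun h => key_back f (back2 f h)⟩
end

section
/- Let G, F_0 ∈ B^+(H) commute (F_0 G = G F_0), and let F = τ_G(F_0). Then F = F_0^{1/2} P_N F_0^{1/2}, where N = ker G ∩ closure(ran F_0) and P_N is the orthogonal projection onto N. In particular: (1) if ker G ⊆ ker F_0 then F = 0; (2) if F_0 = G then F = 0; (3) if ker G = {0} then F = 0. -/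
open Filter Topology

variable {H : Type*} [NormedAddCommGroup H] [InnerProductSpace ℂ H] [CompleteSpace H]

set_option synthInstance.maxHeartbeats 1000000
set_option maxHeartbeats 2000000

set_option linter.unusedSectionVars false
open scoped NNReal
namespace Stmt7Aux

open ContinuousLinearMap Complex

noncomputable section

variable {H : Type*} [NormedAddCommGroup H] [InnerProductSpace ℂ H] [CompleteSpace H]

local notation "⟪" x ", " y "⟫" => (inner ℂ x y : ℂ)

/-- The real quadratic form of an operator. -/
abbrev qf (T : H →L[ℂ] H) (x : H) : ℝ := (inner ℂ (T x) x : ℂ).re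

lemma sym {T : H →L[ℂ] H} (hT : IsSelfAdjoint T) (x y : H) : ⟪T x, y⟫ = ⟪x, T y⟫ :=
  (ContinuousLinearMap.isSelfAdjoint_iff_isSymmetric.mp hT) x y

lemma re_conj (x y : H) : (⟪x, y⟫).re = (⟪y, x⟫).re := by
  rw [← inner_conj_symm y x]; exact Complex.conj_re _

lemma re_sym {T : H →L[ℂ] H} (hT : IsSelfAdjoint T) (x y : H) :
    (⟪T x, y⟫).re = (⟪T y, x⟫).re := by
  rw [sym hT x y, re_conj]

lemma re_inner_self (x : H) : (⟪x, x⟫).re = ‖x‖ ^ 2 := by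
  rw [@inner_self_eq_norm_sq_to_K ℂ]
  norm_cast

lemma inner_real {T : H →L[ℂ] H} (hT : IsSelfAdjoint T) (x : H) :
    (inner ℂ (T x) x : ℂ) = (((inner ℂ (T x) x : ℂ).re : ℝ) : ℂ) := by
  have h1 : (starRingEnd ℂ) (inner ℂ (T x) x : ℂ) = (inner ℂ (T x) x : ℂ) := by
    rw [inner_conj_symm]
    exact (sym hT x x).symm
  exact (Complex.conj_eq_iff_re.mp h1).symm

lemma qf_nonneg {T : H →L[ℂ] H} (hT : T.IsPositive) (x : H) : 0 ≤ qf T x := by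
  have := hT.2 x
  simpa [ContinuousLinearMap.reApplyInnerSelf, RCLike.re_to_complex] using this

lemma qf_zero (T : H →L[ℂ] H) : qf T 0 = 0 := by simp [qf]

lemma reApply_eq (T : H →L[ℂ] H) (x : H) : T.reApplyInnerSelf x = qf T x := by
  rw [ContinuousLinearMap.reApplyInnerSelf, RCLike.re_to_complex]

lemma qf_sub_apply (X Y : H →L[ℂ] H) (x : H) : qf (X - Y) x = qf X x - qf Y x := by
  simp [qf, ContinuousLinearMap.sub_apply, inner_sub_left]

lemma qf_add_expand {T : H →L[ℂ] H} (hT : IsSelfAdjoint T) (x y : H) :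
    qf T (x + y) = qf T x + 2 * (⟪T x, y⟫).re + qf T y := by
  have h1 : T (x + y) = T x + T y := map_add T x y
  have h2 : (⟪T y, x⟫).re = (⟪T x, y⟫).re := re_sym hT y x
  simp only [qf, h1, inner_add_left, inner_add_right, Complex.add_re]
  ring_nf
  linarith

lemma qf_neg (T : H →L[ℂ] H) (y : H) : qf T (-y) = qf T y := by
  simp [qf, inner_neg_left, inner_neg_right]

lemma qf_sub_expand {T : H →L[ℂ] H} (hT : IsSelfAdjoint T) (x y : H) :
    qf T (x - y) = qf T x - 2 * (⟪T x, y⟫).re + qf T y := by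
  have := qf_add_expand hT x (-y)
  rw [qf_neg] at this
  simpa [inner_neg_right, sub_eq_add_neg] using this

/-- Cauchy–Schwarz for the semidefinite form of a positive operator. -/
lemma cs {T : H →L[ℂ] H} (hT : T.IsPositive) (x y : H) :
    (⟪T x, y⟫).re ^ 2 ≤ qf T x * qf T y := by
  have key : ∀ t : ℝ, 0 ≤ qf T x * (t * t) + (2 * (⟪T x, y⟫).re) * t + qf T y := by
    intro t
    have h0 : 0 ≤ qf T ((t : ℂ) • x + y) := qf_nonneg hT _
    have h1 : qf T ((t : ℂ) • x + y)
        = qf T x * (t * t) + (2 * (⟪T x, y⟫).re) * t + qf T y := by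
      have h2 : qf T ((t:ℂ) • x) = t * t * qf T x := by
        have hinner : (⟪T ((t:ℂ) • x), (t:ℂ) • x⟫) = (t:ℂ) * ((t:ℂ) * ⟪T x, x⟫) := by
          rw [map_smul, inner_smul_left, inner_smul_right, Complex.conj_ofReal]
        rw [qf, hinner, Complex.re_ofReal_mul, Complex.re_ofReal_mul]
        ring
      have h3 : (⟪T ((t:ℂ) • x), y⟫).re = t * (⟪T x, y⟫).re := by
        simp only [map_smul, inner_smul_left, Complex.conj_ofReal]
        rw [Complex.re_ofReal_mul]
      rw [qf_add_expand hT.isSelfAdjoint, h2, h3]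
      ring
    linarith [h0, h1.symm.le]
  have hd := discrim_le_zero key
  simp only [discrim] at hd
  nlinarith [hd]

lemma apply_eq_zero {T : H →L[ℂ] H} (hT : T.IsPositive) {x : H} (hx : qf T x = 0) :
    T x = 0 := by
  have h1 := cs hT x (T x)
  rw [hx, zero_mul] at h1
  have h2 : (⟪T x, T x⟫).re = ‖T x‖ ^ 2 := re_inner_self (T x)
  have h3 : ‖T x‖ ^ 2 ≤ 0 := by nlinarith [norm_nonneg (T x)]
  have : ‖T x‖ = 0 := by nlinarith [norm_nonneg (T x)]
  exact norm_eq_zero.mp this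

lemma qf_bound {T : H →L[ℂ] H} (x : H) : qf T x ≤ ‖T‖ * ‖x‖ ^ 2 := by
  have h1 : (⟪T x, x⟫).re ≤ ‖⟪T x, x⟫‖ := by
    exact Complex.re_le_norm _
  have h2 : ‖⟪T x, x⟫‖ ≤ ‖T x‖ * ‖x‖ := norm_inner_le_norm _ _
  have h3 : ‖T x‖ ≤ ‖T‖ * ‖x‖ := T.le_opNorm x
  nlinarith [norm_nonneg x, norm_nonneg (T x)]

/-- triangle inequality in the `T`-seminorm. -/
lemma tri {T : H →L[ℂ] H} (hT : T.IsPositive) (x y : H) :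
    Real.sqrt (qf T (x + y)) ≤ Real.sqrt (qf T x) + Real.sqrt (qf T y) := by
  have hx := qf_nonneg hT x
  have hy := qf_nonneg hT y
  have hcs : (⟪T x, y⟫).re ≤ Real.sqrt (qf T x) * Real.sqrt (qf T y) := by
    have h1 := cs hT x y
    have h2 : (⟪T x, y⟫).re ≤ |(⟪T x, y⟫).re| := le_abs_self _
    have h3 : |(⟪T x, y⟫).re| = Real.sqrt ((⟪T x, y⟫).re ^ 2) := (Real.sqrt_sq_eq_abs _).symm
    have h4 : Real.sqrt ((⟪T x, y⟫).re ^ 2) ≤ Real.sqrt (qf T x * qf T y) :=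
      Real.sqrt_le_sqrt h1
    rw [Real.sqrt_mul hx] at h4
    linarith
  have hexp := qf_add_expand hT.isSelfAdjoint x y
  have h5 : qf T (x + y) ≤ (Real.sqrt (qf T x) + Real.sqrt (qf T y)) ^ 2 := by
    have sx : Real.sqrt (qf T x) ^ 2 = qf T x := Real.sq_sqrt hx
    have sy : Real.sqrt (qf T y) ^ 2 = qf T y := Real.sq_sqrt hy
    nlinarith [hcs]
  calc Real.sqrt (qf T (x + y)) ≤ Real.sqrt ((Real.sqrt (qf T x) + Real.sqrt (qf T y)) ^ 2) :=
        Real.sqrt_le_sqrt h5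
    _ = Real.sqrt (qf T x) + Real.sqrt (qf T y) := by
        rw [Real.sqrt_sq (by positivity)]

end
end Stmt7Aux

namespace Stmt7Aux

open ContinuousLinearMap Complex

noncomputable section

variable {H : Type*} [NormedAddCommGroup H] [InnerProductSpace ℂ H] [CompleteSpace H]

local notation "⟪" x ", " y "⟫" => (inner ℂ x y : ℂ)

/-- Anything commuting with a selfadjoint `a` commutes with `cfc f a`. -/
lemma commute_cfc {a b : H →L[ℂ] H} (ha : IsSelfAdjoint a) (hab : Commute a b) (f : ℝ → ℝ) :
    Commute (cfc f a) b := by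
  by_cases hf : ContinuousOn f (spectrum ℝ a)
  · have key : ∀ g : C(spectrum ℝ a, ℝ), Commute (cfcHom ha g) b := by
      have hC : IsClosed {x : H →L[ℂ] H | x ∈ Subalgebra.centralizer ℝ ({b} : Set (H →L[ℂ] H))} := by
        have : {x : H →L[ℂ] H | x ∈ Subalgebra.centralizer ℝ ({b} : Set (H →L[ℂ] H))}
            = {x : H →L[ℂ] H | b * x = x * b} := by
          ext x
          simp [Subalgebra.mem_centralizer_iff]
        rw [this]
        exact isClosed_eq (continuous_mul_left b) (continuous_mul_right b)
      set S : Subalgebra ℝ C(spectrum ℝ a, ℝ) :=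
        (Subalgebra.centralizer ℝ ({b} : Set (H →L[ℂ] H))).comap (cfcHom ha (R := ℝ)).toAlgHom
        with hS
      have hSclosed : IsClosed (S : Set C(spectrum ℝ a, ℝ)) :=
        hC.preimage (cfcHom_isClosedEmbedding ha).continuous
      have hid : (ContinuousMap.id ℝ).restrict (spectrum ℝ a) ∈ S := by
        rw [hS]
        simp only [Subalgebra.mem_comap, StarAlgHom.coe_toAlgHom]
        rw [cfcHom_id ha]
        rw [Subalgebra.mem_centralizer_iff]
        rintro y rfl
        exact hab.symm
      have hsep : S.SeparatesPoints := by
        rintro x y hxy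
        refine ⟨_, ⟨(ContinuousMap.id ℝ).restrict (spectrum ℝ a), hid, rfl⟩, ?_⟩
        simpa [ContinuousMap.restrict] using fun h => hxy (Subtype.ext h)
      have htop : S = ⊤ := by
        have h1 := ContinuousMap.subalgebra_topologicalClosure_eq_top_of_separatesPoints S hsep
        have h2 : S.topologicalClosure ≤ S := Subalgebra.topologicalClosure_minimal le_rfl hSclosed
        exact top_le_iff.mp (h1 ▸ h2)
      intro g
      have hg : g ∈ S := htop ▸ Algebra.mem_top
      rw [hS, Subalgebra.mem_comap, StarAlgHom.coe_toAlgHom, Subalgebra.mem_centralizer_iff] at hg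
      exact (hg b rfl).symm
    rw [cfc_apply f a ha hf]
    exact key _
  · rw [cfc_apply_of_not_continuousOn a hf]
    exact Commute.zero_left b

lemma sqrt_commute {X B : H →L[ℂ] H} (hX : X.IsPositive) (hc : Commute X B) :
    Commute (CFC.sqrt X) B := by
  have h0 : (0 : H →L[ℂ] H) ≤ X := (ContinuousLinearMap.nonneg_iff_isPositive X).mpr hX
  rw [CFC.sqrt_eq_cfc (a := X), cfc_nnreal_eq_real NNReal.sqrt X h0]
  exact commute_cfc (IsSelfAdjoint.of_nonneg h0) hc _

/-- The product of two commuting positive operators is positive. -/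
lemma mul_isPositive {X Y : H →L[ℂ] H} (hX : X.IsPositive) (hY : Y.IsPositive)
    (hc : Commute X Y) : (X * Y).IsPositive := by
  have h0 : (0 : H →L[ℂ] H) ≤ X := (ContinuousLinearMap.nonneg_iff_isPositive X).mpr hX
  set S := CFC.sqrt X with hSdef
  have hS0 : (0 : H →L[ℂ] H) ≤ S := CFC.sqrt_nonneg X
  have hSpos : S.IsPositive := (ContinuousLinearMap.nonneg_iff_isPositive S).mp hS0
  have hSS : S * S = X := CFC.sqrt_mul_sqrt_self X h0
  have hSY : Commute S Y := sqrt_commute hX hc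
  constructor
  · have h1 : star (X * Y) = Y * X := by
      rw [star_mul, hX.isSelfAdjoint.star_eq, hY.isSelfAdjoint.star_eq]
    exact isSelfAdjoint_iff_isSymmetric.mp (h1.trans hc.eq.symm)
  · intro x
    have hrw : X * Y = S * (Y * S) := by
      rw [← hSS, mul_assoc, hSY.eq]
    have happ : (X * Y) x = S ((Y * S) x) := by
      rw [hrw]; exact ContinuousLinearMap.mul_apply _ _ _
    have h2 : (X * Y).reApplyInnerSelf x = (⟪(Y * S) x, S x⟫).re := by
      have : (X * Y).reApplyInnerSelf x = (⟪(X * Y) x, x⟫).re := by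
        simp [ContinuousLinearMap.reApplyInnerSelf, RCLike.re_to_complex]
      rw [this, happ, sym hSpos.isSelfAdjoint ((Y * S) x) x]
    rw [h2]
    have h4 : (Y * S) x = Y (S x) := ContinuousLinearMap.mul_apply _ _ _
    rw [h4]
    exact qf_nonneg hY (S x)

lemma smul_isPositive {X : H →L[ℂ] H} (hX : X.IsPositive) {c : ℝ} (hc : 0 ≤ c) :
    (c • X).IsPositive := by
  constructor
  · have h := hX.isSelfAdjoint
    rw [ContinuousLinearMap.isSelfAdjoint_iff_isSymmetric] at h
    intro x y
    have hx : (c • X) x = (c:ℂ) • (X x) := rfl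
    have hy : (c • X) y = (c:ℂ) • (X y) := rfl
    have hc' := h x y
    simp only [ContinuousLinearMap.coe_coe] at hc' ⊢
    rw [hx, hy, inner_smul_left, inner_smul_right, Complex.conj_ofReal, hc']
  · intro x
    have : (c • X).reApplyInnerSelf x = c * qf X x := by
      rw [ContinuousLinearMap.reApplyInnerSelf]
      have : (inner ℂ ((c • X) x) x : ℂ) = (c : ℂ) * ⟪X x, x⟫ := by
        rw [ContinuousLinearMap.smul_apply]
        rw [show c • X x = (c : ℂ) • X x from (Complex.coe_smul c (X x)).symm]
        rw [inner_smul_left, Complex.conj_ofReal]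
      rw [this]
      simp [RCLike.re_to_complex, Complex.re_ofReal_mul]
    rw [this]
    exact mul_nonneg hc (qf_nonneg hX x)

/-- inverse package predicate. -/
def IsInvPack (B R : H →L[ℂ] H) : Prop :=
  B * R = 1 ∧ R * B = 1 ∧ R.IsPositive ∧ ∀ b, Commute b B → Commute b R

lemma invpack_comm_lemma {B R b : H →L[ℂ] H} (h1 : B * R = 1) (h2 : R * B = 1)
    (hb : Commute b B) : Commute b R := by
  have step1 : R * B * b * R = b * R := by rw [h2, one_mul]
  calc b * R = R * B * b * R := step1.symm
    _ = R * (B * b) * R := by rw [mul_assoc R B b]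
    _ = R * (b * B) * R := by rw [← hb.eq]
    _ = R * b * (B * R) := by noncomm_ring
    _ = R * b := by rw [h1, mul_one]

lemma exists_inv_pack (A : H →L[ℂ] H) (hA : A.IsPositive) (ε : ℝ) (hε : 0 < ε) :
    ∃ R, IsInvPack (A + ε • 1) R := by
  set B := A + ε • 1 with hB
  have hBsa : IsSelfAdjoint B :=
    hA.isSelfAdjoint.add (smul_isPositive ContinuousLinearMap.isPositive_one hε.le).isSelfAdjoint
  have hBq : ∀ x, qf B x = qf A x + ε * ‖x‖ ^ 2 := by
    intro x
    have : B x = A x + ε • x := by simp [hB, ContinuousLinearMap.add_apply]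
    rw [qf, this, inner_add_left]
    rw [show (inner ℂ ((ε:ℝ) • x) x : ℂ) = (ε : ℂ) * ⟪x, x⟫ by
      rw [show (ε:ℝ) • x = (ε : ℂ) • x from (Complex.coe_smul ε x).symm, inner_smul_left,
        Complex.conj_ofReal]]
    simp only [Complex.add_re]
    rw [Complex.re_ofReal_mul, re_inner_self]
  have hBpos : B.IsPositive := by
    refine ⟨isSelfAdjoint_iff_isSymmetric.mp hBsa, fun x => ?_⟩
    have : B.reApplyInnerSelf x = qf B x := by
      simp [ContinuousLinearMap.reApplyInnerSelf, RCLike.re_to_complex]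
    rw [this, hBq x]
    have := qf_nonneg hA x
    positivity
  have hu : IsUnit B := by
    refine ContinuousLinearMap.isUnit_of_forall_le_norm_inner_map B
      (c := ⟨ε, hε.le⟩) (by exact_mod_cast hε) (fun x => ?_)
    have h1 : ε * ‖x‖ ^ 2 ≤ qf B x := by
      rw [hBq x]; have := qf_nonneg hA x; linarith
    have h2 : qf B x ≤ ‖(inner ℂ (B x) x : ℂ)‖ := by
      exact Complex.re_le_norm _
    calc ‖x‖ ^ 2 * (⟨ε, hε.le⟩ : ℝ≥0) = ε * ‖x‖ ^ 2 := by push_cast; ring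
      _ ≤ ‖(inner ℂ (B x) x : ℂ)‖ := h1.trans h2
  obtain ⟨u, hu_spec⟩ := hu
  have hmul : B * (↑u⁻¹ : H →L[ℂ] H) = 1 := by rw [← hu_spec]; exact u.mul_inv
  have hinv : (↑u⁻¹ : H →L[ℂ] H) * B = 1 := by rw [← hu_spec]; exact u.inv_mul
  set R : H →L[ℂ] H := ↑u⁻¹ with hR
  have hRsa : IsSelfAdjoint R := by
    have h1 : star R * B = 1 := by
      have h2 : star R * B = star (B * R) := by
        rw [star_mul, hBsa.star_eq]
      rw [h2, hmul, star_one]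
    show star R = R
    have h3 : star R = star R * (B * R) := by rw [hmul, mul_one]
    rw [h3, ← mul_assoc, h1, one_mul]
  refine ⟨R, hmul, hinv, ⟨isSelfAdjoint_iff_isSymmetric.mp hRsa, fun x => ?_⟩, fun b hb => invpack_comm_lemma hmul hinv hb⟩
  have happ : B (R x) = x := by
    have := congrArg (fun T : H →L[ℂ] H => T x) hmul
    simpa using this
  have hchain : R.reApplyInnerSelf x = (⟪B (R x), R x⟫).re := by
    calc R.reApplyInnerSelf x = (⟪R x, x⟫).re := by
          simp [ContinuousLinearMap.reApplyInnerSelf, RCLike.re_to_complex]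
      _ = (⟪x, R x⟫).re := re_conj _ _
      _ = (⟪B (R x), R x⟫).re := by rw [happ]
  rw [hchain]
  exact qf_nonneg hBpos (R x)

end
end Stmt7Aux

namespace Stmt7Aux

open ContinuousLinearMap Complex Filter Topology

noncomputable section

variable {H : Type*} [NormedAddCommGroup H] [InnerProductSpace ℂ H] [CompleteSpace H]

local notation "⟪" x ", " y "⟫" => (inner ℂ x y : ℂ)

lemma smul_one_commute (X : H →L[ℂ] H) (c : ℝ) : Commute X (c • (1 : H →L[ℂ] H)) := by
  show X * (c • 1) = (c • 1) * X
  rw [mul_smul_comm, smul_mul_assoc, mul_one, one_mul]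

lemma eps_tendsto : Tendsto (fun n : ℕ => ((n : ℝ) + 1)⁻¹) atTop (𝓝 0) := by
  have := tendsto_one_div_add_atTop_nhds_zero_nat (𝕜 := ℝ)
  simpa [one_div] using this

lemma psum_commute {F G P : H →L[ℂ] H} (hF : F.IsPositive) (hG : G.IsPositive)
    (hc : Commute F G) (hP : IsParallelSum F G P) : Commute P G := by
  obtain ⟨hPpos, hglb⟩ := hP
  set A := F + G with hA
  have hApos : A.IsPositive := hF.add hG
  set ε : ℕ → ℝ := fun n => ((n:ℝ)+1)⁻¹ with hεdef
  have hεpos : ∀ n, 0 < ε n := fun n => by positivity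
  have hchoice : ∀ n : ℕ, ∃ R, IsInvPack (A + ε n • 1) R :=
    fun n => exists_inv_pack A hApos _ (hεpos n)
  choose R hR using hchoice
  set B : ℕ → H →L[ℂ] H := fun n => A + ε n • 1 with hBdef
  have hBmul : ∀ n, B n * R n = 1 := fun n => (hR n).1
  have hBinv : ∀ n, R n * B n = 1 := fun n => (hR n).2.1
  have hRpos : ∀ n, (R n).IsPositive := fun n => (hR n).2.2.1
  have hRcomm : ∀ n b, Commute b (B n) → Commute b (R n) := fun n => (hR n).2.2.2
  have hRsa : ∀ n, IsSelfAdjoint (R n) := fun n => (hRpos n).isSelfAdjoint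
  have hBpos : ∀ n, (B n).IsPositive :=
    fun n => hApos.add (smul_isPositive isPositive_one (hεpos n).le)
  have hBsa : ∀ n, IsSelfAdjoint (B n) := fun n => (hBpos n).isSelfAdjoint
  have hGB : ∀ n, Commute G (B n) :=
    fun n => ((hc.symm).add_right (Commute.refl G)).add_right (smul_one_commute G (ε n))
  have hGR : ∀ n, Commute G (R n) := fun n => hRcomm n G (hGB n)
  have hBinv_apply : ∀ n (y : H), (B n) (R n y) = y := by
    intro n y
    have := congrArg (fun T : H →L[ℂ] H => T y) (hBmul n)
    simpa using this
  have hBq : ∀ n (x : H), qf (B n) x = qf F x + qf G x + ε n * ‖x‖ ^ 2 := by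
    intro n x
    have hax : (B n) x = (F x + G x) + (ε n : ℂ) • x := rfl
    rw [qf, hax, inner_add_left, inner_add_left, inner_smul_left, Complex.conj_ofReal]
    simp only [Complex.add_re]
    rw [Complex.re_ofReal_mul, re_inner_self]
  -- key identity
  have hKI : ∀ n (h f : H), qf F f + qf G (h - f)
      = qf G h - qf (R n) (G h) + qf (B n) (f - R n (G h)) - ε n * ‖f‖ ^ 2 := by
    intro n h f
    have e1 : qf G (h - f) = qf G h - 2 * (⟪G h, f⟫).re + qf G f :=
      qf_sub_expand hG.isSelfAdjoint h f
    have e2 : qf (B n) (f - R n (G h))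
        = qf (B n) f - 2 * (⟪(B n) f, R n (G h)⟫).re + qf (B n) (R n (G h)) :=
      qf_sub_expand (hBsa n) f (R n (G h))
    have e3 : (⟪(B n) f, R n (G h)⟫).re = (⟪G h, f⟫).re := by
      rw [sym (hBsa n) f (R n (G h)), hBinv_apply n (G h)]
      exact re_conj f (G h)
    have e4 : qf (B n) (R n (G h)) = qf (R n) (G h) := by
      show (⟪(B n) (R n (G h)), R n (G h)⟫).re = (⟪R n (G h), G h⟫).re
      rw [hBinv_apply n (G h)]
      exact re_conj (G h) (R n (G h))
    have e5 : qf (B n) f = qf F f + qf G f + ε n * ‖f‖ ^ 2 := hBq n f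
    linear_combination e1 - e2 + 2 * e3 - e4 - e5
  have hsle : ∀ n (h : H), qf (R n) (G h) ≤ qf G h := by
    intro n h
    have h1 := hKI n h (R n (G h))
    rw [sub_self, qf_zero] at h1
    have h2 : 0 ≤ qf F (R n (G h)) := qf_nonneg hF _
    have h3 : 0 ≤ qf G (h - R n (G h)) := qf_nonneg hG _
    have h4 : 0 ≤ ε n * ‖R n (G h)‖ ^ 2 := by positivity
    linarith
  -- monotonicity of n ↦ qf (R n) w
  have hRmono : ∀ n, (R (n+1) - R n).IsPositive := by
    intro n
    have hcB : Commute (R n) (B (n+1)) := by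
      have h1 : Commute (R n) (B n) := by
        show R n * B n = B n * R n
        rw [hBinv n, hBmul n]
      have h2 : B (n+1) = B n + (ε (n+1) - ε n) • 1 := by
        show A + ε (n+1) • 1 = (A + ε n • 1) + (ε (n+1) - ε n) • (1 : H →L[ℂ] H)
        module
      rw [h2]
      exact h1.add_right (smul_one_commute (R n) _)
    have hcRR : Commute (R (n+1)) (R n) := (hRcomm (n+1) (R n) hcB).symm
    have hid : R (n+1) - R n = (ε n - ε (n+1)) • (R (n+1) * R n) := by
      have h1 : R (n+1) * (B n * R n) = R (n+1) := by rw [hBmul n, mul_one]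
      have h2 : R (n+1) * B (n+1) * R n = R n := by rw [hBinv (n+1), one_mul]
      have h3 : B n = B (n+1) + (ε n - ε (n+1)) • 1 := by
        show A + ε n • 1 = (A + ε (n+1) • 1) + (ε n - ε (n+1)) • (1 : H →L[ℂ] H)
        module
      calc R (n+1) - R n = R (n+1) * (B n * R n) - R (n+1) * B (n+1) * R n := by rw [h1, h2]
        _ = R (n+1) * ((B (n+1) + (ε n - ε (n+1)) • 1) * R n) - R (n+1) * B (n+1) * R n := by
            rw [← h3]
        _ = (ε n - ε (n+1)) • (R (n+1) * R n) := by
            simp only [add_mul, mul_add, smul_mul_assoc, one_mul, mul_smul_comm, ← mul_assoc]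
            abel
    rw [hid]
    have hd : 0 ≤ ε n - ε (n+1) := by
      have h1 : ε (n+1) ≤ ε n := by
        simp only [hεdef]
        apply inv_anti₀
        · positivity
        · push_cast; linarith
      linarith
    exact smul_isPositive (mul_isPositive (hRpos (n+1)) (hRpos n) hcRR) hd
  -- the approximating operators
  set Pop : ℕ → H →L[ℂ] H := fun n => G - G * R n * G with hPopdef
  have hPopsa : ∀ n, IsSelfAdjoint (Pop n) := by
    intro n
    have h1 : IsSelfAdjoint (G * R n * G) := by
      show star _ = _
      rw [star_mul, star_mul, hG.isSelfAdjoint.star_eq, (hRsa n).star_eq, ← mul_assoc]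
    exact hG.isSelfAdjoint.sub h1
  have hPopcomm : ∀ n, Commute (Pop n) G := by
    intro n
    have h1 : Commute (G * R n * G) G :=
      ((Commute.refl G).mul_left (hGR n).symm).mul_left (Commute.refl G)
    exact (Commute.refl G).sub_left h1
  have hs_eq : ∀ n (h : H), qf (Pop n) h = qf G h - qf (R n) (G h) := by
    intro n h
    rw [hPopdef, qf_sub_apply]
    congr 1
    have h1 : (G * R n * G) h = G (R n (G h)) := rfl
    show (⟪(G * R n * G) h, h⟫).re = (⟪R n (G h), G h⟫).re
    rw [h1, sym hG.isSelfAdjoint (R n (G h)) h]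
  -- convergence of the quadratic forms
  have key : ∀ h : H, Tendsto (fun n => qf (Pop n) h) atTop (𝓝 (qf P h)) := by
    intro h
    set s : ℕ → ℝ := fun n => qf (R n) (G h) with hs
    have hmono : Monotone s := by
      apply monotone_nat_of_le_succ
      intro n
      have := qf_nonneg (hRmono n) (G h)
      rw [qf_sub_apply] at this
      linarith
    have hbdd : BddAbove (Set.range s) := by
      refine ⟨qf G h, ?_⟩
      rintro y ⟨n, rfl⟩
      exact hsle n h
    have hS := tendsto_atTop_ciSup hmono hbdd
    set S := ⨆ n, s n with hSdef
    have hval : ∀ f : H, qf G h - S ≤ qf F f + qf G (h - f) := by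
      intro f
      have hstep : ∀ n, qf G h - S - ε n * ‖f‖ ^ 2 ≤ qf F f + qf G (h - f) := by
        intro n
        have h1 := hKI n h f
        have h2 : 0 ≤ qf (B n) (f - R n (G h)) := qf_nonneg (hBpos n) _
        have h3 : s n ≤ S := le_ciSup hbdd n
        linarith
      have hlim : Tendsto (fun n => qf G h - S - ε n * ‖f‖ ^ 2) atTop (𝓝 (qf G h - S)) := by
        have h4 : Tendsto (fun n => ε n * ‖f‖ ^ 2) atTop (𝓝 0) := by
          simpa using eps_tendsto.mul_const (‖f‖ ^ 2)
        have := tendsto_const_nhds (x := qf G h - S) (f := (atTop : Filter ℕ))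
        simpa using this.sub h4
      exact le_of_tendsto hlim (Filter.Eventually.of_forall hstep)
    have happrox : ∀ n, qf F (R n (G h)) + qf G (h - R n (G h)) ≤ qf G h - s n := by
      intro n
      have h1 := hKI n h (R n (G h))
      rw [sub_self, qf_zero] at h1
      have h4 : 0 ≤ ε n * ‖R n (G h)‖ ^ 2 := by positivity
      linarith
    have hglb2 : IsGLB {r : ℝ | ∃ f g : H, f + g = h ∧
        r = (inner ℂ (F f) f : ℂ).re + (inner ℂ (G g) g : ℂ).re} (qf G h - S) := by
      constructor
      · rintro r ⟨f, g, hfg, rfl⟩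
        have hgf : g = h - f := by rw [← hfg]; abel
        rw [hgf]
        exact hval f
      · intro c hc
        have h1 : ∀ n, c ≤ qf G h - s n := by
          intro n
          have hmem : qf F (R n (G h)) + qf G (h - R n (G h)) ∈ {r : ℝ | ∃ f g : H, f + g = h ∧
              r = (inner ℂ (F f) f : ℂ).re + (inner ℂ (G g) g : ℂ).re} :=
            ⟨R n (G h), h - R n (G h), by abel, rfl⟩
          exact (hc hmem).trans (happrox n)
        have h2 : S ≤ qf G h - c := ciSup_le (fun n => by linarith [h1 n])
        linarith
    have hPh : qf P h = qf G h - S := ((hglb h).unique hglb2)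
    rw [hPh]
    have hfun : (fun n => qf (Pop n) h) = fun n => qf G h - s n := funext (fun n => hs_eq n h)
    rw [hfun]
    exact tendsto_const_nhds.sub hS
  -- polarization: convergence of inner ℂ products
  have hpol : ∀ (T : H →L[ℂ] H) (z x : H), IsSelfAdjoint T → True := fun _ _ _ _ => trivial
  have hlim2 : ∀ z x : H, Tendsto (fun n => ⟪Pop n z, x⟫) atTop (𝓝 (⟪P z, x⟫)) := by
    intro z x
    have hdiag : ∀ v : H, Tendsto (fun n => (⟪Pop n v, v⟫)) atTop (𝓝 (⟪P v, v⟫)) := by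
      intro v
      have h1 : ∀ n : ℕ, ⟪Pop n v, v⟫ = ((qf (Pop n) v : ℝ) : ℂ) :=
        fun n => inner_real (hPopsa n) v
      have h2 : ⟪P v, v⟫ = ((qf P v : ℝ) : ℂ) := inner_real hPpos.isSelfAdjoint v
      rw [h2]
      have h3 := (Complex.continuous_ofReal.tendsto _).comp (key v)
      have h4 : (fun n => ⟪Pop n v, v⟫) = fun n => ((qf (Pop n) v : ℝ) : ℂ) := funext h1
      rw [h4]
      exact h3
    have hp : ∀ T : H →L[ℂ] H, ⟪T z, x⟫ = (⟪T (x+z), x+z⟫ - ⟪T (x-z), x-z⟫ +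
        Complex.I * ⟪T (x + Complex.I • z), x + Complex.I • z⟫ -
        Complex.I * ⟪T (x - Complex.I • z), x - Complex.I • z⟫)/4 := by
      intro T
      have := inner_map_polarization (T : H →ₗ[ℂ] H) x z
      simpa only [ContinuousLinearMap.coe_coe] using this
    rw [hp P]
    have hfun : (fun n => ⟪Pop n z, x⟫) = fun n => (⟪Pop n (x+z), x+z⟫ - ⟪Pop n (x-z), x-z⟫ +
        Complex.I * ⟪Pop n (x + Complex.I • z), x + Complex.I • z⟫ -
        Complex.I * ⟪Pop n (x - Complex.I • z), x - Complex.I • z⟫)/4 :=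
      funext (fun n => hp (Pop n))
    rw [hfun]
    exact ((((hdiag (x+z)).sub (hdiag (x-z))).add
      ((hdiag (x + Complex.I • z)).const_mul Complex.I)).sub
      ((hdiag (x - Complex.I • z)).const_mul Complex.I)).div_const 4
  -- conclude
  have hfinal : ∀ z x : H, ⟪P (G z), x⟫ = ⟪G (P z), x⟫ := by
    intro z x
    have e1 := hlim2 (G z) x
    have e2 := hlim2 z (G x)
    have e3 : ∀ n : ℕ, ⟪Pop n (G z), x⟫ = ⟪Pop n z, G x⟫ := by
      intro n
      have hcm : Pop n (G z) = G (Pop n z) := by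
        calc Pop n (G z) = (Pop n * G) z := rfl
          _ = (G * Pop n) z := by rw [(hPopcomm n).eq]
          _ = G (Pop n z) := rfl
      rw [hcm, sym hG.isSelfAdjoint (Pop n z) x]
    simp only [e3] at e1
    have e4 : ⟪P (G z), x⟫ = ⟪P z, G x⟫ := tendsto_nhds_unique e1 e2
    rw [e4, ← sym hG.isSelfAdjoint (P z) x]
  show P * G = G * P
  apply ContinuousLinearMap.ext
  intro z
  have h5 : (P * G) z = P (G z) := rfl
  have h6 : (G * P) z = G (P z) := rfl
  rw [h5, h6]
  exact ext_inner_right ℂ (fun x => hfinal z x)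

end
end Stmt7Aux


namespace Stmt7Aux

open ContinuousLinearMap Complex Filter Topology

noncomputable section

variable {H : Type*} [NormedAddCommGroup H] [InnerProductSpace ℂ H] [CompleteSpace H]

local notation "⟪" x ", " y "⟫" => (inner ℂ x y : ℂ)

lemma inner_smul_right_re (T : H →L[ℂ] H) (c : ℝ) (x y : H) :
    (⟪T x, c • y⟫).re = c * (⟪T x, y⟫).re := by
  rw [show c • y = (c:ℂ) • y from rfl, inner_smul_right, Complex.re_ofReal_mul]

lemma qf_real_smul (T : H →L[ℂ] H) (c : ℝ) (x : H) : qf T (c • x) = c^2 * qf T x := by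
  have h : (⟪T ((c:ℂ) • x), (c:ℂ) • x⟫) = (c:ℂ) * ((c:ℂ) * ⟪T x, x⟫) := by
    rw [map_smul, inner_smul_left, inner_smul_right, Complex.conj_ofReal]
  show (⟪T ((c:ℂ) • x), (c:ℂ) • x⟫).re = _
  rw [h, Complex.re_ofReal_mul, Complex.re_ofReal_mul]
  ring

/-- Main analysis: properties of the strong limit `L = τ_G(F₀)` when `F₀` commutes with `G`. -/
lemma tau_props {G F₀ L : H →L[ℂ] H} (hG : G.IsPositive) (hF₀ : F₀.IsPositive)
    (hcomm : Commute F₀ G) (hL : IsTau G F₀ L) :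
    L.IsPositive ∧ (∀ k, G k = 0 → L k = F₀ k) ∧ (∀ u, L (G u) = 0) := by
  obtain ⟨Fs, h0, horb, hlim⟩ := hL
  choose Ps hPs hFs using horb
  -- the induction invariant
  have inv : ∀ n, (Fs n).IsPositive ∧ Commute (Fs n) G ∧ (∀ x, qf (Fs n) x ≤ qf F₀ x) := by
    intro n
    induction n with
    | zero => rw [h0]; exact ⟨hF₀, hcomm, fun x => le_rfl⟩
    | succ n ih =>
      obtain ⟨hpos, hcm, hbd⟩ := ih
      have hPpos : (Ps n).IsPositive := (hPs n).1
      have hPcomm : Commute (Ps n) G := psum_commute hpos hG hcm (hPs n)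
      have hQle : ∀ x, qf (Ps n) x ≤ qf (Fs n) x := by
        intro x
        have hmem := ((hPs n).2 x).1 ⟨x, 0, add_zero x, rfl⟩
        simp only [map_zero, inner_zero_left, Complex.zero_re, add_zero] at hmem
        exact hmem
      refine ⟨?_, ?_, ?_⟩
      · rw [hFs n]
        refine ⟨isSelfAdjoint_iff_isSymmetric.mp (hpos.isSelfAdjoint.sub hPpos.isSelfAdjoint), fun x => ?_⟩
        rw [reApply_eq, qf_sub_apply]
        linarith [hQle x]
      · rw [hFs n]
        exact hcm.sub_left hPcomm
      · intro x
        rw [hFs n, qf_sub_apply]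
        have := qf_nonneg hPpos x
        linarith [hbd x]
  -- convergence of quadratic forms
  have hqlim : ∀ x : H, Tendsto (fun n => qf (Fs n) x) atTop (𝓝 (qf L x)) := by
    intro x
    exact (Complex.continuous_re.tendsto _).comp ((hlim x).inner tendsto_const_nhds)
  -- L selfadjoint
  have hLsym : IsSelfAdjoint L := by
    rw [ContinuousLinearMap.isSelfAdjoint_iff_isSymmetric]
    intro x y
    have e1 : Tendsto (fun n => ⟪Fs n x, y⟫) atTop (𝓝 ⟪L x, y⟫) :=
      (hlim x).inner tendsto_const_nhds
    have e2 : Tendsto (fun n => ⟪x, Fs n y⟫) atTop (𝓝 ⟪x, L y⟫) :=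
      tendsto_const_nhds.inner (hlim y)
    have e3 : ∀ n : ℕ, ⟪Fs n x, y⟫ = ⟪x, Fs n y⟫ := fun n => sym (inv n).1.isSelfAdjoint x y
    simp only [e3] at e1
    have := tendsto_nhds_unique e1 e2
    simpa [ContinuousLinearMap.coe_coe] using this
  have hLpos : L.IsPositive := by
    refine ⟨isSelfAdjoint_iff_isSymmetric.mp hLsym, fun x => ?_⟩
    rw [reApply_eq]
    exact ge_of_tendsto (hqlim x) (Eventually.of_forall (fun n => qf_nonneg (inv n).1 x))
  -- kernel part
  have hker : ∀ n k, G k = 0 → Fs n k = F₀ k := by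
    intro n
    induction n with
    | zero => intro k _; rw [h0]
    | succ n ih =>
      intro k hk
      have hP0 : Ps n k = 0 := by
        have hub := ((hPs n).2 k).1 ⟨0, k, zero_add k, rfl⟩
        simp only [map_zero, inner_zero_left, Complex.zero_re, zero_add] at hub
        have hGk : qf G k = 0 := by simp [qf, hk]
        have := qf_nonneg (hPs n).1 k
        exact apply_eq_zero (hPs n).1 (by linarith)
      rw [hFs n]
      rw [ContinuousLinearMap.sub_apply, hP0, sub_zero, ih k hk]
  have hker' : ∀ k, G k = 0 → L k = F₀ k := by
    intro k hk
    have h1 : (fun n => Fs n k) = fun _ => F₀ k := funext (fun n => hker n k hk)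
    have h2 := hlim k
    rw [h1] at h2
    exact (tendsto_nhds_unique h2 tendsto_const_nhds)
  -- decay part
  have hdecay : ∀ u : H, L (G u) = 0 := by
    intro u
    have hMnn : (0:ℝ) ≤ ‖F₀‖ := norm_nonneg _
    have hqbd : ∀ n x, qf (Fs n) x ≤ ‖F₀‖ * ‖x‖ ^ 2 :=
      fun n x => ((inv n).2.2 x).trans (qf_bound x)
    have hδbound : ∀ δ : ℝ, 0 < δ → qf L (G u) ≤ ‖F₀‖ * δ ^ 2 * ‖u‖ ^ 2 := by
      intro δ hδ
      obtain ⟨R, hRmul, hRinv, hRpos, hRcomm⟩ := exists_inv_pack G hG δ hδ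
      have hGBδ : Commute G (G + δ • 1) := (Commute.refl G).add_right (smul_one_commute G δ)
      have hGR : Commute G R := hRcomm G hGBδ
      have hEpos : (G * R).IsPositive := mul_isPositive hG hRpos hGR
      have hEsa := hEpos.isSelfAdjoint
      have hop : (1 : H →L[ℂ] H) - G * R = δ • R := by
        have h1 : (G + δ • 1) - G = δ • (1 : H →L[ℂ] H) := add_sub_cancel_left G _
        calc (1 : H →L[ℂ] H) - G * R = (G + δ • 1) * R - G * R := by rw [hRmul]
          _ = ((G + δ • 1) - G) * R := (sub_mul _ _ _).symm
          _ = (δ • (1 : H →L[ℂ] H)) * R := by rw [h1]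
          _ = δ • R := by rw [smul_mul_assoc, one_mul]
      have honeE : ∀ x : H, x - (G * R) x = δ • R x := by
        intro x
        have := congrArg (fun T : H →L[ℂ] H => T x) hop
        simpa using this
      -- contraction property of E = G * R
      have hEEpos : (G * R - (G * R) * (G * R)).IsPositive := by
        have hid : G * R - (G * R) * (G * R) = δ • (G * (R * R)) := by
          calc G * R - (G * R) * (G * R) = (G * R) * (1 - G * R) := by noncomm_ring
            _ = (G * R) * (δ • R) := by rw [hop]
            _ = δ • ((G * R) * R) := by rw [mul_smul_comm]
            _ = δ • (G * (R * R)) := by rw [mul_assoc]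
        rw [hid]
        exact smul_isPositive (mul_isPositive hG
          (mul_isPositive hRpos hRpos (Commute.refl R)) (hGR.mul_right hGR)) hδ.le
      have hEcontr : ∀ y : H, ‖(G * R) y‖ ≤ ‖y‖ := by
        intro y
        have h2 : qf ((G * R) * (G * R)) y = ‖(G * R) y‖ ^ 2 := by
          show (⟪((G * R) * (G * R)) y, y⟫).re = _
          rw [show ((G * R) * (G * R)) y = (G * R) ((G * R) y) from rfl,
            sym hEsa ((G * R) y) y, re_inner_self]
        have h1 : qf ((G * R) * (G * R)) y ≤ qf (G * R) y := by
          have := qf_nonneg hEEpos y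
          rw [qf_sub_apply] at this
          linarith
        have h3 : qf (G * R) y ≤ ‖(G * R) y‖ * ‖y‖ := by
          have c1 : (⟪(G * R) y, y⟫).re ≤ ‖(⟪(G * R) y, y⟫)‖ := by
            exact Complex.re_le_norm _
          exact c1.trans (norm_inner_le_norm _ _)
        rcases eq_or_lt_of_le (norm_nonneg ((G * R) y)) with hn | hn
        · rw [← hn]; exact norm_nonneg y
        · nlinarith [h1, h2, h3]
      -- commutation of the orbit with R and E
      have hFsR : ∀ n, Commute (Fs n) R :=
        fun n => hRcomm (Fs n) (((inv n).2.1).add_right (smul_one_commute _ δ))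
      have hFsE : ∀ n, Commute (Fs n) (G * R) := fun n => ((inv n).2.1).mul_right (hFsR n)
      -- decomposition f = G v + δ v with v = R f
      have hBv : ∀ f : H, G (R f) + δ • R f = f := by
        intro f
        have := congrArg (fun T : H →L[ℂ] H => T f) hRmul
        simpa [ContinuousLinearMap.add_apply] using this
      -- (i) : qf (Fs n) (E f) ≤ qf (Fs n) f
      have hi : ∀ n (f : H), qf (Fs n) ((G * R) f) ≤ qf (Fs n) f := by
        intro n f
        have hEf : (G * R) f = G (R f) := rfl
        have hexp : qf (Fs n) f = qf (Fs n) (G (R f))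
            + 2 * (δ * (⟪(Fs n) (G (R f)), R f⟫).re) + δ^2 * qf (Fs n) (R f) := by
          conv_lhs => rw [← hBv f]
          rw [qf_add_expand (inv n).1.isSelfAdjoint, inner_smul_right_re, qf_real_smul]
        have hcross : 0 ≤ (⟪(Fs n) (G (R f)), R f⟫).re := by
          have hq := qf_nonneg (mul_isPositive (inv n).1 hG (inv n).2.1) (R f)
          exact hq
        have hsq : 0 ≤ δ^2 * qf (Fs n) (R f) := by
          have := qf_nonneg (inv n).1 (R f)
          positivity
        rw [hEf]
        linarith [hexp, hsq, mul_nonneg hδ.le hcross]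
      -- (ii) : 4δ ‖E g‖² ≤ qf G g
      have hii : ∀ g : H, ‖(G * R) g‖^2 * (4*δ) ≤ qf G g := by
        intro g
        have hEg : (G * R) g = G (R g) := rfl
        have hexp : qf G g = qf G (G (R g)) + 2 * (δ * ‖G (R g)‖^2) + δ^2 * qf G (R g) := by
          conv_lhs => rw [← hBv g]
          rw [qf_add_expand hG.isSelfAdjoint, inner_smul_right_re, qf_real_smul]
          have : (⟪G (G (R g)), R g⟫).re = ‖G (R g)‖^2 := by
            rw [sym hG.isSelfAdjoint (G (R g)) (R g), re_conj, re_inner_self]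
          rw [this]
        have hkey : 0 ≤ qf G (G (R g)) - 2*(δ*‖G (R g)‖^2) + δ^2 * qf G (R g) := by
          have h1 : 0 ≤ qf G (G (R g) - δ • R g) := qf_nonneg hG _
          have h2 : qf G (G (R g) - δ • R g) = qf G (G (R g))
              - 2 * (δ * ‖G (R g)‖^2) + δ^2 * qf G (R g) := by
            rw [qf_sub_expand hG.isSelfAdjoint, inner_smul_right_re, qf_real_smul]
            have : (⟪G (G (R g)), R g⟫).re = ‖G (R g)‖^2 := by
              rw [sym hG.isSelfAdjoint (G (R g)) (R g), re_conj, re_inner_self]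
            rw [this]
          linarith [h2 ▸ h1]
        rw [hEg]
        linarith
      -- (iii)
      have hRh : R (G u) = (G * R) u := by
        calc R (G u) = (R * G) u := rfl
          _ = (G * R) u := by rw [← hGR.eq]
      have hnorm3 : ‖δ • R (G u)‖ ≤ δ * ‖u‖ := by
        rw [hRh, norm_smul]
        have : ‖δ‖ = δ := abs_of_pos hδ
        rw [this]
        exact mul_le_mul_of_nonneg_left (hEcontr u) hδ.le
      -- the splitting estimate
      have hEST : ∀ n (f g : H), f + g = G u →
          Real.sqrt (qf (Fs n) (G u)) ≤ Real.sqrt (qf (Fs n) f)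
            + Real.sqrt (‖F₀‖ / (4*δ)) * Real.sqrt (qf G g)
            + Real.sqrt ‖F₀‖ * (δ * ‖u‖) := by
        intro n f g hfg
        have hsplit : G u = (G * R) f + ((G * R) g + δ • R (G u)) := by
          have h1 : (G * R) (G u) = (G * R) f + (G * R) g := by rw [← hfg, map_add]
          have h2 : G u - (G * R) (G u) = δ • R (G u) := honeE (G u)
          calc G u = (G * R) (G u) + (G u - (G * R) (G u)) := by abel
            _ = ((G * R) f + (G * R) g) + δ • R (G u) := by rw [h2, h1]
            _ = (G * R) f + ((G * R) g + δ • R (G u)) := add_assoc _ _ _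
        have t1 := tri (inv n).1 ((G * R) f) ((G * R) g + δ • R (G u))
        rw [← hsplit] at t1
        have t2 := tri (inv n).1 ((G * R) g) (δ • R (G u))
        have b1 : Real.sqrt (qf (Fs n) ((G * R) f)) ≤ Real.sqrt (qf (Fs n) f) :=
          Real.sqrt_le_sqrt (hi n f)
        have b2 : Real.sqrt (qf (Fs n) ((G * R) g))
            ≤ Real.sqrt (‖F₀‖ / (4*δ)) * Real.sqrt (qf G g) := by
          have c1 : qf (Fs n) ((G * R) g) ≤ ‖F₀‖ * ‖(G * R) g‖^2 := hqbd n _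
          have c2 : ‖F₀‖ * ‖(G * R) g‖^2 ≤ (‖F₀‖/(4*δ)) * qf G g := by
            rw [div_mul_eq_mul_div, le_div_iff₀ (by positivity)]
            nlinarith [hii g, hMnn]
          have c3 := Real.sqrt_le_sqrt (c1.trans c2)
          rwa [Real.sqrt_mul (by positivity)] at c3
        have b3 : Real.sqrt (qf (Fs n) (δ • R (G u))) ≤ Real.sqrt ‖F₀‖ * (δ * ‖u‖) := by
          have c1 : qf (Fs n) (δ • R (G u)) ≤ ‖F₀‖ * ‖δ • R (G u)‖^2 := hqbd n _
          have c2 : ‖F₀‖ * ‖δ • R (G u)‖^2 ≤ ‖F₀‖ * (δ*‖u‖)^2 :=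
            mul_le_mul_of_nonneg_left (pow_le_pow_left₀ (norm_nonneg _) hnorm3 2) hMnn
          have c3 := Real.sqrt_le_sqrt (c1.trans c2)
          rwa [Real.sqrt_mul hMnn, Real.sqrt_sq (by positivity)] at c3
        linarith [t1, t2, b1, b2, b3]
      -- lower bound for the parallel sum form
      have hPlow : ∀ n, (max (Real.sqrt (qf (Fs n) (G u)) - Real.sqrt ‖F₀‖ * (δ * ‖u‖)) 0)^2
          / (1 + ‖F₀‖/(4*δ)) ≤ qf (Ps n) (G u) := by
        intro n
        apply ((hPs n).2 (G u)).2
        rintro r ⟨f, g, hfg, rfl⟩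
        have hest := hEST n f g hfg
        have hx : (0:ℝ) ≤ Real.sqrt (qf (Fs n) f) := Real.sqrt_nonneg _
        have hy : (0:ℝ) ≤ Real.sqrt (qf G g) := Real.sqrt_nonneg _
        have hcn : (0:ℝ) ≤ Real.sqrt (‖F₀‖/(4*δ)) := Real.sqrt_nonneg _
        have hx2 : Real.sqrt (qf (Fs n) f)^2 = qf (Fs n) f :=
          Real.sq_sqrt (qf_nonneg (inv n).1 f)
        have hy2 : Real.sqrt (qf G g)^2 = qf G g := Real.sq_sqrt (qf_nonneg hG g)
        have hc2 : Real.sqrt (‖F₀‖/(4*δ))^2 = ‖F₀‖/(4*δ) := Real.sq_sqrt (by positivity)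
        have hKpos : (0:ℝ) < 1 + ‖F₀‖/(4*δ) := by positivity
        have h1 : max (Real.sqrt (qf (Fs n) (G u)) - Real.sqrt ‖F₀‖ * (δ * ‖u‖)) 0
            ≤ Real.sqrt (qf (Fs n) f) + Real.sqrt (‖F₀‖/(4*δ)) * Real.sqrt (qf G g) := by
          apply max_le
          · linarith
          · positivity
        have h0 : (0:ℝ) ≤ max (Real.sqrt (qf (Fs n) (G u)) - Real.sqrt ‖F₀‖ * (δ * ‖u‖)) 0 :=
          le_max_right _ _
        have h2 : (max (Real.sqrt (qf (Fs n) (G u)) - Real.sqrt ‖F₀‖ * (δ * ‖u‖)) 0)^2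
            ≤ (Real.sqrt (qf (Fs n) f) + Real.sqrt (‖F₀‖/(4*δ)) * Real.sqrt (qf G g))^2 :=
          pow_le_pow_left₀ h0 h1 2
        have h3 : (Real.sqrt (qf (Fs n) f) + Real.sqrt (‖F₀‖/(4*δ)) * Real.sqrt (qf G g))^2
            ≤ (1 + ‖F₀‖/(4*δ)) * (Real.sqrt (qf (Fs n) f)^2 + Real.sqrt (qf G g)^2) := by
          nlinarith [sq_nonneg (Real.sqrt (‖F₀‖/(4*δ)) * Real.sqrt (qf (Fs n) f)
            - Real.sqrt (qf G g)), hc2, hx, hy, hcn]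
        rw [div_le_iff₀ hKpos]
        show _ ≤ (qf (Fs n) f + qf G g) * (1 + ‖F₀‖/(4*δ))
        nlinarith [h2, h3, hx2, hy2]
      -- recursion and passage to the limit
      have hrec : ∀ n, qf (Fs (n+1)) (G u) = qf (Fs n) (G u) - qf (Ps n) (G u) := by
        intro n
        rw [hFs n, qf_sub_apply]
      have halim := hqlim (G u)
      have hstep : ∀ n, qf (Fs (n+1)) (G u) ≤ qf (Fs n) (G u) := by
        intro n
        rw [hrec n]
        linarith [qf_nonneg (hPs n).1 (G u)]
      have hanti : Antitone (fun n => qf (Fs n) (G u)) := antitone_nat_of_succ_le hstep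
      have hainf : ∀ n, qf L (G u) ≤ qf (Fs n) (G u) := by
        intro n
        apply le_of_tendsto halim
        filter_upwards [eventually_ge_atTop n] with m hm
        exact hanti hm
      have hzero : Tendsto (fun n => qf (Fs n) (G u) - qf (Fs (n+1)) (G u)) atTop (𝓝 0) := by
        have h1 := halim.comp (tendsto_add_atTop_nat 1)
        have h2 := halim.sub h1
        simpa [Function.comp] using h2
      have hLB : (max (Real.sqrt (qf L (G u)) - Real.sqrt ‖F₀‖ * (δ * ‖u‖)) 0)^2
          / (1 + ‖F₀‖/(4*δ)) ≤ 0 := by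
        apply ge_of_tendsto hzero
        filter_upwards with n
        have hm1 : Real.sqrt (qf L (G u)) ≤ Real.sqrt (qf (Fs n) (G u)) :=
          Real.sqrt_le_sqrt (hainf n)
        have hm2 : max (Real.sqrt (qf L (G u)) - Real.sqrt ‖F₀‖ * (δ * ‖u‖)) 0
            ≤ max (Real.sqrt (qf (Fs n) (G u)) - Real.sqrt ‖F₀‖ * (δ * ‖u‖)) 0 :=
          max_le_max (by linarith) le_rfl
        have hm0 : (0:ℝ) ≤ max (Real.sqrt (qf L (G u)) - Real.sqrt ‖F₀‖ * (δ * ‖u‖)) 0 :=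
          le_max_right _ _
        have hm3 := pow_le_pow_left₀ hm0 hm2 2
        have hKpos : (0:ℝ) < 1 + ‖F₀‖/(4*δ) := by positivity
        have hm4 : (max (Real.sqrt (qf L (G u)) - Real.sqrt ‖F₀‖ * (δ * ‖u‖)) 0)^2
            / (1 + ‖F₀‖/(4*δ))
            ≤ (max (Real.sqrt (qf (Fs n) (G u)) - Real.sqrt ‖F₀‖ * (δ * ‖u‖)) 0)^2
            / (1 + ‖F₀‖/(4*δ)) := by gcongr
        have h5 := hPlow n
        have h6 := hrec n
        linarith
      have hKpos : (0:ℝ) < 1 + ‖F₀‖/(4*δ) := by positivity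
      have hmax0 : max (Real.sqrt (qf L (G u)) - Real.sqrt ‖F₀‖ * (δ * ‖u‖)) 0 = 0 := by
        have h1 : (max (Real.sqrt (qf L (G u)) - Real.sqrt ‖F₀‖ * (δ * ‖u‖)) 0)^2 ≤ 0 := by
          have h2 := hLB
          rw [div_le_iff₀ hKpos, zero_mul] at h2
          exact h2
        have h2 : (max (Real.sqrt (qf L (G u)) - Real.sqrt ‖F₀‖ * (δ * ‖u‖)) 0)^2 = 0 :=
          le_antisymm h1 (sq_nonneg _)
        exact sq_eq_zero_iff.mp h2
      have hsqle : Real.sqrt (qf L (G u)) ≤ Real.sqrt ‖F₀‖ * (δ * ‖u‖) := by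
        by_contra hcon
        push_neg at hcon
        have hlt : 0 < max (Real.sqrt (qf L (G u)) - Real.sqrt ‖F₀‖ * (δ * ‖u‖)) 0 :=
          lt_of_lt_of_le (sub_pos.mpr hcon) (le_max_left _ _)
        rw [hmax0] at hlt
        exact lt_irrefl 0 hlt
      have h6 : qf L (G u) = Real.sqrt (qf L (G u))^2 :=
        (Real.sq_sqrt (qf_nonneg hLpos _)).symm
      have h7 := pow_le_pow_left₀ (Real.sqrt_nonneg _) hsqle 2
      have h8 : (Real.sqrt ‖F₀‖ * (δ * ‖u‖))^2 = ‖F₀‖ * δ^2 * ‖u‖^2 := by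
        rw [mul_pow, mul_pow, Real.sq_sqrt hMnn]
        ring
      rw [h6]
      rw [h8] at h7
      exact h7
    have hfinal : qf L (G u) ≤ 0 := by
      have hs : ∀ n : ℕ, qf L (G u) ≤ ‖F₀‖ * (((n:ℝ)+1)⁻¹)^2 * ‖u‖^2 :=
        fun n => hδbound _ (by positivity)
      have hlim0 : Tendsto (fun n : ℕ => ‖F₀‖ * (((n:ℝ)+1)⁻¹)^2 * ‖u‖^2) atTop (𝓝 0) := by
        have h2 : Tendsto (fun n : ℕ => (((n:ℝ)+1)⁻¹)^2) atTop (𝓝 0) := by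
          have h3 := eps_tendsto.mul eps_tendsto
          simpa [pow_two] using h3
        have h3 := (h2.const_mul ‖F₀‖).mul_const (‖u‖^2)
        simpa [mul_assoc] using h3
      exact ge_of_tendsto hlim0 (Eventually.of_forall hs)
    exact apply_eq_zero hLpos (le_antisymm hfinal (qf_nonneg hLpos _))
  exact ⟨hLpos, hker', hdecay⟩

end
end Stmt7Aux

namespace Stmt7Aux

open ContinuousLinearMap Complex Filter Topology

noncomputable section

variable {H : Type*} [NormedAddCommGroup H] [InnerProductSpace ℂ H] [CompleteSpace H]

local notation "⟪" x ", " y "⟫" => (inner ℂ x y : ℂ)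

lemma ker_sqrt {S F₀ : H →L[ℂ] H} (hS : IsSqrtOf S F₀) {y : H} (hy : F₀ y = 0) : S y = 0 := by
  have hSS : S (S y) = F₀ y := by
    rw [← hS.2]; rfl
  have h1 : ‖S y‖^2 = (⟪F₀ y, y⟫).re := by
    rw [← re_inner_self (S y)]
    congr 1
    calc (⟪S y, S y⟫) = ⟪S (S y), y⟫ := (sym hS.1.isSelfAdjoint (S y) y).symm
      _ = ⟪F₀ y, y⟫ := by rw [hSS]
  rw [hy] at h1
  simp only [inner_zero_left, Complex.zero_re] at h1
  have : ‖S y‖ = 0 := by nlinarith [norm_nonneg (S y)]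
  exact norm_eq_zero.mp this

lemma mem_closure_range {S F₀ : H →L[ℂ] H} (hF₀ : F₀.IsPositive) (hS : IsSqrtOf S F₀) (k : H) :
    S k ∈ closure (Set.range ⇑F₀) := by
  have hco : ((LinearMap.range (F₀ : H →ₗ[ℂ] H) : Submodule ℂ H) : Set H) = Set.range ⇑F₀ := by
    ext x
    simp [LinearMap.mem_range]
  rw [← hco, ← Submodule.topologicalClosure_coe, ← Submodule.orthogonal_orthogonal_eq_closure,
    SetLike.mem_coe, Submodule.mem_orthogonal]
  intro u hu
  rw [Submodule.mem_orthogonal] at hu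
  have h1 : (⟪F₀ u, u⟫) = 0 := hu (F₀ u) ⟨u, rfl⟩
  have h2 : F₀ u = 0 := by
    apply apply_eq_zero hF₀
    show (⟪F₀ u, u⟫).re = 0
    rw [h1]
    simp
  have h3 : S u = 0 := ker_sqrt hS h2
  rw [← sym hS.1.isSelfAdjoint u k, h3, inner_zero_left]

end
end Stmt7Aux


open Stmt7Aux

/-- Corollary 1 of the paper. If `F₀` commutes with `G`, then
`τ_G(F₀) = F₀^{1/2} P_N F₀^{1/2}` with `N = ker G ∩ clos ran F₀`; in particular `τ_G(F₀) = 0`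
if `ker G ⊆ ker F₀`, or `F₀ = G`, or `ker G = {0}`. -/
theorem stmt7 (G F₀ Sf0 F Pn : H →L[ℂ] H)
    (hG : G.IsPositive) (hF₀ : F₀.IsPositive)
    (hcomm : F₀ * G = G * F₀)
    (hSf0 : IsSqrtOf Sf0 F₀)
    (hF : IsTau G F₀ F)
    (N : Submodule ℂ H)
    (hN : (N : Set H) = {x : H | G x = 0} ∩ closure (Set.range ⇑F₀))
    (hPn : IsOrthProjOnto N Pn) :
    F = Sf0 * Pn * Sf0 ∧
    ({x : H | G x = 0} ⊆ {x : H | F₀ x = 0} → F = 0) ∧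
    (F₀ = G → F = 0) ∧
    ((∀ x : H, G x = 0 → x = 0) → F = 0) := by
  classical
  obtain ⟨hSpos, hSsq⟩ := hSf0
  have hSG : Commute Sf0 G := by
    have h0S : (0 : H →L[ℂ] H) ≤ Sf0 := (ContinuousLinearMap.nonneg_iff_isPositive Sf0).mpr hSpos
    have he : CFC.sqrt F₀ = Sf0 := CFC.sqrt_unique hSsq h0S
    rw [← he]
    exact sqrt_commute hF₀ hcomm
  have hGS : ∀ x, Sf0 (G x) = G (Sf0 x) := by
    intro x
    calc Sf0 (G x) = (Sf0 * G) x := rfl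
      _ = (G * Sf0) x := by rw [hSG.eq]
      _ = G (Sf0 x) := rfl
  obtain ⟨hLpos, hLker, hLran⟩ := tau_props hG hF₀ hcomm hF
  have hNmem : ∀ z : H, z ∈ N ↔ (G z = 0 ∧ z ∈ closure (Set.range ⇑F₀)) := by
    intro z
    simp only [← SetLike.mem_coe, hN, Set.mem_inter_iff, Set.mem_setOf_eq]
  have hfixN : ∀ z ∈ N, Pn z = z := by
    intro z hz
    have h1 : z - Pn z ∈ N := Submodule.sub_mem N hz (hPn z).1
    have h2 := (hPn z).2
    rw [Submodule.mem_orthogonal] at h2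
    have h3 : (inner ℂ (z - Pn z) (z - Pn z) : ℂ) = 0 := h2 (z - Pn z) h1
    have h4 : z - Pn z = 0 := inner_self_eq_zero.mp h3
    have := sub_eq_zero.mp h4
    exact this.symm
  have hkill : ∀ v, Pn (G v) = 0 := by
    intro v
    have hz : Pn (G v) ∈ N := (hPn (G v)).1
    have h2 := (hPn (G v)).2
    rw [Submodule.mem_orthogonal] at h2
    have h3 : (inner ℂ (Pn (G v)) (G v - Pn (G v)) : ℂ) = 0 := h2 (Pn (G v)) hz
    have h1 : (inner ℂ (G v - Pn (G v)) (Pn (G v)) : ℂ) = 0 := by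
      rw [← inner_conj_symm, h3, map_zero]
    have h4 : (inner ℂ (G v) (Pn (G v)) : ℂ) = 0 := by
      have hkerN : G (Pn (G v)) = 0 := ((hNmem _).mp hz).1
      calc (inner ℂ (G v) (Pn (G v)) : ℂ) = inner ℂ v (G (Pn (G v))) := sym hG.isSelfAdjoint v _
        _ = 0 := by rw [hkerN, inner_zero_right]
    have h5 : (inner ℂ (Pn (G v)) (Pn (G v)) : ℂ) = 0 := by
      have hexp : (inner ℂ (G v - Pn (G v)) (Pn (G v)) : ℂ)
          = (inner ℂ (G v) (Pn (G v)) : ℂ) - inner ℂ (Pn (G v)) (Pn (G v)) := by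
        rw [inner_sub_left]
      rw [hexp] at h1
      linear_combination h4 - h1
    exact inner_self_eq_zero.mp h5
  haveI : CompleteSpace (LinearMap.ker (G : H →ₗ[ℂ] H)) :=
    (ContinuousLinearMap.isClosed_ker G).completeSpace_coe
  have hmain : F = Sf0 * Pn * Sf0 := by
    have hTkill : ∀ v, (Sf0 * Pn * Sf0) (G v) = 0 := by
      intro v
      have h1 : (Sf0 * Pn * Sf0) (G v) = Sf0 (Pn (Sf0 (G v))) := rfl
      rw [h1, hGS v, hkill (Sf0 v), map_zero]
    have hTker : ∀ k, G k = 0 → (Sf0 * Pn * Sf0) k = F₀ k := by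
      intro k hk
      have h1 : Sf0 k ∈ N := by
        rw [hNmem]
        constructor
        · rw [← hGS k, hk, map_zero]
        · exact mem_closure_range hF₀ ⟨hSpos, hSsq⟩ k
      have h2 : (Sf0 * Pn * Sf0) k = Sf0 (Pn (Sf0 k)) := rfl
      rw [h2, hfixN _ h1]
      calc Sf0 (Sf0 k) = (Sf0 * Sf0) k := rfl
        _ = F₀ k := by rw [hSsq]
    apply ContinuousLinearMap.ext
    intro x
    obtain ⟨p, hp, q, hq, hx⟩ := (LinearMap.ker (G : H →ₗ[ℂ] H)).exists_add_mem_mem_orthogonal x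
    have hpker : G p = 0 := LinearMap.mem_ker.mp hp
    have hqcl : q ∈ closure ((LinearMap.range (G : H →ₗ[ℂ] H) : Submodule ℂ H) : Set H) := by
      have h1 : (LinearMap.ker (G : H →ₗ[ℂ] H) : Submodule ℂ H) = (LinearMap.range (G : H →ₗ[ℂ] H))ᗮ := by
        ext z
        rw [LinearMap.mem_ker, Submodule.mem_orthogonal]
        constructor
        · intro hz u hu
          obtain ⟨w, rfl⟩ := hu
          rw [ContinuousLinearMap.coe_coe] at hz ⊢
          rw [sym hG.isSelfAdjoint w z, hz, inner_zero_right]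
        · intro hz
          apply apply_eq_zero hG
          have h3 := hz (G z) ⟨z, rfl⟩
          show (inner ℂ (G z) z : ℂ).re = 0
          rw [h3]
          simp
      have h2 : (LinearMap.ker (G : H →ₗ[ℂ] H) : Submodule ℂ H)ᗮ = (LinearMap.range (G : H →ₗ[ℂ] H)).topologicalClosure := by
        rw [h1, Submodule.orthogonal_orthogonal_eq_closure]
      rw [h2] at hq
      rw [← Submodule.topologicalClosure_coe]
      exact hq
    have hvanish : ∀ (W : H →L[ℂ] H), (∀ v, W (G v) = 0) → W q = 0 := by
      intro W hW
      have h1 : ((LinearMap.range (G : H →ₗ[ℂ] H) : Submodule ℂ H) : Set H) ⊆ {y | W y = 0} := by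
        rintro y ⟨v, rfl⟩
        exact hW v
      have h2 : IsClosed {y : H | W y = 0} := isClosed_eq W.continuous continuous_const
      exact closure_minimal h1 h2 hqcl
    have e1 : F x = F p + F q := by rw [hx, map_add]
    have e2 : (Sf0 * Pn * Sf0) x = (Sf0 * Pn * Sf0) p + (Sf0 * Pn * Sf0) q := by
      rw [hx, map_add]
    rw [e1, e2, hLker p hpker, hTker p hpker, hvanish F hLran, hvanish _ hTkill]
  refine ⟨hmain, ?_, ?_, ?_⟩
  · intro hsub
    rw [hmain]
    apply ContinuousLinearMap.ext
    intro x
    have h1 : Pn (Sf0 x) ∈ N := (hPn _).1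
    have h2 : G (Pn (Sf0 x)) = 0 := ((hNmem _).mp h1).1
    have h3 : F₀ (Pn (Sf0 x)) = 0 := hsub h2
    have h4 : Sf0 (Pn (Sf0 x)) = 0 := ker_sqrt ⟨hSpos, hSsq⟩ h3
    show Sf0 (Pn (Sf0 x)) = (0 : H →L[ℂ] H) x
    rw [h4, ContinuousLinearMap.zero_apply]
  · intro hFG
    rw [hmain]
    have hN0 : ∀ z ∈ N, z = (0:H) := by
      intro z hz
      obtain ⟨hz1, hz2⟩ := (hNmem z).mp hz
      have hperp : ∀ w ∈ Set.range ⇑F₀, (inner ℂ w z : ℂ) = 0 := by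
        rintro w ⟨v, rfl⟩
        rw [hFG, sym hG.isSelfAdjoint v z, hz1, inner_zero_right]
      have hcl : (inner ℂ z z : ℂ) = 0 := by
        have h2 : IsClosed {w : H | (inner ℂ w z : ℂ) = 0} :=
          isClosed_eq (Continuous.inner continuous_id continuous_const) continuous_const
        exact closure_minimal hperp h2 hz2
      exact inner_self_eq_zero.mp hcl
    apply ContinuousLinearMap.ext
    intro x
    have h1 : Pn (Sf0 x) = 0 := hN0 _ (hPn _).1
    show Sf0 (Pn (Sf0 x)) = (0 : H →L[ℂ] H) x
    rw [h1, map_zero, ContinuousLinearMap.zero_apply]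
  · intro hker0
    rw [hmain]
    apply ContinuousLinearMap.ext
    intro x
    have h1 : Pn (Sf0 x) ∈ N := (hPn _).1
    have h2 : G (Pn (Sf0 x)) = 0 := ((hNmem _).mp h1).1
    have h3 : Pn (Sf0 x) = 0 := hker0 _ h2
    show Sf0 (Pn (Sf0 x)) = (0 : H →L[ℂ] H) x
    rw [h3, map_zero, ContinuousLinearMap.zero_apply]
end

section
/- Let G, F_0 ∈ B^+(H). If ran F_0^{1/2} ⊆ ran G^{1/2}, then τ_G(F_0) = 0. -/
open Filter Topology

variable {H : Type*} [NormedAddCommGroup H] [InnerProductSpace ℂ H] [CompleteSpace H]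

open ContinuousLinearMap in
/-- A Douglas-type factorization bound: range inclusion for self-adjoint operators
gives a majorization of the norms. -/
lemma aux_douglas (A B : H →L[ℂ] H) (hA : IsSelfAdjoint A) (hB : IsSelfAdjoint B)
    (hran : Set.range ⇑A ⊆ Set.range ⇑B) :
    ∃ k : ℝ, 0 ≤ k ∧ ∀ x, ‖A x‖ ≤ k * ‖B x‖ := by
  set N : Submodule ℂ H := LinearMap.ker (B : H →ₗ[ℂ] H) with hN
  have hNclosed : IsClosed (N : Set H) := isClosed_ker B
  haveI : CompleteSpace N := hNclosed.completeSpace_coe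
  set K : Submodule ℂ H := Nᗮ with hK
  have hKclosed : IsClosed (K : Set H) := N.isClosed_orthogonal
  have huniq : ∀ y₁ y₂ : H, y₁ ∈ K → y₂ ∈ K → B y₁ = B y₂ → y₁ = y₂ := by
    intro y₁ y₂ h₁ h₂ hB12
    have hker : y₁ - y₂ ∈ N := by
      simp [hN, LinearMap.mem_ker, map_sub, hB12]
    have hKm : y₁ - y₂ ∈ K := sub_mem h₁ h₂
    have : (inner ℂ (y₁ - y₂) (y₁ - y₂) : ℂ) = 0 :=
      (Submodule.mem_orthogonal N (y₁ - y₂)).1 hKm _ hker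
    rw [inner_self_eq_zero] at this
    exact sub_eq_zero.1 this
  have hex : ∀ x : H, ∃ y : H, y ∈ K ∧ B y = A x := by
    intro x
    obtain ⟨z, hz⟩ := hran (Set.mem_range_self x)
    refine ⟨(K.orthogonalProjectionOnto z : H), (K.orthogonalProjectionOnto z).2, ?_⟩
    have hz' : z - (K.orthogonalProjectionOnto z : H) ∈ Kᗮ :=
      Submodule.sub_starProjection_mem_orthogonal (K := K) z
    have hzN : z - (K.orthogonalProjectionOnto z : H) ∈ N :=
      (Submodule.orthogonal_orthogonal N).le hz'
    have hzz : B (z - (K.orthogonalProjectionOnto z : H)) = 0 := hzN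
    rw [map_sub, sub_eq_zero] at hzz
    rw [← hzz, hz]
  classical
  set c : H → H := fun x => (hex x).choose with hc
  have hcK : ∀ x, c x ∈ K := fun x => (hex x).choose_spec.1
  have hcB : ∀ x, B (c x) = A x := fun x => (hex x).choose_spec.2
  set C₀ : H →ₗ[ℂ] H :=
    { toFun := c
      map_add' := fun x y =>
        huniq _ _ (hcK _) (add_mem (hcK x) (hcK y))
          (by rw [hcB, map_add, map_add, hcB, hcB])
      map_smul' := fun a x =>
        huniq _ _ (hcK _) (Submodule.smul_mem _ _ (hcK x))
          (by rw [hcB, map_smul, map_smul, hcB]; rfl) } with hC₀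
  have hcont : Continuous C₀ := by
    apply C₀.continuous_of_seq_closed_graph
    intro u x y hu hcu
    have hyK : y ∈ K := hKclosed.mem_of_tendsto hcu
      (Eventually.of_forall fun n => hcK (u n))
    refine (huniq y (c x) hyK (hcK x) ?_)
    have h1 : Tendsto (fun n => B (C₀ (u n))) atTop (𝓝 (B y)) :=
      (B.continuous.tendsto y).comp hcu
    have h2 : Tendsto (fun n => B (C₀ (u n))) atTop (𝓝 (A x)) := by
      have : (fun n => B (C₀ (u n))) = fun n => A (u n) := by
        funext n; exact hcB (u n)
      rw [this]
      exact (A.continuous.tendsto x).comp hu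
    rw [hcB]
    exact tendsto_nhds_unique h1 h2
  set C : H →L[ℂ] H := ⟨C₀, hcont⟩ with hC
  have hBC : B ∘L C = A := by
    ext x
    exact hcB x
  refine ⟨‖adjoint C‖, norm_nonneg _, fun x => ?_⟩
  have hA' : A = (adjoint C) ∘L B := by
    conv_lhs => rw [← isSelfAdjoint_iff'.1 hA]
    rw [← hBC, adjoint_comp, isSelfAdjoint_iff'.1 hB]
  rw [hA', comp_apply]
  exact (adjoint C).le_opNorm (B x)

/-- For a positive operator, the quadratic form is nonnegative (real part form). -/
lemma aux_re_nonneg {T : H →L[ℂ] H} (hT : T.IsPositive) (x : H) :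
    0 ≤ (inner ℂ (T x) x : ℂ).re := by
  simpa [ContinuousLinearMap.reApplyInnerSelf] using hT.2 x

/-- For a self-adjoint operator the quadratic form is real. -/
lemma aux_inner_real {T : H →L[ℂ] H} (hT : IsSelfAdjoint T) (x : H) :
    (inner ℂ (T x) x : ℂ) = ((inner ℂ (T x) x : ℂ).re : ℂ) := by
  have h1 : (starRingEnd ℂ) (inner ℂ (T x) x : ℂ) = (inner ℂ (T x) x : ℂ) := by
    rw [inner_conj_symm, ← ContinuousLinearMap.adjoint_inner_left,
      ContinuousLinearMap.isSelfAdjoint_iff'.1 hT]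
  exact (Complex.conj_eq_iff_re.1 h1).symm

/-- Near-parallelogram estimate for a positive quadratic form. -/
lemma aux_quad_add_le {T : H →L[ℂ] H} (hT : T.IsPositive) (f g : H) :
    (inner ℂ (T (f + g)) (f + g) : ℂ).re ≤
      2 * ((inner ℂ (T f) f : ℂ).re + (inner ℂ (T g) g : ℂ).re) := by
  have h0 : 0 ≤ (inner ℂ (T (f - g)) (f - g) : ℂ).re := aux_re_nonneg hT _
  have hexp : (inner ℂ (T (f + g)) (f + g) : ℂ) + (inner ℂ (T (f - g)) (f - g) : ℂ)
      = 2 * (inner ℂ (T f) f : ℂ) + 2 * (inner ℂ (T g) g : ℂ) := by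
    simp only [map_add, map_sub, inner_add_left, inner_add_right, inner_sub_left,
      inner_sub_right]
    ring
  have hre := congrArg Complex.re hexp
  simp only [Complex.add_re, Complex.mul_re, Complex.re_ofNat, Complex.im_ofNat] at hre
  linarith

/-- The quadratic form of `X` is majorized by that of its square. -/
lemma aux_sqrt_form {S X : H →L[ℂ] H} (hS : IsSqrtOf S X) (g : H) :
    (inner ℂ (X g) g : ℂ).re = ‖S g‖ ^ 2 := by
  have h1 : X g = S (S g) := by rw [← hS.2]; rfl
  have h2 : (inner ℂ (S g) (S g) : ℂ) = inner ℂ (S (S g)) g := by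
    rw [← ContinuousLinearMap.adjoint_inner_left,
      ContinuousLinearMap.isSelfAdjoint_iff'.1 hS.1.isSelfAdjoint]
  rw [h1, ← h2, inner_self_eq_norm_sq_to_K]
  simp [← Complex.ofReal_pow]

/-- If `ran F₀^{1/2} ⊆ ran G^{1/2}`, then `τ_G(F₀) = 0`. -/
theorem stmt9 (G F₀ Sf0 Sg L : H →L[ℂ] H)
    (hG : G.IsPositive) (hF₀ : F₀.IsPositive)
    (hSf0 : IsSqrtOf Sf0 F₀) (hSg : IsSqrtOf Sg G)
    (hran : Set.range ⇑Sf0 ⊆ Set.range ⇑Sg)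
    (hL : IsTau G F₀ L) :
    L = 0 := by
  obtain ⟨k, hk0, hkA⟩ := aux_douglas Sf0 Sg hSf0.1.isSelfAdjoint hSg.1.isSelfAdjoint hran
  obtain ⟨F, hF0, horb, hlim⟩ := hL
  choose P hP hstep using horb
  -- notation for the quadratic forms
  set q : ℕ → H → ℝ := fun n h => (inner ℂ (F n h) h : ℂ).re with hq
  set p : ℕ → H → ℝ := fun n h => (inner ℂ (P n h) h : ℂ).re with hp
  have hq0G : ∀ g : H, q 0 g ≤ k ^ 2 * (inner ℂ (G g) g : ℂ).re := by
    intro g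
    have h1 : q 0 g = ‖Sf0 g‖ ^ 2 := by
      rw [hq]
      simp only [hF0]
      exact aux_sqrt_form hSf0 g
    have h2 : (inner ℂ (G g) g : ℂ).re = ‖Sg g‖ ^ 2 := aux_sqrt_form hSg g
    rw [h1, h2]
    calc ‖Sf0 g‖ ^ 2 ≤ (k * ‖Sg g‖) ^ 2 :=
          pow_le_pow_left₀ (norm_nonneg _) (hkA g) 2
      _ = k ^ 2 * ‖Sg g‖ ^ 2 := by ring
  -- the membership witness (f = h, g = 0)
  have hmem : ∀ n h, q n h ∈ {r : ℝ | ∃ f g : H, f + g = h ∧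
      r = (inner ℂ (F n f) f : ℂ).re + (inner ℂ (G g) g : ℂ).re} := by
    intro n h
    exact ⟨h, 0, by simp, by simp [hq]⟩
  have hple : ∀ n h, p n h ≤ q n h := fun n h => ((hP n).2 h).1 (hmem n h)
  have hqstep : ∀ n h, q (n + 1) h = q n h - p n h := by
    intro n h
    show (inner ℂ (F (n + 1) h) h : ℂ).re
      = (inner ℂ (F n h) h : ℂ).re - (inner ℂ (P n h) h : ℂ).re
    rw [hstep n]
    simp [ContinuousLinearMap.sub_apply, inner_sub_left]
  have hpos : ∀ n, (F n).IsPositive := by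
    intro n
    induction n with
    | zero => rwa [hF0]
    | succ n ih =>
      constructor
      · rw [hstep n]; exact ih.1.sub (hP n).1.1
      · intro x
        have := hqstep n x
        have h2 := hple n x
        simp only [ContinuousLinearMap.reApplyInnerSelf, RCLike.re_to_complex]
        rw [show ((inner ℂ (F (n+1) x) x : ℂ)).re = q (n+1) x from rfl, hqstep n x]
        linarith
  have hppos : ∀ n h, 0 ≤ p n h := fun n h => aux_re_nonneg (hP n).1 h
  have hqpos : ∀ n h, 0 ≤ q n h := fun n h => aux_re_nonneg (hpos n) h
  have hdec : ∀ n h, q (n + 1) h ≤ q n h := by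
    intro n h; rw [hqstep]; linarith [hppos n h]
  have hle0 : ∀ n h, q n h ≤ q 0 h := by
    intro n h
    induction n with
    | zero => exact le_refl _
    | succ n ih => exact le_trans (hdec n h) ih
  -- the geometric contraction
  set M : ℝ := 2 * max 1 (k ^ 2) with hM
  have hM2 : (2 : ℝ) ≤ M := by
    rw [hM]; nlinarith [le_max_left 1 (k ^ 2)]
  have hMpos : (0 : ℝ) < M := by linarith
  have hlow : ∀ n h, q n h / M ≤ p n h := by
    intro n h
    apply ((hP n).2 h).2
    rintro r ⟨f, g, hfg, rfl⟩
    rw [div_le_iff₀ hMpos]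
    have h1 : q n h ≤ 2 * (q n f + q n g) := by
      rw [hq, ← hfg]
      exact aux_quad_add_le (hpos n) f g
    have h2 : q n g ≤ k ^ 2 * (inner ℂ (G g) g : ℂ).re := le_trans (hle0 n g) (hq0G g)
    have h3 : q n f ≤ max 1 (k ^ 2) * q n f := by
      nlinarith [le_max_left 1 (k ^ 2), hqpos n f]
    have h4 : k ^ 2 * (inner ℂ (G g) g : ℂ).re ≤ max 1 (k ^ 2) * (inner ℂ (G g) g : ℂ).re :=
      mul_le_mul_of_nonneg_right (le_max_right 1 (k ^ 2)) (aux_re_nonneg hG g)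
    have h5 : (inner ℂ (F n f) f : ℂ).re = q n f := rfl
    rw [h5, hM]
    nlinarith
  have hcontract : ∀ n h, q (n + 1) h ≤ (1 - 1 / M) * q n h := by
    intro n h
    rw [hqstep]
    have := hlow n h
    have heq : (1 - 1 / M) * q n h = q n h - q n h / M := by ring
    rw [heq]
    linarith
  have hr0 : 0 ≤ 1 - 1 / M := by
    have : 1 / M ≤ 1 / 2 := by
      apply one_div_le_one_div_of_le <;> linarith
    linarith
  have hr1 : 1 - 1 / M < 1 := by
    have : 0 < 1 / M := by positivity
    linarith
  have hbound : ∀ n h, q n h ≤ (1 - 1 / M) ^ n * q 0 h := by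
    intro n h
    induction n with
    | zero => simp
    | succ n ih =>
      calc q (n + 1) h ≤ (1 - 1 / M) * q n h := hcontract n h
        _ ≤ (1 - 1 / M) * ((1 - 1 / M) ^ n * q 0 h) :=
            mul_le_mul_of_nonneg_left ih hr0
        _ = (1 - 1 / M) ^ (n + 1) * q 0 h := by ring
  have htend : ∀ h, Tendsto (fun n => q n h) atTop (𝓝 0) := by
    intro h
    have hgeo : Tendsto (fun n : ℕ => (1 - 1 / M) ^ n * q 0 h) atTop (𝓝 0) := by
      have := (tendsto_pow_atTop_nhds_zero_of_lt_one hr0 hr1).mul_const (q 0 h)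
      simpa using this
    exact squeeze_zero (fun n => hqpos n h) (fun n => hbound n h) hgeo
  have hinner0 : ∀ h : H, (inner ℂ (L h) h : ℂ) = 0 := by
    intro h
    have h1 : Tendsto (fun n => (inner ℂ (F n h) h : ℂ)) atTop (𝓝 (inner ℂ (L h) h)) :=
      Tendsto.inner (hlim h) tendsto_const_nhds
    have h2 : Tendsto (fun n => (inner ℂ (F n h) h : ℂ)) atTop (𝓝 0) := by
      have heq : (fun n => (inner ℂ (F n h) h : ℂ)) = fun n => ((q n h : ℝ) : ℂ) := by
        funext n
        exact aux_inner_real (hpos n).isSelfAdjoint h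
      rw [heq]
      have := (Complex.continuous_ofReal.tendsto 0).comp (htend h)
      simpa [Function.comp_def] using this
    exact tendsto_nhds_unique h1 h2
  have hlin : (L : H →ₗ[ℂ] H) = 0 := (inner_map_self_eq_zero _).1 fun x => hinner0 x
  exact ContinuousLinearMap.coe_injective (hlin.trans (ContinuousLinearMap.coe_zero).symm)
end

section
/- Let G, F_0 ∈ B^+(H) and λ > 0. Let M_λ be the orthogonal complement in H of closure{ g ∈ H : (λG+F_0)^{1/2} g ∈ ran G^{1/2} } and N the orthogonal complement in H of closure{ g ∈ H : F_0^{1/2} g ∈ ran G^{1/2} }. Then (λG+F_0)^{1/2} P_{M_λ} (λG+F_0)^{1/2} = F_0^{1/2} P_N F_0^{1/2}, where P_{M_λ} and P_N are the orthogonal projections onto M_λ and N. -/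
open Filter Topology

variable {H : Type*} [NormedAddCommGroup H] [InnerProductSpace ℂ H] [CompleteSpace H]

section StmtElevenAux

set_option linter.unusedSectionVars false

open ContinuousLinearMap

local notation "⟪" x ", " y "⟫" => @inner ℂ _ _ x y

lemma proj_eq_of_decomp {M : Submodule ℂ H} {P : H →L[ℂ] H} (hP : IsOrthProjOnto M P)
    {x a : H} (ha : a ∈ M) (hb : x - a ∈ Mᗮ) : P x = a := by
  obtain ⟨h1, h2⟩ := hP x
  have hm : a - P x ∈ M := M.sub_mem ha h1
  have hm' : a - P x ∈ Mᗮ := by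
    have := Mᗮ.sub_mem h2 hb
    simpa using this
  have h0 : a - P x = 0 :=
    Submodule.disjoint_def.mp (Submodule.orthogonal_disjoint M) _ hm hm'
  have := sub_eq_zero.mp h0
  exact this.symm

noncomputable def rpick {A : H →L[ℂ] H} (x : LinearMap.range (A : H →ₗ[ℂ] H)) : H :=
  (LinearMap.mem_range.mp x.2).choose

lemma rpick_spec {A : H →L[ℂ] H} (x : LinearMap.range (A : H →ₗ[ℂ] H)) : A (rpick x) = ↑x :=
  (LinearMap.mem_range.mp x.2).choose_spec

noncomputable def factorThrough (A B : H →L[ℂ] H) (hk : ∀ z, A z = 0 → B z = 0) :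
    LinearMap.range (A : H →ₗ[ℂ] H) →ₗ[ℂ] H where
  toFun x := B (rpick x)
  map_add' x y := by
    have h1 : A (rpick (x + y)) = A (rpick x + rpick y) := by
      rw [map_add, rpick_spec, rpick_spec, rpick_spec]; rfl
    have h2 : B (rpick (x + y)) = B (rpick x + rpick y) := by
      have := hk (rpick (x + y) - (rpick x + rpick y)) (by rw [map_sub, h1, sub_self])
      rw [map_sub, sub_eq_zero] at this; exact this
    show B (rpick (x+y)) = B (rpick x) + B (rpick y)
    rw [h2, map_add]
  map_smul' c x := by
    have h1 : A (rpick (c • x)) = A (c • rpick x) := by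
      rw [map_smul, rpick_spec, rpick_spec]; rfl
    have h2 : B (rpick (c • x)) = B (c • rpick x) := by
      have := hk (rpick (c • x) - c • rpick x) (by rw [map_sub, h1, sub_self])
      rw [map_sub, sub_eq_zero] at this; exact this
    show B (rpick (c • x)) = (RingHom.id ℂ) c • B (rpick x)
    rw [h2, map_smul]; rfl

lemma factorThrough_apply (A B : H →L[ℂ] H) (hk : ∀ z, A z = 0 → B z = 0)
    (h : H) (hx : (A h : H) ∈ LinearMap.range (A : H →ₗ[ℂ] H)) :
    factorThrough A B hk ⟨A h, hx⟩ = B h := by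
  have h1 : A (rpick (⟨A h, hx⟩ : LinearMap.range (A : H →ₗ[ℂ] H))) = A h := rpick_spec _
  have h2 := hk (rpick (⟨A h, hx⟩ : LinearMap.range (A : H →ₗ[ℂ] H)) - h) (by rw [map_sub, h1, sub_self])
  rw [map_sub, sub_eq_zero] at h2
  exact h2

/-- The inclusion of `range A` into its closure, as a CLM. -/
noncomputable def rinc (A : H →L[ℂ] H) :
    LinearMap.range (A : H →ₗ[ℂ] H) →L[ℂ] (LinearMap.range (A : H →ₗ[ℂ] H)).topologicalClosure :=
  ContinuousLinearMap.codRestrict (LinearMap.range (A : H →ₗ[ℂ] H)).subtypeL _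
    (fun x => (LinearMap.range (A : H →ₗ[ℂ] H)).le_topologicalClosure x.2)

lemma rinc_isometry (A : H →L[ℂ] H) : Isometry (rinc A) :=
  AddMonoidHomClass.isometry_of_norm _ (fun _ => rfl)

lemma rinc_denseRange (A : H →L[ℂ] H) : DenseRange (rinc A) := by
  intro y
  rw [closure_subtype]
  have h1 : Subtype.val '' Set.range ⇑(rinc A) = (LinearMap.range (A : H →ₗ[ℂ] H) : Set H) := by
    ext w
    constructor
    · rintro ⟨z, ⟨t, rfl⟩, rfl⟩; exact t.2
    · intro hw; exact ⟨rinc A ⟨w, hw⟩, ⟨⟨w, hw⟩, rfl⟩, rfl⟩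
  rw [h1]
  have := y.2
  rwa [← Submodule.topologicalClosure_coe]

noncomputable def extFactor (A B : H →L[ℂ] H) (C : ℝ) (hk : ∀ z, A z = 0 → B z = 0)
    (hb : ∀ h, ‖B h‖ ≤ C * ‖A h‖) : (LinearMap.range (A : H →ₗ[ℂ] H)).topologicalClosure →L[ℂ] H :=
  ContinuousLinearMap.extend
    (LinearMap.mkContinuous (factorThrough A B hk) C
      (fun x => by
        obtain ⟨h, hh⟩ := LinearMap.mem_range.mp x.2
        have he : (⟨A h, by show (A : H →ₗ[ℂ] H) h ∈ _; rw [hh]; exact x.2⟩ : LinearMap.range (A : H →ₗ[ℂ] H)) = x := Subtype.ext hh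
        rw [← he, factorThrough_apply A B hk]
        show ‖B h‖ ≤ C * ‖(A h : H)‖
        exact hb h))
    (rinc A)

lemma extFactor_apply (A B : H →L[ℂ] H) (C : ℝ) (hk : ∀ z, A z = 0 → B z = 0)
    (hb : ∀ h, ‖B h‖ ≤ C * ‖A h‖) (h : H) :
    extFactor A B C hk hb
      ⟨A h, (LinearMap.range (A : H →ₗ[ℂ] H)).le_topologicalClosure (LinearMap.mem_range_self _ h)⟩ = B h := by
  have h2 : (⟨A h, _⟩ : (LinearMap.range (A : H →ₗ[ℂ] H)).topologicalClosure) =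
      rinc A ⟨A h, LinearMap.mem_range_self _ h⟩ := rfl
  rw [h2, extFactor, ContinuousLinearMap.extend_eq (h_dense := rinc_denseRange A) (h_e := (rinc_isometry A).isUniformInducing)]
  exact factorThrough_apply A B hk h _

set_option maxHeartbeats 4000000 in
/-- Corollary 3 of the paper. For `λ > 0`,
`(λG+F₀)^{1/2} P_{M_λ} (λG+F₀)^{1/2} = F₀^{1/2} P_N F₀^{1/2}`, where
`M_λ = H ⊖ clos{g : (λG+F₀)^{1/2} g ∈ ran G^{1/2}}` and
`N = H ⊖ clos{g : F₀^{1/2} g ∈ ran G^{1/2}}`. -/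
theorem stmt11 (G F₀ Sl Sf0 Sg Pl Pn : H →L[ℂ] H)
    (hG : G.IsPositive) (hF₀ : F₀.IsPositive)
    (lam : ℝ) (hlam : 0 < lam)
    (hSl : IsSqrtOf Sl ((lam : ℂ) • G + F₀))
    (hSf0 : IsSqrtOf Sf0 F₀) (hSg : IsSqrtOf Sg G)
    (Ωl : Submodule ℂ H) (hΩl : (Ωl : Set H) = closure {g : H | Sl g ∈ Set.range ⇑Sg})
    (ΩN : Submodule ℂ H) (hΩN : (ΩN : Set H) = closure {g : H | Sf0 g ∈ Set.range ⇑Sg})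
    (hPl : IsOrthProjOnto Ωlᗮ Pl) (hPn : IsOrthProjOnto ΩNᗮ Pn) :
    Sl * Pl * Sl = Sf0 * Pn * Sf0 := by
  have hsl : IsSelfAdjoint Sl := hSl.1.isSelfAdjoint
  have hsg : IsSelfAdjoint Sg := hSg.1.isSelfAdjoint
  have hsf : IsSelfAdjoint Sf0 := hSf0.1.isSelfAdjoint
  have sq : ∀ a b : H, ⟪Sl a, Sl b⟫ = (lam:ℂ) * ⟪Sg a, Sg b⟫ + ⟪Sf0 a, Sf0 b⟫ := by
    intro a b
    have h1 : Sl (Sl b) = (lam:ℂ) • G b + F₀ b := by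
      have := congrFun (congrArg DFunLike.coe hSl.2) b
      simpa [ContinuousLinearMap.mul_apply] using this
    calc ⟪Sl a, Sl b⟫ = ⟪a, Sl (Sl b)⟫ := hSl.1.isSelfAdjoint.isSymmetric a (Sl b)
      _ = (lam:ℂ) * ⟪a, G b⟫ + ⟪a, F₀ b⟫ := by
          rw [h1, inner_add_right, inner_smul_right]
      _ = (lam:ℂ) * ⟪Sg a, Sg b⟫ + ⟪Sf0 a, Sf0 b⟫ := by
          congr 1
          · congr 1
            have h2 : Sg (Sg b) = G b := by
              have := congrFun (congrArg DFunLike.coe hSg.2) b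
              simpa [ContinuousLinearMap.mul_apply] using this
            rw [← h2]
            exact (hSg.1.isSelfAdjoint.isSymmetric a (Sg b)).symm
          · have h2 : Sf0 (Sf0 b) = F₀ b := by
              have := congrFun (congrArg DFunLike.coe hSf0.2) b
              simpa [ContinuousLinearMap.mul_apply] using this
            rw [← h2]
            exact (hSf0.1.isSelfAdjoint.isSymmetric a (Sf0 b)).symm
  have nsq : ∀ a : H, ‖Sl a‖^2 = lam * ‖Sg a‖^2 + ‖Sf0 a‖^2 := by
    intro a
    have := congrArg Complex.re (sq a a)
    simpa [← @inner_self_eq_norm_sq ℂ, RCLike.re_to_complex, Complex.add_re, Complex.mul_re,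
      RCLike.im_to_complex, inner_self_im, Complex.ofReal_re, Complex.ofReal_im] using this
  have hkg : ∀ z, Sl z = 0 → Sg z = 0 := by
    intro z hz
    have h1 := nsq z
    rw [hz] at h1
    simp only [norm_zero] at h1
    have h2 : lam * ‖Sg z‖^2 = 0 := by nlinarith [mul_nonneg hlam.le (sq_nonneg ‖Sg z‖), sq_nonneg ‖Sf0 z‖]
    rcases mul_eq_zero.mp h2 with h3 | h3
    · exact absurd h3 hlam.ne'
    · have := pow_eq_zero_iff two_ne_zero |>.mp h3
      simpa using this
  have hkf : ∀ z, Sl z = 0 → Sf0 z = 0 := by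
    intro z hz
    have h1 := nsq z
    rw [hz] at h1
    simp only [norm_zero] at h1
    have h2 : ‖Sf0 z‖ = 0 := by nlinarith [hlam, norm_nonneg (Sg z), norm_nonneg (Sf0 z), sq_nonneg ‖Sg z‖, sq_nonneg ‖Sf0 z‖]
    simpa using h2
  have hbg : ∀ h, ‖Sg h‖ ≤ (Real.sqrt lam)⁻¹ * ‖Sl h‖ := by
    intro h
    have h1 : lam * ‖Sg h‖^2 ≤ ‖Sl h‖^2 := by nlinarith [nsq h, sq_nonneg ‖Sf0 h‖]
    have hs : (0:ℝ) < Real.sqrt lam := Real.sqrt_pos.mpr hlam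
    rw [inv_mul_eq_div, le_div_iff₀ hs]
    have h2 : (‖Sg h‖ * Real.sqrt lam)^2 ≤ ‖Sl h‖^2 := by
      rw [mul_pow, Real.sq_sqrt hlam.le]; nlinarith
    nlinarith [norm_nonneg (Sl h), mul_nonneg (norm_nonneg (Sg h)) (Real.sqrt_nonneg lam)]
  have hbf : ∀ h, ‖Sf0 h‖ ≤ 1 * ‖Sl h‖ := by
    intro h
    have h1 : ‖Sf0 h‖^2 ≤ ‖Sl h‖^2 := by nlinarith [nsq h, sq_nonneg ‖Sg h‖]
    rw [one_mul]
    nlinarith [norm_nonneg (Sl h), norm_nonneg (Sf0 h)]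

  set R : Submodule ℂ H := (LinearMap.range (Sl : H →ₗ[ℂ] H)).topologicalClosure with hR
  haveI hRc : CompleteSpace R := (LinearMap.range (Sl : H →ₗ[ℂ] H)).isClosed_topologicalClosure.completeSpace_coe
  set e : R →L[ℂ] H := extFactor Sl Sg _ hkg hbg with he0
  set d : R →L[ℂ] H := extFactor Sl Sf0 _ hkf hbf with hd0
  set SlR : H →L[ℂ] R := Sl.codRestrict R
    (fun h => (LinearMap.range (Sl : H →ₗ[ℂ] H)).le_topologicalClosure (LinearMap.mem_range_self _ h)) with hSlR
  have hcoe : ∀ h : H, ((SlR h : H)) = Sl h := fun h => rfl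
  have he : ∀ h : H, e (SlR h) = Sg h := fun h => extFactor_apply Sl Sg _ hkg hbg h
  have hd : ∀ h : H, d (SlR h) = Sf0 h := fun h => extFactor_apply Sl Sf0 _ hkf hbf h
  -- density of range SlR in R
  have hdense : Dense (Set.range ⇑SlR) := by
    intro y
    rw [closure_subtype]
    have h1 : Subtype.val '' Set.range ⇑SlR = (LinearMap.range (Sl : H →ₗ[ℂ] H) : Set H) := by
      ext w
      constructor
      · rintro ⟨z, ⟨t, rfl⟩, rfl⟩; exact LinearMap.mem_range_self _ t
      · rintro ⟨t, rfl⟩; exact ⟨SlR t, ⟨t, rfl⟩, rfl⟩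
    rw [h1]
    have := y.2
    rwa [← Submodule.topologicalClosure_coe]
  -- everything in ker Sl is orthogonal to R
  have horthp : ∀ z : H, Sl z = 0 → ∀ y : R, ⟪z, (y:H)⟫ = 0 := by
    intro z hz
    have hc : Continuous fun y : R => ⟪z, (y:H)⟫ :=
      continuous_const.inner (continuous_subtype_val)
    have heq : Set.EqOn (fun y : R => ⟪z, (y:H)⟫) (fun _ => 0) (Set.range ⇑SlR) := by
      rintro _ ⟨a, rfl⟩
      show ⟪z, Sl a⟫ = 0
      have h2 : ⟪z, Sl a⟫ = ⟪Sl z, a⟫ := (hsl.isSymmetric z a).symm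
      rw [h2, hz, inner_zero_left]
    have := Continuous.ext_on hdense hc continuous_const heq
    intro y; exact congrFun this y
  have hkerR : ∀ y : R, Sl ↑y = 0 → y = 0 := by
    intro y hy
    have : ⟪(y:H), (y:H)⟫ = 0 := horthp _ hy y
    have : (y:H) = 0 := inner_self_eq_zero.mp this
    exact Subtype.ext this
  -- adjoints
  set eadj : H →L[ℂ] R := ContinuousLinearMap.adjoint e with headj
  set dadj : H →L[ℂ] R := ContinuousLinearMap.adjoint d with hdadj
  have hBe : ∀ k : H, Sl ↑(eadj k) = Sg k := by
    intro k
    apply ext_inner_right ℂ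
    intro y
    calc ⟪Sl ↑(eadj k), y⟫ = ⟪(↑(eadj k) : H), Sl y⟫ := hsl.isSymmetric _ y
      _ = ⟪eadj k, SlR y⟫ := rfl
      _ = ⟪k, e (SlR y)⟫ := ContinuousLinearMap.adjoint_inner_left e (SlR y) k
      _ = ⟪k, Sg y⟫ := by rw [he]
      _ = ⟪Sg k, y⟫ := (hsg.isSymmetric k y).symm
  have hBd : ∀ k : H, Sl ↑(dadj k) = Sf0 k := by
    intro k
    apply ext_inner_right ℂ
    intro y
    calc ⟪Sl ↑(dadj k), y⟫ = ⟪(↑(dadj k) : H), Sl y⟫ := hsl.isSymmetric _ y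
      _ = ⟪dadj k, SlR y⟫ := rfl
      _ = ⟪k, d (SlR y)⟫ := ContinuousLinearMap.adjoint_inner_left d (SlR y) k
      _ = ⟪k, Sf0 y⟫ := by rw [hd]
      _ = ⟪Sf0 k, y⟫ := (hsf.isSymmetric k y).symm
  set Aop : R →L[ℂ] R := (dadj.comp d) + (lam:ℂ) • (eadj.comp e) with hAop
  have hstep1 : ∀ a b : H, ⟪Aop (SlR a), SlR b⟫ = ⟪SlR a, SlR b⟫ := by
    intro a b
    have l1 : ⟪dadj (d (SlR a)), SlR b⟫ = ⟪Sf0 a, Sf0 b⟫ := by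
      rw [hd a]
      calc ⟪dadj (Sf0 a), SlR b⟫ = ⟪Sf0 a, d (SlR b)⟫ :=
            ContinuousLinearMap.adjoint_inner_left d (SlR b) (Sf0 a)
        _ = ⟪Sf0 a, Sf0 b⟫ := by rw [hd b]
    have l2 : ⟪eadj (e (SlR a)), SlR b⟫ = ⟪Sg a, Sg b⟫ := by
      rw [he a]
      calc ⟪eadj (Sg a), SlR b⟫ = ⟪Sg a, e (SlR b)⟫ :=
            ContinuousLinearMap.adjoint_inner_left e (SlR b) (Sg a)
        _ = ⟪Sg a, Sg b⟫ := by rw [he b]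
    have l3 : ⟪SlR a, SlR b⟫ = ⟪Sl a, Sl b⟫ := rfl
    calc ⟪Aop (SlR a), SlR b⟫
        = ⟪dadj (d (SlR a)), SlR b⟫ + ⟪(lam:ℂ) • eadj (e (SlR a)), SlR b⟫ := by
          rw [hAop]
          simp only [ContinuousLinearMap.add_apply, ContinuousLinearMap.coe_smul',
            ContinuousLinearMap.coe_comp', Function.comp_apply, Pi.smul_apply,
            inner_add_left]
      _ = ⟪Sf0 a, Sf0 b⟫ + (lam:ℂ) * ⟪Sg a, Sg b⟫ := by
          rw [l1, inner_smul_left, l2, Complex.conj_ofReal]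
      _ = ⟪SlR a, SlR b⟫ := by rw [l3, sq a b]; ring
  have hstep2 : ∀ a : H, Aop (SlR a) = SlR a := by
    intro a
    have hc : Continuous fun y : R => ⟪Aop (SlR a) - SlR a, y⟫ :=
      continuous_const.inner continuous_id
    have heq : Set.EqOn (fun y : R => ⟪Aop (SlR a) - SlR a, y⟫) (fun _ => 0)
        (Set.range ⇑SlR) := by
      rintro _ ⟨b, rfl⟩
      show ⟪Aop (SlR a) - SlR a, SlR b⟫ = 0
      rw [inner_sub_left, hstep1, sub_self]
    have hfun := Continuous.ext_on hdense hc continuous_const heq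
    have h0 : ⟪Aop (SlR a) - SlR a, Aop (SlR a) - SlR a⟫ = 0 := congrFun hfun _
    have := inner_self_eq_zero.mp h0
    rwa [sub_eq_zero] at this
  have hC : ∀ x : R, dadj (d x) + (lam:ℂ) • eadj (e x) = x := by
    have heq : Set.EqOn ⇑Aop id (Set.range ⇑SlR) := by
      rintro _ ⟨a, rfl⟩
      exact hstep2 a
    have hfun := Continuous.ext_on hdense Aop.continuous continuous_id heq
    intro x
    have := congrFun hfun x
    simpa [hAop, ContinuousLinearMap.add_apply] using this
  -- kernel of e as orthogonal complement
  haveI hWc : CompleteSpace (LinearMap.ker (e : R →ₗ[ℂ] H)) := e.isClosed_ker.completeSpace_coe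
  have hkerE : (LinearMap.ker (e : R →ₗ[ℂ] H))ᗮ = (LinearMap.range (eadj : H →ₗ[ℂ] R)).topologicalClosure := by
    have h1 : LinearMap.ker (e : R →ₗ[ℂ] H) = (LinearMap.range (eadj : H →ₗ[ℂ] R))ᗮ := by
      ext y
      simp only [LinearMap.mem_ker, Submodule.mem_orthogonal]
      constructor
      · intro hy u hu
        obtain ⟨k, rfl⟩ := LinearMap.mem_range.mp hu
        show ⟪eadj k, y⟫ = 0
        rw [ContinuousLinearMap.adjoint_inner_left e y k]
        show (⟪k, e y⟫ : ℂ) = 0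
        rw [show e y = 0 from hy, inner_zero_right]
      · intro hy
        apply ext_inner_left ℂ
        intro v
        rw [inner_zero_right]
        have := hy (eadj v) (LinearMap.mem_range_self _ v)
        rw [ContinuousLinearMap.adjoint_inner_left e y v] at this
        exact this
    rw [h1, Submodule.orthogonal_orthogonal_eq_closure]
  -- per-vector analysis
  have key : ∀ h : H, ⟪(Sl * Pl * Sl) h, h⟫ = ⟪(Sf0 * Pn * Sf0) h, h⟫ := by
    intro h
    set x : R := SlR h with hx
    set uR : LinearMap.ker (e : R →ₗ[ℂ] H) := Submodule.orthogonalProjectionOnto (LinearMap.ker (e : R →ₗ[ℂ] H)) x with huR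
    set vR : R := x - ↑uR with hvR
    have heu : e ↑uR = 0 := LinearMap.mem_ker.mp uR.2
    have hv2 : vR ∈ (LinearMap.range (eadj : H →ₗ[ℂ] R)).topologicalClosure := by
      rw [← hkerE]
      exact Submodule.sub_starProjection_mem_orthogonal (K := LinearMap.ker (e : R →ₗ[ℂ] H)) x
    -- u is orthogonal to the generating set of Ωl
    have c2 : ∀ g ∈ {g : H | Sl g ∈ Set.range ⇑Sg}, ⟪g, ((uR:R):H)⟫ = 0 := by
      intro g hg
      obtain ⟨k, hk⟩ := hg
      have hz : Sl (g - ↑(eadj k)) = 0 := by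
        rw [map_sub, hBe k, hk, sub_self]
      have l1 : ⟪g - ↑(eadj k), ((uR:R):H)⟫ = 0 := horthp _ hz _
      have l2 : ⟪(↑(eadj k) : H), ((uR:R):H)⟫ = 0 := by
        have : ⟪eadj k, (uR:R)⟫ = ⟪k, e ↑uR⟫ :=
          ContinuousLinearMap.adjoint_inner_left e (uR:R) k
        rw [heu, inner_zero_right] at this
        exact this
      have := congrArg₂ (· + ·) l1 l2
      simpa [← inner_add_left] using this
    have c2' : ((uR:R):H) ∈ Ωlᗮ := by
      rw [Submodule.mem_orthogonal]
      intro w hw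
      have hw' : w ∈ closure {g : H | Sl g ∈ Set.range ⇑Sg} := by
        rw [← hΩl]; exact hw
      have hcl : IsClosed {w : H | ⟪w, ((uR:R):H)⟫ = 0} :=
        isClosed_eq (continuous_id.inner continuous_const) continuous_const
      exact hcl.closure_subset_iff.mpr c2 hw'
    have c3 : ((vR : R) : H) ∈ Ωl := by
      have h1 : ((vR : R) : H) ∈ Subtype.val '' (closure ((LinearMap.range (eadj : H →ₗ[ℂ] R) : Set R))) := by
        refine ⟨vR, ?_, rfl⟩
        rw [← Submodule.topologicalClosure_coe]
        exact hv2
      have h2 : Subtype.val '' (closure ((LinearMap.range (eadj : H →ₗ[ℂ] R) : Set R)))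
          ⊆ closure (Subtype.val '' ((LinearMap.range (eadj : H →ₗ[ℂ] R) : Set R))) :=
        image_closure_subset_closure_image continuous_subtype_val
      have h3 : Subtype.val '' ((LinearMap.range (eadj : H →ₗ[ℂ] R) : Set R))
          ⊆ {g : H | Sl g ∈ Set.range ⇑Sg} := by
        rintro _ ⟨z, hz, rfl⟩
        obtain ⟨k, rfl⟩ := LinearMap.mem_range.mp hz
        exact ⟨k, (hBe k).symm⟩
      have h4 := (closure_mono h3) (h2 h1)
      rw [← hΩl] at h4
      exact h4
    have hxuv : Sl h = ((uR:R):H) + ((vR:R):H) := by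
      have : x = ↑uR + vR := by rw [hvR]; abel
      have := congrArg (Subtype.val) this
      simp only [Submodule.coe_add] at this; exact this
    have cPl : Pl (Sl h) = ((uR:R):H) := by
      apply proj_eq_of_decomp hPl c2'
      have : Sl h - ((uR:R):H) = ((vR:R):H) := by rw [hxuv]; abel
      rw [this]
      exact Submodule.le_orthogonal_orthogonal _ c3
    -- the N side
    set u' : H := d ↑uR with hu'
    have c4 : ∀ g ∈ {g : H | Sf0 g ∈ Set.range ⇑Sg}, ⟪g, u'⟫ = 0 := by
      intro g hg
      obtain ⟨k, hk⟩ := hg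
      have hz : Sl ↑(dadj g - eadj k) = 0 := by
        have hcoe2 : ((dadj g - eadj k : R) : H) = ↑(dadj g) - ↑(eadj k) := rfl
        rw [hcoe2, map_sub, hBd g, hBe k, hk, sub_self]
      have h5 : dadj g = eadj k := by
        have := hkerR _ hz
        rwa [sub_eq_zero] at this
      calc ⟪g, u'⟫ = ⟪dadj g, (uR:R)⟫ :=
            (ContinuousLinearMap.adjoint_inner_left d (uR:R) g).symm
        _ = ⟪eadj k, (uR:R)⟫ := by rw [h5]
        _ = ⟪k, e ↑uR⟫ := ContinuousLinearMap.adjoint_inner_left e (uR:R) k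
        _ = 0 := by rw [heu, inner_zero_right]
    have c4' : u' ∈ ΩNᗮ := by
      rw [Submodule.mem_orthogonal]
      intro w hw
      have hw' : w ∈ closure {g : H | Sf0 g ∈ Set.range ⇑Sg} := by
        rw [← hΩN]; exact hw
      have hcl : IsClosed {w : H | ⟪w, u'⟫ = 0} :=
        isClosed_eq (continuous_id.inner continuous_const) continuous_const
      exact hcl.closure_subset_iff.mpr c4 hw'
    have c5 : d vR ∈ ΩN := by
      have h1 : d vR ∈ ⇑d '' (closure ((LinearMap.range (eadj : H →ₗ[ℂ] R) : Set R))) := by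
        refine ⟨vR, ?_, rfl⟩
        rw [← Submodule.topologicalClosure_coe]
        exact hv2
      have h2 : ⇑d '' (closure ((LinearMap.range (eadj : H →ₗ[ℂ] R) : Set R)))
          ⊆ closure (⇑d '' ((LinearMap.range (eadj : H →ₗ[ℂ] R) : Set R))) :=
        image_closure_subset_closure_image d.continuous
      have h3 : ⇑d '' ((LinearMap.range (eadj : H →ₗ[ℂ] R) : Set R))
          ⊆ {g : H | Sf0 g ∈ Set.range ⇑Sg} := by
        rintro _ ⟨z, hz, rfl⟩
        obtain ⟨k, rfl⟩ := LinearMap.mem_range.mp hz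
        have hCk := hC (eadj k)
        have h6 : dadj (d (eadj k)) = eadj (k - (lam:ℂ) • e (eadj k)) := by
          rw [map_sub, map_smul]
          exact eq_sub_of_add_eq hCk
        refine ⟨k - (lam:ℂ) • e (eadj k), ?_⟩
        rw [← hBe, ← h6, hBd]; rfl
      have h4 := (closure_mono h3) (h2 h1)
      rw [← hΩN] at h4
      exact h4
    have hSf0h : Sf0 h = u' + d vR := by
      have h7 : x = ↑uR + vR := by rw [hvR]; abel
      calc Sf0 h = d x := (hd h).symm
        _ = d (↑uR + vR) := by rw [← h7]
        _ = u' + d vR := by rw [map_add, hu']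
    have cPn : Pn (Sf0 h) = u' := by
      apply proj_eq_of_decomp hPn c4'
      have : Sf0 h - u' = d vR := by rw [hSf0h]; abel
      rw [this]
      exact Submodule.le_orthogonal_orthogonal _ c5
    -- final computation
    have hdd : dadj (d ↑uR) = (uR : R) := by
      have h8 := hC (uR:R)
      rw [heu] at h8
      simpa using h8
    have lhs : ⟪(Sl * Pl * Sl) h, h⟫ = ⟪(uR:R), x⟫ := by
      calc ⟪(Sl * Pl * Sl) h, h⟫ = ⟪Sl (Pl (Sl h)), h⟫ := by
            simp [ContinuousLinearMap.mul_apply]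
        _ = ⟪Pl (Sl h), Sl h⟫ := hsl.isSymmetric _ h
        _ = ⟪((uR:R):H), Sl h⟫ := by rw [cPl]
        _ = ⟪(uR:R), x⟫ := rfl
    have rhs : ⟪(Sf0 * Pn * Sf0) h, h⟫ = ⟪(uR:R), x⟫ := by
      calc ⟪(Sf0 * Pn * Sf0) h, h⟫ = ⟪Sf0 (Pn (Sf0 h)), h⟫ := by
            simp [ContinuousLinearMap.mul_apply]
        _ = ⟪Pn (Sf0 h), Sf0 h⟫ := hsf.isSymmetric _ h
        _ = ⟪u', Sf0 h⟫ := by rw [cPn]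
        _ = ⟪d ↑uR, d x⟫ := by rw [hu', hd h]
        _ = ⟪dadj (d ↑uR), x⟫ := (ContinuousLinearMap.adjoint_inner_left d x (d ↑uR)).symm
        _ = ⟪(uR:R), x⟫ := by rw [hdd]
    rw [lhs, rhs]
  -- conclude equality of the operators from equality of quadratic forms
  have hL := (ext_inner_map ((Sl * Pl * Sl : H →L[ℂ] H) : H →ₗ[ℂ] H)
    ((Sf0 * Pn * Sf0 : H →L[ℂ] H) : H →ₗ[ℂ] H)).mp (fun z => key z)
  ext z
  exact congrFun (congrArg DFunLike.coe hL) z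

end StmtElevenAux
end
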